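/- arXiv:1912.00054 — 6 statements merged into one kernel-verified Lean document; each statement's English description precedes it below -/
import Mathlib

section
/- For all 0 < s < t < T, the multifractional Brownian motion kernel K is differentiable with respect to its first variable at (t,s), and ∂K/∂t(t,s) = h′(t) s^{1/2−h(t)} ∫_s^t (y−s)^{h(t)−3/2} y^{h(t)−1/2} ln((y/s − 1)y) dy + s^{1/2−h(t)} (t−s)^{h(t)−3/2} t^{h(t)−1/2}. -/
open Real MeasureTheory intervalIntegral

noncomputable def mbmF (s x y : ℝ) : ℝ := (y - s) ^ (x - 3 / 2) * y ^ (x - 1 / 2)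

noncomputable def mbmF' (s x y : ℝ) : ℝ := mbmF s x y * (Real.log (y - s) + Real.log y)

lemma aux_rpow_le_add {r q q₁ q₂ : ℝ} (hr : 0 < r) (h1 : q₁ ≤ q) (h2 : q ≤ q₂) :
    r ^ q ≤ r ^ q₁ + r ^ q₂ := by
  rcases le_total r 1 with hr1 | hr1
  · have := Real.rpow_le_rpow_of_exponent_ge hr hr1 h1
    nlinarith [Real.rpow_nonneg hr.le q₂]
  · have := Real.rpow_le_rpow_of_exponent_le hr1 h2
    nlinarith [Real.rpow_nonneg hr.le q₁]

lemma aux_abs_log_le {r c : ℝ} (hr : 0 < r) (hc : 0 < c) :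
    |Real.log r| ≤ (r ^ c + r ^ (-c)) / c := by
  have h1 : Real.log r ≤ r ^ c / c := Real.log_le_rpow_div hr.le hc
  have h2 : -Real.log r ≤ r ^ (-c) / c := by
    have := Real.log_le_rpow_div (x := r⁻¹) (by positivity) hc
    rwa [Real.log_inv, Real.inv_rpow hr.le, ← Real.rpow_neg hr.le] at this
  have hp : (0:ℝ) ≤ r ^ c / c := by positivity
  have hp' : (0:ℝ) ≤ r ^ (-c) / c := by positivity
  have hd : (r ^ c + r ^ (-c)) / c = r ^ c / c + r ^ (-c) / c := by ring
  rw [abs_le, hd]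
  constructor <;> nlinarith

lemma aux_int_shift' {p : ℝ} (hp : -1 < p) (s u v : ℝ) :
    IntervalIntegrable (fun y => (y - s) ^ p) volume u v := by
  have := (intervalIntegrable_rpow' (a := u - s) (b := v - s) hp).comp_sub_right s
  simpa using this

lemma mbmF_meas (s x : ℝ) : Measurable (mbmF s x) :=
  ((measurable_id.sub measurable_const).pow measurable_const).mul
      (measurable_id.pow measurable_const)

lemma mbmF_nonneg {s y : ℝ} (x : ℝ) (h0 : 0 ≤ y) (h1 : s ≤ y) : 0 ≤ mbmF s x y :=
  mul_nonneg (Real.rpow_nonneg (by linarith) _) (Real.rpow_nonneg h0 _)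

lemma mbmF_int {s u v x : ℝ} (hs : 0 < s) (hsu : s ≤ u) (hsv : s ≤ v)
    (h1 : -1 < x - 3 / 2) (h3 : 0 ≤ x - 1 / 2) (h4 : x - 1 / 2 ≤ 2) :
    IntervalIntegrable (mbmF s x) volume u v := by
  set m := max 1 (max u v) with hm
  have hm1 : (1 : ℝ) ≤ m := le_max_left _ _
  apply IntervalIntegrable.mono_fun' ((aux_int_shift' h1 s u v).mul_const (m ^ (2 : ℝ)))
  · exact (mbmF_meas s x).aestronglyMeasurable
  · filter_upwards [ae_restrict_mem measurableSet_uIoc] with y hy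
    have hy' : y ∈ Set.Ioc (min u v) (max u v) := hy
    have hsy : s < y := lt_of_le_of_lt (le_min hsu hsv) hy'.1
    have h0y : 0 < y := hs.trans hsy
    have hym : y ≤ m := hy'.2.trans (le_max_right _ _)
    show ‖mbmF s x y‖ ≤ (y - s) ^ (x - 3 / 2) * m ^ (2 : ℝ)
    rw [Real.norm_eq_abs, abs_of_nonneg (mbmF_nonneg x h0y.le hsy.le)]
    unfold mbmF
    apply mul_le_mul_of_nonneg_left _ (Real.rpow_nonneg (by linarith) _)
    calc y ^ (x - 1 / 2) ≤ m ^ (x - 1 / 2) := Real.rpow_le_rpow h0y.le hym h3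
      _ ≤ m ^ (2 : ℝ) := Real.rpow_le_rpow_of_exponent_le hm1 h4

lemma mbm_param_deriv {s t x₀ ε : ℝ} (hs : 0 < s) (hst : s < t) (hε : 0 < ε) (hε1 : ε ≤ 1)
    (hball : ∀ x ∈ Metric.ball x₀ ε, 1 / 2 + ε ≤ x ∧ x ≤ 2) :
    IntervalIntegrable (mbmF' s x₀) volume s t ∧
      HasDerivAt (fun x => ∫ y in s..t, mbmF s x y) (∫ y in s..t, mbmF' s x₀ y) x₀ := by
  obtain ⟨hx₀1, hx₀2⟩ := hball x₀ (Metric.mem_ball_self hε)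
  set CT := (max 1 t) ^ (2 : ℝ) with hCT
  set CL := |Real.log s| + |Real.log t| with hCL
  have hCTpos : 0 < CT := Real.rpow_pos_of_pos (lt_of_lt_of_le one_pos (le_max_left _ _)) _
  have hCL0 : 0 ≤ CL := by positivity
  -- the dominating function
  set GS : ℝ → ℝ := fun y => CT * (CL * ((y - s) ^ (ε - 1) + (y - s) ^ ((1:ℝ) / 2)) +
      ((y - s) ^ (ε - 1 + ε / 2) + (y - s) ^ (ε - 1 - ε / 2) + (y - s) ^ ((1:ℝ) / 2 + ε / 2)
        + (y - s) ^ ((1:ℝ) / 2 - ε / 2)) / (ε / 2))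
    with hGS
  have hGSint : IntervalIntegrable GS volume s t := by
    apply IntervalIntegrable.const_mul
    apply IntervalIntegrable.add
    · exact ((aux_int_shift' (by linarith) s s t).add
        (aux_int_shift' (by norm_num) s s t)).const_mul CL
    · refine IntervalIntegrable.div_const ?_ (ε / 2)
      exact (((aux_int_shift' (by linarith) s s t).add
        (aux_int_shift' (by linarith) s s t)).add
        (aux_int_shift' (by linarith) s s t)).add
        (aux_int_shift' (by linarith) s s t)
  apply intervalIntegral.hasDerivAt_integral_of_dominated_loc_of_deriv_le (Metric.ball_mem_nhds x₀ hε)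
      (Filter.Eventually.of_forall fun x => (mbmF_meas s x).aestronglyMeasurable)
      (mbmF_int hs le_rfl hst.le (by linarith) (by linarith) (by linarith))
      (((mbmF_meas s x₀).mul ((Real.measurable_log.comp
        (measurable_id.sub measurable_const)).add Real.measurable_log)).aestronglyMeasurable)
      ?_ hGSint ?_
  · -- the bound
    apply Filter.Eventually.of_forall
    intro y hy x hx
    rw [Set.uIoc_of_le hst.le] at hy
    have hr : 0 < y - s := sub_pos.2 hy.1
    have h0y : 0 < y := hs.trans hy.1
    obtain ⟨hx1, hx2⟩ := hball x hx
    have hlogy : |Real.log y| ≤ CL := by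
      rw [abs_le]
      constructor
      · have := Real.log_le_log hs hy.1.le
        have h2 := neg_abs_le (Real.log s)
        simp only [hCL]
        nlinarith [abs_nonneg (Real.log t)]
      · have := Real.log_le_log h0y hy.2
        have h2 := le_abs_self (Real.log t)
        simp only [hCL]
        nlinarith [abs_nonneg (Real.log s)]
    have hFb : mbmF s x y ≤ ((y - s) ^ (ε - 1) + (y - s) ^ ((1:ℝ) / 2)) * CT := by
      unfold mbmF
      have hb1 : (y - s) ^ (x - 3 / 2) ≤ (y - s) ^ (ε - 1) + (y - s) ^ ((1:ℝ) / 2) :=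
        aux_rpow_le_add hr (by linarith) (by linarith)
      have hb2 : y ^ (x - 1 / 2) ≤ CT := by
        have hm1 : (1 : ℝ) ≤ max 1 t := le_max_left _ _
        calc y ^ (x - 1 / 2) ≤ (max 1 t) ^ (x - 1 / 2) :=
              Real.rpow_le_rpow h0y.le (hy.2.trans (le_max_right _ _)) (by linarith)
          _ ≤ CT := Real.rpow_le_rpow_of_exponent_le hm1 (by linarith)
      exact mul_le_mul hb1 hb2 (Real.rpow_nonneg h0y.le _) (by positivity)
    calc ‖mbmF' s x y‖ = mbmF s x y * |Real.log (y - s) + Real.log y| := by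
          rw [mbmF', Real.norm_eq_abs, abs_mul, abs_of_nonneg (mbmF_nonneg x h0y.le hy.1.le)]
      _ ≤ (((y - s) ^ (ε - 1) + (y - s) ^ ((1:ℝ) / 2)) * CT) *
            (((y - s) ^ (ε / 2) + (y - s) ^ (-(ε / 2))) / (ε / 2) + CL) := by
          apply mul_le_mul hFb _ (abs_nonneg _) (by positivity)
          calc |Real.log (y - s) + Real.log y| ≤ |Real.log (y - s)| + |Real.log y| :=
                abs_add_le _ _
            _ ≤ ((y - s) ^ (ε / 2) + (y - s) ^ (-(ε / 2))) / (ε / 2) + CL :=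
                add_le_add (aux_abs_log_le hr (by linarith)) hlogy
      _ = GS y := by
          simp only [hGS, show ε - 1 + ε / 2 = (ε - 1) + ε / 2 by ring,
            show ε - 1 - ε / 2 = (ε - 1) + -(ε / 2) by ring,
            show (1:ℝ) / 2 + ε / 2 = (1:ℝ) / 2 + ε / 2 by ring,
            show (1:ℝ) / 2 - ε / 2 = (1:ℝ) / 2 + -(ε / 2) by ring,
            Real.rpow_add hr]
          field_simp
          ring
  · -- differentiability in the parameter
    apply Filter.Eventually.of_forall
    intro y hy x _
    rw [Set.uIoc_of_le hst.le] at hy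
    have hr : 0 < y - s := sub_pos.2 hy.1
    have h0y : 0 < y := hs.trans hy.1
    have d1 : HasDerivAt (fun x => (y - s) ^ (x - 3 / 2))
        ((y - s) ^ (x - 3 / 2) * Real.log (y - s)) x := by
      have := ((Real.hasStrictDerivAt_const_rpow hr (x - 3 / 2)).hasDerivAt).comp x
        ((hasDerivAt_id x).sub_const (3 / 2))
      simpa [Function.comp_def] using this
    have d2 : HasDerivAt (fun x => y ^ (x - 1 / 2))
        (y ^ (x - 1 / 2) * Real.log y) x := by
      have := ((Real.hasStrictDerivAt_const_rpow h0y (x - 1 / 2)).hasDerivAt).comp x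
        ((hasDerivAt_id x).sub_const (1 / 2))
      simpa [Function.comp_def] using this
    have := d1.mul d2
    refine this.congr_deriv ?_
    unfold mbmF' mbmF
    ring

lemma mbmF_contAt {s x y : ℝ} (hs : 0 < s) (hy : s < y) :
    ContinuousAt (fun p : ℝ × ℝ => mbmF s p.1 p.2) (x, y) := by
  apply ContinuousAt.mul
  · exact ((continuousAt_snd.sub continuousAt_const).rpow
      (continuousAt_fst.sub continuousAt_const) (Or.inl (by simp; linarith)))
  · exact (continuousAt_snd.rpow (continuousAt_fst.sub continuousAt_const)
      (Or.inl (by simp; nlinarith)))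

lemma mbm_endpoint_fderiv {s t : ℝ} (x₀ : ℝ) (hs : 0 < s) (hst : s < t) :
    HasFDerivAt (fun p : ℝ × ℝ => ∫ y in t..p.2, mbmF s p.1 y)
      ((ContinuousLinearMap.snd ℝ ℝ ℝ).smulRight (mbmF s x₀ t)) (x₀, t) := by
  rw [hasFDerivAt_iff_isLittleO, Asymptotics.isLittleO_iff]
  intro C hC
  obtain ⟨δ, hδ, hcont⟩ := Metric.continuousAt_iff.1 (mbmF_contAt hs hst (x := x₀)) C hC
  set δ' := min δ ((t - s) / 2) with hδ'
  have hδ'pos : 0 < δ' := lt_min hδ (by linarith)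
  filter_upwards [Metric.ball_mem_nhds (x₀, t) hδ'pos] with p hp
  obtain ⟨x, τ⟩ := p
  rw [Metric.mem_ball, Prod.dist_eq] at hp
  have hdx : dist x x₀ < δ' := lt_of_le_of_lt (le_max_left _ _) hp
  have hdτ : dist τ t < δ' := lt_of_le_of_lt (le_max_right _ _) hp
  rw [Real.dist_eq] at hdx hdτ
  -- every y in the integration range is close to t and greater than s
  have hyrange : ∀ y ∈ Set.uIcc t τ, |y - t| ≤ |τ - t| ∧ s < y := by
    intro y hy
    rcases le_total t τ with hc | hc
    · rw [Set.uIcc_of_le hc] at hy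
      constructor
      · rw [abs_of_nonneg (by linarith [hy.1]), abs_of_nonneg (by linarith)]
        linarith [hy.2]
      · linarith [hy.1]
    · rw [Set.uIcc_of_ge hc] at hy
      constructor
      · rw [abs_of_nonpos (by linarith [hy.2]), abs_of_nonpos (by linarith)]
        linarith [hy.1]
      · have : |τ - t| < δ' := hdτ
        have h1 : t - τ < (t - s) / 2 := by
          have := abs_lt.1 hdτ
          have : δ' ≤ (t - s) / 2 := min_le_right _ _
          linarith [abs_lt.1 hdτ]
        linarith [hy.1]
  -- continuity on the integration interval
  have hFcont : ContinuousOn (fun y => mbmF s x y) (Set.uIcc t τ) := by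
    intro y hy
    have hsy := (hyrange y hy).2
    apply ContinuousAt.continuousWithinAt
    have : ContinuousAt (fun y : ℝ => ((x : ℝ), y)) y := by fun_prop
    exact (mbmF_contAt hs hsy (x := x)).comp this
  have hint : IntervalIntegrable (fun y => mbmF s x y) volume t τ :=
    hFcont.intervalIntegrable
  -- pointwise estimate
  have hptwise : ∀ y ∈ Set.uIcc t τ, ‖mbmF s x y - mbmF s x₀ t‖ ≤ C := by
    intro y hy
    obtain ⟨h1, h2⟩ := hyrange y hy
    have hd : dist ((x, y)) ((x₀, t)) < δ := by
      rw [Prod.dist_eq, Real.dist_eq, Real.dist_eq]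
      have h3 : |y - t| < δ' := lt_of_le_of_lt h1 hdτ
      have h4 : δ' ≤ δ := min_le_left _ _
      exact max_lt (by linarith) (by linarith)
    exact (le_of_lt (hcont hd))
  -- main computation
  have key : (∫ y in t..τ, mbmF s x y) - (∫ y in t..t, mbmF s x₀ y)
      - ((ContinuousLinearMap.snd ℝ ℝ ℝ).smulRight (mbmF s x₀ t)) ((x, τ) - (x₀, t))
      = ∫ y in t..τ, (mbmF s x y - mbmF s x₀ t) := by
    rw [intervalIntegral.integral_same, intervalIntegral.integral_sub hint
      intervalIntegrable_const, intervalIntegral.integral_const]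
    simp only [ContinuousLinearMap.smulRight_apply, ContinuousLinearMap.coe_snd',
      smul_eq_mul, sub_zero, Prod.snd_sub]
  show ‖((∫ y in t..τ, mbmF s x y) - ∫ y in t..t, mbmF s x₀ y) -
      ((ContinuousLinearMap.snd ℝ ℝ ℝ).smulRight (mbmF s x₀ t)) ((x, τ) - (x₀, t))‖ ≤
      C * ‖(x, τ) - (x₀, t)‖
  rw [key]
  calc ‖∫ y in t..τ, (mbmF s x y - mbmF s x₀ t)‖ ≤ C * |τ - t| := by
        apply intervalIntegral.norm_integral_le_of_norm_le_const
        intro y hy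
        exact hptwise y (Set.uIoc_subset_uIcc hy)
    _ ≤ C * ‖(x, τ) - (x₀, t)‖ := by
        apply mul_le_mul_of_nonneg_left _ hC.le
        have : |τ - t| = ‖((x, τ) - (x₀, t)).2‖ := by simp [Real.norm_eq_abs]
        rw [this]
        exact norm_snd_le _


/-- For the multifractional Brownian motion kernel
`K(t,s) = s^(1/2−h(t)) ∫_s^t (y−s)^(h(t)−3/2) y^(h(t)−1/2) dy` (for `0 < s ≤ t < T`),
for all `0 < s < t < T` the map `τ ↦ K(τ,s)` is differentiable at `t` with derivative
`h′(t) s^(1/2−h(t)) ∫_s^t (y−s)^(h(t)−3/2) y^(h(t)−1/2) ln((y/s−1)y) dy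
  + s^(1/2−h(t)) (t−s)^(h(t)−3/2) t^(h(t)−1/2)`. -/
theorem mbm_kernel_deriv
    (T a b : ℝ) (hT : 0 < T) (hab : 1 / 2 < a) (hab' : a ≤ b) (hb : b < 1)
    (h : ℝ → ℝ) (hrange : ∀ t ∈ Set.Icc (0 : ℝ) T, h t ∈ Set.Icc a b)
    (hsmooth : ContDiff ℝ 1 h) (M : ℝ) (hM : ∀ t, |deriv h t| ≤ M)
    (K : ℝ → ℝ → ℝ)
    (hK : ∀ t s : ℝ, 0 < s → s ≤ t → t < T →
      K t s = s ^ ((1 : ℝ) / 2 - h t) *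
        ∫ y in s..t, (y - s) ^ (h t - 3 / 2) * y ^ (h t - 1 / 2))
    (hKvolterra : ∀ t s : ℝ, t < s → K t s = 0) :
    ∀ t s : ℝ, 0 < s → s < t → t < T →
      HasDerivAt (fun τ => K τ s)
        (deriv h t * s ^ ((1 : ℝ) / 2 - h t) *
            (∫ y in s..t,
              (y - s) ^ (h t - 3 / 2) * y ^ (h t - 1 / 2) * Real.log ((y / s - 1) * y))
          + s ^ ((1 : ℝ) / 2 - h t) * (t - s) ^ (h t - 3 / 2) * t ^ (h t - 1 / 2)) t := by
  intro t s hs hst htT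
  obtain ⟨hax₀, hbx₀⟩ := hrange t ⟨by linarith, htT.le⟩
  -- the ball radius
  have hε : (0 : ℝ) < (a - 1 / 2) / 2 := by linarith
  have hball : ∀ x ∈ Metric.ball (h t) ((a - 1 / 2) / 2),
      1 / 2 + (a - 1 / 2) / 2 ≤ x ∧ x ≤ 2 := by
    intro x hx
    rw [Metric.mem_ball, Real.dist_eq] at hx
    have := abs_lt.1 hx
    constructor <;> linarith
  have hpd := mbm_param_deriv hs hst hε (by linarith) hball
  have hFx₀int : IntervalIntegrable (mbmF s (h t)) volume s t :=
    mbmF_int hs le_rfl hst.le (by linarith) (by linarith) (by linarith)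
  -- the logarithm integral identity
  have hJ : (∫ y in s..t, (y - s) ^ (h t - 3 / 2) * y ^ (h t - 1 / 2) *
        Real.log ((y / s - 1) * y))
      = (∫ y in s..t, mbmF' s (h t) y) - Real.log s * ∫ y in s..t, mbmF s (h t) y := by
    rw [← intervalIntegral.integral_const_mul, ← intervalIntegral.integral_sub hpd.1
      (hFx₀int.const_mul _)]
    apply intervalIntegral.integral_congr
    intro y hy
    rw [Set.uIcc_of_le hst.le] at hy
    rcases eq_or_lt_of_le hy.1 with hys | hys
    · subst hys
      simp [mbmF', mbmF, Real.zero_rpow (show h t - 3 / 2 ≠ 0 by intro hc; nlinarith)]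
    · have hy0 : 0 < y := hs.trans hys
      have hne : y / s - 1 = (y - s) / s := by field_simp
      simp only [mbmF', mbmF]
      rw [hne, Real.log_mul
          (div_ne_zero (ne_of_gt (sub_pos.2 hys)) (ne_of_gt hs)) (ne_of_gt hy0),
        Real.log_div (ne_of_gt (sub_pos.2 hys)) (ne_of_gt hs)]
      ring
  -- derivative building blocks
  have hu : HasDerivAt (fun x : ℝ => s ^ (1 / 2 - x))
      (s ^ ((1 : ℝ) / 2 - h t) * Real.log s * (-1)) (h t) := by
    have h1 := (Real.hasStrictDerivAt_const_rpow hs ((1 : ℝ) / 2 - h t)).hasDerivAt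
    have h2 : HasDerivAt (fun x : ℝ => 1 / 2 - x) (-1 : ℝ) (h t) := by
      simpa using (hasDerivAt_id (h t)).const_sub (1 / 2 : ℝ)
    exact h1.comp (h t) h2
  have hγ : HasDerivAt (fun τ => ((h τ, τ) : ℝ × ℝ)) ((deriv h t, 1) : ℝ × ℝ) t :=
    ((hsmooth.differentiable one_ne_zero t).hasDerivAt).prodMk (hasDerivAt_id t)
  have hfst : HasFDerivAt (Prod.fst : ℝ × ℝ → ℝ) (ContinuousLinearMap.fst ℝ ℝ ℝ)
      ((h t, t) : ℝ × ℝ) := hasFDerivAt_fst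
  have hA := hu.comp_hasFDerivAt ((h t, t) : ℝ × ℝ) hfst
  have hB := hpd.2.comp_hasFDerivAt ((h t, t) : ℝ × ℝ) hfst
  have hΨ2 := mbm_endpoint_fderiv (s := s) (t := t) (h t) hs hst
  have total := (hA.mul (hB.add hΨ2)).comp_hasDerivAt (f := fun τ => ((h τ, τ) : ℝ × ℝ)) t hγ
  -- eventual equality with K
  have heq : (fun τ => K τ s) =ᶠ[nhds t] fun τ =>
      s ^ ((1 : ℝ) / 2 - h τ) *
        ((∫ y in s..t, mbmF s (h τ) y) + ∫ y in t..τ, mbmF s (h τ) y) := by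
    filter_upwards [Ioo_mem_nhds hst htT] with τ hτ
    obtain ⟨haτ, hbτ⟩ := hrange τ ⟨by linarith [hτ.1], hτ.2.le⟩
    have i1 : IntervalIntegrable (mbmF s (h τ)) volume s t :=
      mbmF_int hs le_rfl hst.le (by linarith) (by linarith) (by linarith)
    have i2 : IntervalIntegrable (mbmF s (h τ)) volume t τ :=
      mbmF_int hs hst.le hτ.1.le (by linarith) (by linarith) (by linarith)
    rw [hK τ s hs hτ.1.le hτ.2, intervalIntegral.integral_add_adjacent_intervals i1 i2]
    simp [mbmF]
  refine HasDerivAt.congr_of_eventuallyEq ?_ heq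
  convert total using 1
  case e'_8 => rfl
  simp only [Function.comp_apply, Pi.add_apply, ContinuousLinearMap.add_apply, ContinuousLinearMap.smul_apply,
    ContinuousLinearMap.smulRight_apply, ContinuousLinearMap.coe_fst',
    ContinuousLinearMap.coe_snd', intervalIntegral.integral_same, smul_eq_mul, add_zero]
  rw [hJ]
  simp only [mbmF]
  ring
end

section
/- For every T > 0, 0 < α < 1/2, 0 < β < 1/2 and 1 < p < 1/(1−α), one has ∫_0^T (∫_s^T (t−s)^{p(α−1)} (t/s)^{pβ} dt)^{2/p} ds ≤ (p(α−1)+1)^{−2/p} · T^{2(α−1)+2/p+1} · B(1−2β, 2(α−1)+2/p+1); in particular the left-hand side is finite. -/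
open Real MeasureTheory intervalIntegral

/-- The Euler Beta function `B(x,y) = ∫_0^1 u^(x−1)(1−u)^(y−1) du`. -/
noncomputable def eulerBeta (x y : ℝ) : ℝ :=
  ∫ u in (0 : ℝ)..1, u ^ (x - 1) * (1 - u) ^ (y - 1)

/-- For `T > 0`, `0 < α < 1/2`, `0 < β < 1/2` and `1 < p < 1/(1−α)`,
`∫_0^T (∫_s^T (t−s)^(p(α−1)) (t/s)^(pβ) dt)^(2/p) ds
  ≤ (p(α−1)+1)^(−2/p) T^(2(α−1)+2/p+1) B(1−2β, 2(α−1)+2/p+1)`,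
and in particular the left-hand side is finite (the integrand is integrable). -/
theorem double_integral_beta_bound
    (T α β p : ℝ) (hT : 0 < T) (hα : 0 < α) (hα' : α < 1 / 2)
    (hβ : 0 < β) (hβ' : β < 1 / 2) (hp : 1 < p) (hp' : p < 1 / (1 - α)) :
    IntervalIntegrable
        (fun s => (∫ t in s..T, (t - s) ^ (p * (α - 1)) * (t / s) ^ (p * β)) ^ (2 / p))
        MeasureTheory.volume 0 T ∧
      (∫ s in (0 : ℝ)..T,
          (∫ t in s..T, (t - s) ^ (p * (α - 1)) * (t / s) ^ (p * β)) ^ (2 / p))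
        ≤ (p * (α - 1) + 1) ^ (-(2 / p)) * T ^ (2 * (α - 1) + 2 / p + 1) *
            eulerBeta (1 - 2 * β) (2 * (α - 1) + 2 / p + 1) := by
  have hp0 : 0 < p := lt_trans one_pos hp
  set a := p * (α - 1) with ha_def
  set b := p * β with hb_def
  set q := 2 / p with hq_def
  have h1α : 0 < 1 - α := by linarith
  have hpa : p * (1 - α) < 1 := by
    have := (lt_div_iff₀ h1α).mp hp'
    linarith
  have ha1 : 0 < a + 1 := by
    have : a = -(p * (1 - α)) := by rw [ha_def]; ring
    linarith
  have ha : -1 < a := by linarith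
  have hb : 0 < b := by rw [hb_def]; positivity
  have hq : 0 < q := by rw [hq_def]; positivity
  have h2β : 2 * β < 1 := by linarith
  set d := 2 * (α - 1) + q with hd_def
  have hd : 0 < d := by
    have h1 : (1 - α) * p < 1 := by linarith [hpa]
    have h2 : 1 - α < 1 / p := (lt_div_iff₀ hp0).mpr h1
    have : 2 * (1 - α) < q := by rw [hq_def]; rw [div_eq_mul_inv, ← one_div]; linarith
    rw [hd_def]; linarith
  have hdq : (a + 1) * q = d := by
    rw [ha_def, hq_def, hd_def, hq_def]; field_simp
  have hbq : b * q = 2 * β := by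
    rw [hb_def, hq_def]; field_simp
  -- the inner integral as a function
  set f : ℝ → ℝ := fun s => ∫ t in s..T, (t - s) ^ a * (t / s) ^ b with hf_def
  set G : ℝ → ℝ := fun x => ∫ r in (1:ℝ)..x, (r - 1) ^ a * r ^ b with hG_def
  have hrpow_b_cont : Continuous fun x : ℝ => x ^ b :=
    continuous_iff_continuousAt.mpr fun x => Real.continuousAt_rpow_const x b (Or.inr hb.le)
  have hrpow_d_cont : Continuous fun x : ℝ => x ^ d :=
    continuous_iff_continuousAt.mpr fun x => Real.continuousAt_rpow_const x d (Or.inr hd.le)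
  have hrpow_q_cont : Continuous fun x : ℝ => x ^ q :=
    continuous_iff_continuousAt.mpr fun x => Real.continuousAt_rpow_const x q (Or.inr hq.le)
  have hGint : ∀ x y : ℝ, IntervalIntegrable (fun r => (r - 1) ^ a * r ^ b) volume x y := by
    intro x y
    have h1 : IntervalIntegrable (fun r : ℝ => (r - 1) ^ a) volume x y := by
      have := (intervalIntegrable_rpow' (a := x - 1) (b := y - 1) ha).comp_sub_right 1
      simpa using this
    exact h1.mul_continuousOn hrpow_b_cont.continuousOn
  have hGcont : Continuous G := intervalIntegral.continuous_primitive (fun x y => hGint x y) 1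
  have hrepr : ∀ s ∈ Set.Ioc (0:ℝ) T, f s = s ^ (a + 1) * G (T / s) := by
    intro s hs
    have hs0 : 0 < s := hs.1
    have hTs : (T / s) * s = T := div_mul_cancel₀ T hs0.ne'
    have h1 : (∫ r in (1:ℝ)..(T/s), (r * s - s) ^ a * ((r * s) / s) ^ b)
        = s⁻¹ • ∫ t in ((1:ℝ)*s)..((T/s)*s), (t - s) ^ a * (t / s) ^ b := by
      exact intervalIntegral.integral_comp_mul_right (fun t => (t - s) ^ a * (t / s) ^ b) hs0.ne'
    rw [one_mul, hTs] at h1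
    have h2 : f s = s * ∫ r in (1:ℝ)..(T/s), (r * s - s) ^ a * ((r * s) / s) ^ b := by
      rw [h1, smul_eq_mul, ← mul_assoc, mul_inv_cancel₀ hs0.ne', one_mul]
    have h1T : (1:ℝ) ≤ T / s := (one_le_div hs0).mpr hs.2
    have h3 : ∀ r ∈ Set.uIcc (1:ℝ) (T/s),
        (r * s - s) ^ a * ((r * s) / s) ^ b = s ^ a * ((r - 1) ^ a * r ^ b) := by
      intro r hr
      rw [Set.uIcc_of_le h1T] at hr
      rw [show r * s - s = (r - 1) * s by ring,
        Real.mul_rpow (by linarith [hr.1]) hs0.le, mul_div_cancel_right₀ r hs0.ne']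
      ring
    rw [h2, intervalIntegral.integral_congr h3, intervalIntegral.integral_const_mul,
      Real.rpow_add hs0, Real.rpow_one]
    ring
  have hf_nonneg : ∀ s ∈ Set.Icc (0:ℝ) T, 0 ≤ f s := by
    intro s hs
    apply intervalIntegral.integral_nonneg hs.2
    intro t ht
    have h1 : 0 ≤ t - s := by linarith [ht.1]
    have h2 : 0 ≤ t / s := div_nonneg (le_trans hs.1 ht.1) hs.1
    exact mul_nonneg (Real.rpow_nonneg h1 a) (Real.rpow_nonneg h2 b)
  have hinner : ∀ s ∈ Set.Ioc (0:ℝ) T, f s ≤ (T / s) ^ b * ((T - s) ^ (a + 1) / (a + 1)) := by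
    intro s hs
    have hs0 : 0 < s := hs.1
    have hint1 : IntervalIntegrable (fun t => (t - s) ^ a) volume s T := by
      have := (intervalIntegrable_rpow' (a := 0) (b := T - s) ha).comp_sub_right s
      simpa using this
    have hcont : Continuous fun t : ℝ => (t / s) ^ b :=
      (continuous_id.div_const s).rpow_const fun x => Or.inr hb.le
    have hFint : IntervalIntegrable (fun t => (t - s) ^ a * (t / s) ^ b) volume s T :=
      hint1.mul_continuousOn hcont.continuousOn
    have hGint2 : IntervalIntegrable (fun t => (t - s) ^ a * (T / s) ^ b) volume s T :=
      hint1.mul_continuousOn continuousOn_const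
    have hmono : f s ≤ ∫ t in s..T, (t - s) ^ a * (T / s) ^ b := by
      apply intervalIntegral.integral_mono_on hs.2 hFint hGint2
      intro t ht
      apply mul_le_mul_of_nonneg_left _ (Real.rpow_nonneg (by linarith [ht.1]) a)
      exact Real.rpow_le_rpow (div_nonneg (by linarith [hs0, ht.1]) hs0.le)
        ((div_le_div_iff_of_pos_right hs0).mpr ht.2) hb.le
    have hval : (∫ t in s..T, (t - s) ^ a * (T / s) ^ b)
        = (T / s) ^ b * ((T - s) ^ (a + 1) / (a + 1)) := by
      rw [intervalIntegral.integral_mul_const]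
      have h5 : (∫ t in s..T, (t - s) ^ a) = (T - s) ^ (a + 1) / (a + 1) := by
        rw [intervalIntegral.integral_comp_sub_right (fun x : ℝ => x ^ a) s, sub_self,
          integral_rpow (Or.inl ha), Real.zero_rpow (ne_of_gt ha1), sub_zero]
      rw [h5]; ring
    exact hval ▸ hmono
  set Kc : ℝ := (a + 1) ^ (-q) * T ^ (2 * β) with hKc_def
  set g : ℝ → ℝ := fun s => Kc * (s ^ (-(2 * β)) * (T - s) ^ d) with hg_def
  have hKc0 : 0 ≤ Kc := by rw [hKc_def]; positivity
  have hg_nonneg : ∀ s ∈ Set.Icc (0:ℝ) T, 0 ≤ g s := by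
    intro s hs
    exact mul_nonneg hKc0 (mul_nonneg (Real.rpow_nonneg hs.1 _)
      (Real.rpow_nonneg (by linarith [hs.2]) _))
  have hstep : ∀ s ∈ Set.Ioc (0:ℝ) T, f s ^ q ≤ g s := by
    intro s hs
    have hs0 : 0 < s := hs.1
    have hTs' : (0:ℝ) ≤ T - s := by linarith [hs.2]
    calc f s ^ q ≤ ((T / s) ^ b * ((T - s) ^ (a + 1) / (a + 1))) ^ q :=
          Real.rpow_le_rpow (hf_nonneg s ⟨hs0.le, hs.2⟩) (hinner s hs) hq.le
      _ = g s := by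
          rw [hg_def, hKc_def]
          simp only
          rw [Real.mul_rpow (Real.rpow_nonneg (div_nonneg hT.le hs0.le) b)
              (div_nonneg (Real.rpow_nonneg hTs' _) ha1.le),
            Real.div_rpow (Real.rpow_nonneg hTs' _) ha1.le,
            ← Real.rpow_mul (div_nonneg hT.le hs0.le), hbq,
            ← Real.rpow_mul hTs', hdq,
            Real.div_rpow hT.le hs0.le,
            Real.rpow_neg ha1.le, Real.rpow_neg hs0.le,
            div_eq_mul_inv, div_eq_mul_inv]
          ring
  have hg_int : IntervalIntegrable g volume 0 T := by
    have hbase : IntervalIntegrable (fun s => s ^ (-(2 * β)) * (T - s) ^ d) volume 0 T := by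
      have hcd : Continuous fun s : ℝ => (T - s) ^ d :=
        (continuous_const.sub continuous_id).rpow_const fun x => Or.inr hd.le
      have h1 : IntervalIntegrable (fun s => s ^ (-(2 * β)) * (T - s) ^ d) volume 0 (T/2) :=
        (intervalIntegrable_rpow' (by linarith : (-1:ℝ) < -(2 * β))).mul_continuousOn
          hcd.continuousOn
      have h2 : IntervalIntegrable (fun s => s ^ (-(2 * β)) * (T - s) ^ d) volume (T/2) T := by
        apply ContinuousOn.intervalIntegrable
        apply ContinuousOn.mul _ hcd.continuousOn
        apply ContinuousOn.rpow_const continuousOn_id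
        intro x hx
        rw [Set.uIcc_of_le (by linarith)] at hx
        refine Or.inl ?_
        simp only [id_eq]
        intro h
        rw [h] at hx
        linarith [hx.1]
      exact h1.trans h2
    exact hbase.const_mul Kc
  have hfq_meas : AEStronglyMeasurable (fun s => f s ^ q) (volume.restrict (Set.uIoc (0:ℝ) T)) := by
    rw [Set.uIoc_of_le hT.le]
    have hφ : ContinuousOn (fun s : ℝ => (s ^ (a + 1) * G (T / s)) ^ q) (Set.Ioc (0:ℝ) T) := by
      apply ContinuousOn.rpow_const _ (fun x _ => Or.inr hq.le)
      apply ContinuousOn.mul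
      · exact ContinuousOn.rpow_const continuousOn_id (fun x hx => Or.inl (ne_of_gt hx.1))
      · exact hGcont.comp_continuousOn
          (ContinuousOn.div continuousOn_const continuousOn_id (fun x hx => ne_of_gt hx.1))
    apply (hφ.aestronglyMeasurable measurableSet_Ioc).congr
    rw [Filter.EventuallyEq, ae_restrict_iff' measurableSet_Ioc]
    filter_upwards with s hs
    exact congrArg (· ^ q) (hrepr s hs).symm
  have hf_int : IntervalIntegrable (fun s => f s ^ q) volume 0 T := by
    apply hg_int.mono_fun hfq_meas
    rw [Set.uIoc_of_le hT.le, Filter.EventuallyLE, ae_restrict_iff' measurableSet_Ioc]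
    filter_upwards with s hs
    have h1 : 0 ≤ f s ^ q := Real.rpow_nonneg (hf_nonneg s ⟨hs.1.le, hs.2⟩) q
    rw [Real.norm_eq_abs, Real.norm_eq_abs, abs_of_nonneg h1, abs_of_nonneg (hg_nonneg s ⟨hs.1.le, hs.2⟩)]
    exact hstep s hs
  have hg_eval : (∫ s in (0:ℝ)..T, g s) =
      (a + 1) ^ (-q) * T ^ (d + 1) * eulerBeta (1 - 2 * β) (d + 1) := by
    have hB : eulerBeta (1 - 2 * β) (d + 1) = ∫ u in (0:ℝ)..1, u ^ (-(2 * β)) * (1 - u) ^ d := by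
      rw [eulerBeta, show 1 - 2 * β - 1 = -(2 * β) by ring, show d + 1 - 1 = d by ring]
    set B0 : ℝ := ∫ u in (0:ℝ)..1, u ^ (-(2 * β)) * (1 - u) ^ d with hB0_def
    have hsub : (∫ u in (0:ℝ)..1, (u * T) ^ (-(2 * β)) * (T - u * T) ^ d)
        = T⁻¹ • ∫ s in ((0:ℝ)*T)..((1:ℝ)*T), s ^ (-(2 * β)) * (T - s) ^ d :=
      intervalIntegral.integral_comp_mul_right (fun s => s ^ (-(2 * β)) * (T - s) ^ d) hT.ne'
    rw [zero_mul, one_mul] at hsub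
    have hcongr : ∀ u ∈ Set.uIcc (0:ℝ) 1,
        (u * T) ^ (-(2 * β)) * (T - u * T) ^ d
          = (T ^ (-(2 * β)) * T ^ d) * (u ^ (-(2 * β)) * (1 - u) ^ d) := by
      intro u hu
      rw [Set.uIcc_of_le zero_le_one] at hu
      rw [Real.mul_rpow hu.1 hT.le, show T - u * T = (1 - u) * T by ring,
        Real.mul_rpow (by linarith [hu.2]) hT.le]
      ring
    have hleft : (∫ u in (0:ℝ)..1, (u * T) ^ (-(2 * β)) * (T - u * T) ^ d)
        = (T ^ (-(2 * β)) * T ^ d) * B0 := by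
      rw [intervalIntegral.integral_congr hcongr, intervalIntegral.integral_const_mul]
    have hbase_eval : (∫ s in (0:ℝ)..T, s ^ (-(2 * β)) * (T - s) ^ d)
        = T * ((T ^ (-(2 * β)) * T ^ d) * B0) := by
      rw [← hleft, hsub, smul_eq_mul, ← mul_assoc, mul_inv_cancel₀ hT.ne', one_mul]
    have hgint_eq : (∫ s in (0:ℝ)..T, g s) = Kc * ∫ s in (0:ℝ)..T, s ^ (-(2 * β)) * (T - s) ^ d := by
      rw [hg_def]
      exact intervalIntegral.integral_const_mul Kc _
    rw [hgint_eq, hbase_eval, hKc_def, hB]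
    rw [Real.rpow_neg hT.le, Real.rpow_add hT d 1, Real.rpow_one]
    have hne : T ^ (2 * β) ≠ 0 := (Real.rpow_pos_of_pos hT _).ne'
    field_simp
  refine ⟨hf_int, ?_⟩
  have hmono : (∫ s in (0:ℝ)..T, f s ^ q) ≤ ∫ s in (0:ℝ)..T, g s := by
    apply intervalIntegral.integral_mono_on hT.le hf_int hg_int
    intro s hs
    rcases eq_or_lt_of_le hs.1 with h0 | h0
    · -- s = 0
      have hf0 : f 0 = 0 := by
        rw [hf_def]
        simp only
        rw [show (∫ t in (0:ℝ)..T, (t - 0) ^ a * (t / 0) ^ b) = ∫ t in (0:ℝ)..T, (0:ℝ) from ?_,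
          intervalIntegral.integral_zero]
        apply intervalIntegral.integral_congr
        intro t _
        simp [Real.zero_rpow hb.ne', div_zero]
      rw [← h0, hf0, Real.zero_rpow hq.ne']
      exact hg_nonneg 0 ⟨le_refl 0, hT.le⟩
    · exact hstep s ⟨h0, hs.2⟩
  calc (∫ s in (0:ℝ)..T, f s ^ q) ≤ ∫ s in (0:ℝ)..T, g s := hmono
    _ = (a + 1) ^ (-q) * T ^ (d + 1) * eulerBeta (1 - 2 * β) (d + 1) := hg_eval
end

section
/- For all bounded measurable functions a, b : [0,T] → ℝ, all the integrals below converge absolutely and ∫_0^T ( ∫_t^T a_r (∂K/∂t)(r,t) dr ) ( ∫_t^T b_s (∂K/∂t)(s,t) ds ) dt = ∫_0^T ∫_0^T φ(r,s) a_r b_s ds dr. -/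
open Real MeasureTheory intervalIntegral

section VIFHelpers
open Set


namespace VIF

lemma meas_rpow_const (γ : ℝ) : Measurable fun x : ℝ => x ^ γ := by
  apply measurable_of_continuousOn_compl_singleton (0 : ℝ)
  intro x hx
  exact (Real.continuousAt_rpow_const x γ (Or.inl (by simpa using hx))).continuousWithinAt

lemma ae_ne (s : Set ℝ) (x : ℝ) : ∀ᵐ u ∂(volume.restrict s), u ≠ x := by
  rw [ae_iff]
  have h : {u : ℝ | ¬u ≠ x} = {x} := by ext u; simp [not_not]
  rw [h, Measure.restrict_apply (measurableSet_singleton x)]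
  exact measure_mono_null Set.inter_subset_left Real.volume_singleton

lemma ae_Ioo (x y : ℝ) : ∀ᵐ u ∂(volume.restrict (Ioc x y)), u ∈ Ioo x y := by
  filter_upwards [ae_restrict_mem measurableSet_Ioc, ae_ne (Ioc x y) y] with u hu hne
  exact ⟨hu.1, lt_of_le_of_ne hu.2 hne⟩

lemma measG {S : Set (ℝ × ℝ)} (hS : IsOpen S) {f : ℝ × ℝ → ℝ} (hf : ContinuousOn f S) :
    Measurable (S.indicator f) := by
  classical
  have h := ContinuousOn.measurable_piecewise (g := fun _ => (0 : ℝ)) hf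
    continuousOn_const hS.measurableSet
  rw [← Set.piecewise_eq_indicator]; exact h

lemma rpow_Ioc {γ A : ℝ} (hγ : -1 < γ) (hA : 0 ≤ A) :
    IntegrableOn (fun u : ℝ => u ^ γ) (Ioc 0 A) volume := by
  have h := intervalIntegrable_rpow' (a := 0) (b := A) hγ
  rwa [intervalIntegrable_iff, uIoc_of_le hA] at h

lemma rpow_sub {γ t B : ℝ} (hγ : -1 < γ) (h : t ≤ B) :
    IntegrableOn (fun r : ℝ => (r - t) ^ γ) (Ioc t B) volume := by
  have h1 := (intervalIntegrable_rpow' (a := 0) (b := B - t) hγ).comp_sub_right t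
  rw [zero_add, sub_add_cancel] at h1
  rwa [intervalIntegrable_iff, uIoc_of_le h] at h1

lemma rpow_sub_left {γ t B : ℝ} (hγ : -1 < γ) (h : t ≤ B) :
    IntegrableOn (fun u : ℝ => (B - u) ^ γ) (Ioc t B) volume := by
  have h1 := (intervalIntegrable_rpow' (a := 0) (b := B - t) hγ).comp_sub_left B
  rw [sub_zero, sub_sub_cancel] at h1
  rwa [intervalIntegrable_iff, uIoc_comm, uIoc_of_le h] at h1

lemma integral_rpow_sub {γ t B : ℝ} (hγ : -1 < γ) (h : t ≤ B) :
    ∫ r in Ioc t B, (r - t) ^ γ = (B - t) ^ (γ + 1) / (γ + 1) := by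
  rw [← intervalIntegral.integral_of_le h]
  rw [show (∫ r in t..B, (r - t) ^ γ) = ∫ x in t - t..B - t, x ^ γ from
    intervalIntegral.integral_comp_sub_right (fun x => x ^ γ) t]
  rw [sub_self, integral_rpow (Or.inl hγ), Real.zero_rpow (by linarith), sub_zero]

lemma L3 {β q r : ℝ} (hβ0 : 0 < β) (hβ : β < 1 / 2) (hq : -1 < q) (hq0 : q ≤ 0) (hr : 0 < r) :
    IntegrableOn (fun u : ℝ => u ^ (-β) * u ^ (-β) * (r - u) ^ q) (Ioc 0 r) volume := by
  have hmeas : Measurable fun u : ℝ => u ^ (-β) * u ^ (-β) * (r - u) ^ q :=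
    ((meas_rpow_const _).mul (meas_rpow_const _)).mul
      ((meas_rpow_const q).comp (measurable_const.sub measurable_id))
  have h2 : (0 : ℝ) < r / 2 := by linarith
  have hsplit : Ioc (0 : ℝ) r = Ioc 0 (r / 2) ∪ Ioc (r / 2) r :=
    (Ioc_union_Ioc_eq_Ioc (by linarith) (by linarith)).symm
  rw [hsplit, integrableOn_union]
  constructor
  · apply Integrable.mono' (g := fun u => (r / 2) ^ q * (u ^ (-β) * u ^ (-β)))
    · have hi : IntegrableOn (fun u : ℝ => u ^ (-(β + β))) (Ioc 0 (r / 2)) volume :=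
        rpow_Ioc (by linarith) (by linarith)
      have hi2 : IntegrableOn (fun u : ℝ => u ^ (-β) * u ^ (-β)) (Ioc 0 (r / 2)) volume := by
        apply Integrable.congr hi
        filter_upwards [ae_Ioo 0 (r / 2)] with u hu
        rw [show -(β + β) = -β + -β from by ring, Real.rpow_add hu.1]
      exact hi2.const_mul _
    · exact hmeas.aestronglyMeasurable
    · filter_upwards [ae_Ioo 0 (r / 2)] with u hu
      have h1 : 0 < u := hu.1
      have h3 : r / 2 ≤ r - u := by linarith [hu.2]
      have h4 : (r - u) ^ q ≤ (r / 2) ^ q := Real.rpow_le_rpow_of_nonpos h2 h3 hq0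
      have h5 : (0 : ℝ) ≤ u ^ (-β) * u ^ (-β) :=
        mul_nonneg (Real.rpow_nonneg h1.le _) (Real.rpow_nonneg h1.le _)
      rw [Real.norm_eq_abs,
        abs_of_nonneg (mul_nonneg h5 (Real.rpow_nonneg (by linarith) _))]
      calc u ^ (-β) * u ^ (-β) * (r - u) ^ q
          ≤ u ^ (-β) * u ^ (-β) * (r / 2) ^ q := mul_le_mul_of_nonneg_left h4 h5
        _ = (r / 2) ^ q * (u ^ (-β) * u ^ (-β)) := by ring
  · apply Integrable.mono' (g := fun u => (r / 2) ^ (-β) * (r / 2) ^ (-β) * (r - u) ^ q)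
    · have := (rpow_sub_left (t := r / 2) (B := r) hq (by linarith)).const_mul
        ((r / 2) ^ (-β) * (r / 2) ^ (-β))
      simpa [mul_assoc] using this
    · exact hmeas.aestronglyMeasurable
    · filter_upwards [ae_Ioo (r / 2) r] with u hu
      have h1 : r / 2 < u := hu.1
      have hu0 : 0 < u := lt_trans h2 h1
      have h4 : u ^ (-β) ≤ (r / 2) ^ (-β) :=
        Real.rpow_le_rpow_of_nonpos h2 h1.le (by linarith)
      have h6 : (0 : ℝ) ≤ (r - u) ^ q := Real.rpow_nonneg (by linarith [hu.2]) _
      have h5 : (0 : ℝ) ≤ u ^ (-β) := Real.rpow_nonneg hu0.le _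
      rw [Real.norm_eq_abs, abs_of_nonneg (mul_nonneg (mul_nonneg h5 h5) h6)]
      have h7 : u ^ (-β) * u ^ (-β) ≤ (r / 2) ^ (-β) * (r / 2) ^ (-β) :=
        mul_le_mul h4 h4 h5 (Real.rpow_nonneg h2.le _)
      exact mul_le_mul_of_nonneg_right h7 h6

end VIF



namespace VIF2

lemma A {T α β κ : ℝ} (hT : 0 < T) (hα0 : 0 < α) (hβ0 : 0 < β) (hκ : 0 ≤ κ)
    {G : ℝ × ℝ → ℝ} (hGm : Measurable G)
    (hGb : ∀ p : ℝ × ℝ, |G p| ≤ κ * Set.indicator {q : ℝ × ℝ | 0 < q.2 ∧ q.2 < q.1 ∧ q.1 < T}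
      (fun q => (q.1 - q.2) ^ (α - 1) * q.2 ^ (-β)) p)
    {f : ℝ → ℝ} (hfm : Measurable f) {Cf : ℝ} (hCf : 0 ≤ Cf)
    (hf : ∀ x ∈ Icc (0 : ℝ) T, |f x| ≤ Cf)
    {u : ℝ} (hu : u ∈ Ioo (0 : ℝ) T) :
    Integrable (fun r => f r * G (r, u)) (volume.restrict (Ioc (0 : ℝ) T)) ∧
      ∫ r in Ioc (0 : ℝ) T, ‖f r * G (r, u)‖ ≤ Cf * κ * (T ^ α / α) * u ^ (-β) := by
  have hu0 := hu.1
  have huT := hu.2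
  set g0 : ℝ → ℝ := fun r =>
    Cf * κ * u ^ (-β) * Set.indicator (Ioc u T) (fun r => (r - u) ^ (α - 1)) r with hg0
  have hg0nn : ∀ r, 0 ≤ g0 r := by
    intro r
    apply mul_nonneg (mul_nonneg (mul_nonneg hCf hκ) (Real.rpow_nonneg hu0.le _))
    exact Set.indicator_nonneg
      (fun x hx => Real.rpow_nonneg (by linarith [hx.1] : (0 : ℝ) ≤ x - u) _) r
  have hb : ∀ r, ‖f r * G (r, u)‖ ≤ g0 r := by
    intro r
    rw [Real.norm_eq_abs, abs_mul]
    by_cases hrS : (r, u) ∈ {q : ℝ × ℝ | 0 < q.2 ∧ q.2 < q.1 ∧ q.1 < T}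
    · obtain ⟨h1, h2, h3⟩ := id hrS
      have hfr : |f r| ≤ Cf := hf r ⟨by linarith, by linarith⟩
      have hGr := hGb (r, u)
      rw [Set.indicator_of_mem hrS] at hGr
      have hmem : r ∈ Ioc u T := ⟨h2, h3.le⟩
      have hGr' : |G (r, u)| ≤ κ * ((r - u) ^ (α - 1) * u ^ (-β)) := hGr
      have hRnn : (0 : ℝ) ≤ κ * ((r - u) ^ (α - 1) * u ^ (-β)) :=
        mul_nonneg hκ (mul_nonneg (Real.rpow_nonneg (by linarith) _)
          (Real.rpow_nonneg (by linarith) _))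
      calc |f r| * |G (r, u)|
          ≤ Cf * (κ * ((r - u) ^ (α - 1) * u ^ (-β))) :=
            mul_le_mul hfr hGr' (abs_nonneg _) hCf
        _ = Cf * κ * u ^ (-β) * (r - u) ^ (α - 1) := by ring
        _ = g0 r := by rw [hg0]; simp only; rw [Set.indicator_of_mem hmem]
    · have hGr := hGb (r, u)
      rw [Set.indicator_of_notMem hrS, mul_zero] at hGr
      have h0 : |G (r, u)| = 0 := le_antisymm hGr (abs_nonneg _)
      rw [h0, mul_zero]
      exact hg0nn r
  have hind : Integrable g0 (volume.restrict (Ioc (0 : ℝ) T)) := by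
    have h1 : IntegrableOn (fun r : ℝ => (r - u) ^ (α - 1)) (Ioc u T) volume :=
      VIF.rpow_sub (by linarith) huT.le
    exact ((h1.integrable_indicator measurableSet_Ioc).restrict).const_mul _
  have hmeas : AEStronglyMeasurable (fun r => f r * G (r, u))
      (volume.restrict (Ioc (0 : ℝ) T)) :=
    (hfm.mul (hGm.comp (measurable_id.prodMk measurable_const))).aestronglyMeasurable
  refine ⟨hind.mono' hmeas (ae_of_all _ hb), ?_⟩
  have hsub : Ioc u T ∩ Ioc (0 : ℝ) T = Ioc u T :=
    Set.inter_eq_left.mpr (Ioc_subset_Ioc hu0.le le_rfl)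
  calc ∫ r in Ioc (0 : ℝ) T, ‖f r * G (r, u)‖
      ≤ ∫ r in Ioc (0 : ℝ) T, g0 r :=
        integral_mono_of_nonneg (ae_of_all _ fun r => norm_nonneg _) hind (ae_of_all _ hb)
    _ = Cf * κ * u ^ (-β) *
        ∫ r in Ioc (0 : ℝ) T, Set.indicator (Ioc u T) (fun r => (r - u) ^ (α - 1)) r :=
        integral_const_mul _ _
    _ = Cf * κ * u ^ (-β) * ∫ r in Ioc u T, (r - u) ^ (α - 1) := by
        rw [MeasureTheory.integral_indicator measurableSet_Ioc,
          Measure.restrict_restrict measurableSet_Ioc, hsub]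
    _ = Cf * κ * u ^ (-β) * ((T - u) ^ (α - 1 + 1) / (α - 1 + 1)) := by
        rw [VIF.integral_rpow_sub (by linarith) huT.le]
    _ = Cf * κ * u ^ (-β) * ((T - u) ^ α / α) := by norm_num
    _ ≤ Cf * κ * u ^ (-β) * (T ^ α / α) := by
        apply mul_le_mul_of_nonneg_left _
          (mul_nonneg (mul_nonneg hCf hκ) (Real.rpow_nonneg hu0.le _))
        have h9 : (T - u) ^ α ≤ T ^ α :=
          Real.rpow_le_rpow (by linarith) (by linarith) hα0.le
        have h10 := mul_le_mul_of_nonneg_right h9 (le_of_lt (inv_pos.mpr hα0))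
        simpa [div_eq_mul_inv] using h10
    _ = Cf * κ * (T ^ α / α) * u ^ (-β) := by ring

lemma B1 {T α β κ : ℝ} (hT : 0 < T) (hα0 : 0 < α) (hα1 : α ≤ 1) (hβ0 : 0 < β)
    (hβ : β < 1 / 2) (hκ : 0 ≤ κ)
    {G : ℝ × ℝ → ℝ} (hGm : Measurable G)
    (hGb : ∀ p : ℝ × ℝ, |G p| ≤ κ * Set.indicator {q : ℝ × ℝ | 0 < q.2 ∧ q.2 < q.1 ∧ q.1 < T}
      (fun q => (q.1 - q.2) ^ (α - 1) * q.2 ^ (-β)) p)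
    {r s : ℝ} (hr : r ∈ Ioo (0 : ℝ) T) (hs : s ∈ Ioo (0 : ℝ) T) (hrs : r < s) :
    Integrable (fun u => G (r, u) * G (s, u)) (volume.restrict (Ioc (0 : ℝ) T)) := by
  have hCnn : (0 : ℝ) ≤ κ * κ * (s - r) ^ (α - 1) :=
    mul_nonneg (mul_nonneg hκ hκ) (Real.rpow_nonneg (by linarith) _)
  have hindnn : ∀ u : ℝ, (0 : ℝ) ≤
      Set.indicator (Ioc 0 r) (fun u => u ^ (-β) * u ^ (-β) * (r - u) ^ (α - 1)) u := by
    intro u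
    apply Set.indicator_nonneg
    intro x hx
    exact mul_nonneg (mul_nonneg (Real.rpow_nonneg hx.1.le _) (Real.rpow_nonneg hx.1.le _))
      (Real.rpow_nonneg (by linarith [hx.2] : (0 : ℝ) ≤ r - x) _)
  apply Integrable.mono' (g := fun u => κ * κ * (s - r) ^ (α - 1) *
      Set.indicator (Ioc 0 r) (fun u => u ^ (-β) * u ^ (-β) * (r - u) ^ (α - 1)) u)
  · exact (((VIF.L3 hβ0 hβ (by linarith) (by linarith) hr.1).integrable_indicator
      measurableSet_Ioc).restrict).const_mul _
  · exact ((hGm.comp (measurable_const.prodMk measurable_id)).mul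
      (hGm.comp (measurable_const.prodMk measurable_id))).aestronglyMeasurable
  · apply ae_of_all
    intro u
    rw [Real.norm_eq_abs, abs_mul]
    by_cases hc : 0 < u ∧ u < r
    · have hmemr : (r, u) ∈ {q : ℝ × ℝ | 0 < q.2 ∧ q.2 < q.1 ∧ q.1 < T} :=
        ⟨hc.1, hc.2, hr.2⟩
      have hmems : (s, u) ∈ {q : ℝ × ℝ | 0 < q.2 ∧ q.2 < q.1 ∧ q.1 < T} :=
        ⟨hc.1, lt_trans hc.2 hrs, hs.2⟩
      have h1 := hGb (r, u)
      rw [Set.indicator_of_mem hmemr] at h1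
      have h1' : |G (r, u)| ≤ κ * ((r - u) ^ (α - 1) * u ^ (-β)) := h1
      have h2 := hGb (s, u)
      rw [Set.indicator_of_mem hmems] at h2
      have h3 : (s - u) ^ (α - 1) ≤ (s - r) ^ (α - 1) :=
        Real.rpow_le_rpow_of_nonpos (by linarith) (by linarith [hc.2]) (by linarith)
      have h4 : |G (s, u)| ≤ κ * ((s - r) ^ (α - 1) * u ^ (-β)) := by
        refine le_trans h2 ?_
        exact mul_le_mul_of_nonneg_left
          (mul_le_mul_of_nonneg_right h3 (Real.rpow_nonneg hc.1.le _)) hκ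
      have hnn1 : (0 : ℝ) ≤ κ * ((r - u) ^ (α - 1) * u ^ (-β)) :=
        mul_nonneg hκ (mul_nonneg (Real.rpow_nonneg (by linarith [hc.2]) _)
          (Real.rpow_nonneg hc.1.le _))
      calc |G (r, u)| * |G (s, u)|
          ≤ (κ * ((r - u) ^ (α - 1) * u ^ (-β))) * (κ * ((s - r) ^ (α - 1) * u ^ (-β))) :=
            mul_le_mul h1' h4 (abs_nonneg _) hnn1
        _ = κ * κ * (s - r) ^ (α - 1) * (u ^ (-β) * u ^ (-β) * (r - u) ^ (α - 1)) := by ring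
        _ = _ := by
            congr 1
            exact (Set.indicator_of_mem
              (show u ∈ Ioc (0 : ℝ) r from ⟨hc.1, hc.2.le⟩)
              (fun u : ℝ => u ^ (-β) * u ^ (-β) * (r - u) ^ (α - 1))).symm
    · have hnot : (r, u) ∉ {q : ℝ × ℝ | 0 < q.2 ∧ q.2 < q.1 ∧ q.1 < T} :=
        fun h => hc ⟨h.1, h.2.1⟩
      have h1 := hGb (r, u)
      rw [Set.indicator_of_notMem hnot, mul_zero] at h1
      have h0 : |G (r, u)| = 0 := le_antisymm h1 (abs_nonneg _)
      rw [h0, zero_mul]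
      exact mul_nonneg hCnn (hindnn u)

lemma C {T : ℝ} {K' : ℝ → ℝ → ℝ} {G : ℝ × ℝ → ℝ}
    (hGif : ∀ p : ℝ × ℝ, G p = if 0 < p.2 ∧ p.2 < p.1 ∧ p.1 < T then K' p.1 p.2 else 0)
    (f : ℝ → ℝ) {t : ℝ} (ht : t ∈ Ioo (0 : ℝ) T) :
    (∫ r in t..T, f r * K' r t) = ∫ r in Ioc (0 : ℝ) T, f r * G (r, t) := by
  have h1 : ∫ r in Ioc (0 : ℝ) T, f r * G (r, t)
      = ∫ r in Ioc (0 : ℝ) T, Set.indicator (Ioc t T) (fun r => f r * K' r t) r := by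
    apply MeasureTheory.integral_congr_ae
    filter_upwards [VIF.ae_Ioo 0 T] with r hr
    rw [hGif (r, t)]
    by_cases hcnd : t < r
    · have hmem : r ∈ Ioc t T := ⟨hcnd, hr.2.le⟩
      rw [if_pos (show 0 < (r, t).2 ∧ (r, t).2 < (r, t).1 ∧ (r, t).1 < T from
        ⟨ht.1, hcnd, hr.2⟩), Set.indicator_of_mem hmem]
    · have hnm : r ∉ Ioc t T := fun h => hcnd h.1
      rw [if_neg (show ¬(0 < (r, t).2 ∧ (r, t).2 < (r, t).1 ∧ (r, t).1 < T) from
        fun h => hcnd h.2.1), Set.indicator_of_notMem hnm, mul_zero]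
  rw [intervalIntegral.integral_of_le ht.2.le, h1,
    MeasureTheory.integral_indicator measurableSet_Ioc,
    Measure.restrict_restrict measurableSet_Ioc,
    Set.inter_eq_left.mpr (Ioc_subset_Ioc ht.1.le le_rfl)]

lemma B2 {T : ℝ} {K' : ℝ → ℝ → ℝ} {G : ℝ × ℝ → ℝ}
    (hGif : ∀ p : ℝ × ℝ, G p = if 0 < p.2 ∧ p.2 < p.1 ∧ p.1 < T then K' p.1 p.2 else 0)
    {r s : ℝ} (hr : r ∈ Ioo (0 : ℝ) T) (hs : s ∈ Ioo (0 : ℝ) T) :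
    (∫ u in (0 : ℝ)..(min r s), K' r u * K' s u) = ∫ u in Ioc (0 : ℝ) T, G (r, u) * G (s, u) := by
  have hm0 : (0 : ℝ) ≤ min r s := le_min hr.1.le hs.1.le
  have hmT : min r s ≤ T := le_trans (min_le_left _ _) hr.2.le
  have h1 : ∫ u in Ioc (0 : ℝ) T, G (r, u) * G (s, u)
      = ∫ u in Ioc (0 : ℝ) T, Set.indicator (Ioc 0 (min r s)) (fun u => K' r u * K' s u) u := by
    apply MeasureTheory.integral_congr_ae
    filter_upwards [VIF.ae_Ioo 0 T, VIF.ae_ne (Ioc 0 T) (min r s)] with u hu hne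
    rw [hGif (r, u), hGif (s, u)]
    rcases lt_or_gt_of_ne hne with hlt | hgt
    · have h2 : u < r := lt_of_lt_of_le hlt (min_le_left _ _)
      have h3 : u < s := lt_of_lt_of_le hlt (min_le_right _ _)
      have hmem : u ∈ Ioc (0 : ℝ) (min r s) := ⟨hu.1, hlt.le⟩
      rw [if_pos (show 0 < (r, u).2 ∧ (r, u).2 < (r, u).1 ∧ (r, u).1 < T from
          ⟨hu.1, h2, hr.2⟩),
        if_pos (show 0 < (s, u).2 ∧ (s, u).2 < (s, u).1 ∧ (s, u).1 < T from
          ⟨hu.1, h3, hs.2⟩),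
        Set.indicator_of_mem hmem]
    · have hnotin : u ∉ Ioc (0 : ℝ) (min r s) := fun h => absurd h.2 (not_le.mpr hgt)
      rw [Set.indicator_of_notMem hnotin]
      rcases le_total r s with h | h
      · rw [min_eq_left h] at hgt
        rw [if_neg (show ¬(0 < (r, u).2 ∧ (r, u).2 < (r, u).1 ∧ (r, u).1 < T) from
          fun hh => absurd hh.2.1 (not_lt.mpr hgt.le)), zero_mul]
      · rw [min_eq_right h] at hgt
        rw [if_neg (show ¬(0 < (s, u).2 ∧ (s, u).2 < (s, u).1 ∧ (s, u).1 < T) from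
          fun hh => absurd hh.2.1 (not_lt.mpr hgt.le)), mul_zero]
  rw [intervalIntegral.integral_of_le hm0, h1,
    MeasureTheory.integral_indicator measurableSet_Ioc,
    Measure.restrict_restrict measurableSet_Ioc,
    Set.inter_eq_left.mpr (Ioc_subset_Ioc le_rfl hmT)]

end VIF2

end VIFHelpers

/-- For a Volterra kernel `K` satisfying (H1)-(H2) with derivative
`K' = ∂K/∂t`, and bounded measurable `a, b : [0,T] → ℝ`, all the integrals converge
absolutely and
`∫_0^T (∫_t^T a_r K'(r,t) dr)(∫_t^T b_s K'(s,t) ds) dt = ∫_0^T ∫_0^T φ(r,s) a_r b_s ds dr`,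
where `φ(r,s) = ∫_0^{min(r,s)} K'(r,u) K'(s,u) du`. -/
theorem volterra_inner_product_fubini
    (T : ℝ) (hT : 0 < T) (K K' : ℝ → ℝ → ℝ)
    (hVol : ∀ t s : ℝ, t < s → K t s = 0)
    (hKcont : ContinuousOn (fun p : ℝ × ℝ => K p.1 p.2)
      {p : ℝ × ℝ | 0 < p.2 ∧ p.2 ≤ p.1 ∧ p.1 < T})
    (hK' : ∀ s t : ℝ, 0 < s → s < t → t < T → HasDerivAt (fun τ => K τ s) (K' t s) t)
    (hK'cont : ContinuousOn (fun p : ℝ × ℝ => K' p.1 p.2)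
      {p : ℝ × ℝ | 0 < p.2 ∧ p.2 < p.1 ∧ p.1 < T})
    (α β c : ℝ) (hα : 0 < α) (hα' : α < 1 / 2) (hβ : 0 < β) (hβ' : β < 1 / 2)
    (hc : 0 < c)
    (hH2 : ∀ s t : ℝ, 0 < s → s < t → t < T →
      |K' t s| ≤ c * (t - s) ^ (α - 1) * (t / s) ^ β)
    (a b : ℝ → ℝ) (ha : Measurable a) (hb : Measurable b)
    (Ca Cb : ℝ) (haB : ∀ t ∈ Set.Icc (0 : ℝ) T, |a t| ≤ Ca)
    (hbB : ∀ t ∈ Set.Icc (0 : ℝ) T, |b t| ≤ Cb) :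
    (∀ t ∈ Set.Ioo (0 : ℝ) T,
        IntervalIntegrable (fun r => a r * K' r t) MeasureTheory.volume t T ∧
        IntervalIntegrable (fun s => b s * K' s t) MeasureTheory.volume t T) ∧
    IntervalIntegrable
      (fun t => (∫ r in t..T, a r * K' r t) * (∫ s in t..T, b s * K' s t))
      MeasureTheory.volume 0 T ∧
    (∀ r ∈ Set.Ioo (0 : ℝ) T, ∀ s ∈ Set.Ioo (0 : ℝ) T, r ≠ s →
        IntervalIntegrable (fun u => K' r u * K' s u) MeasureTheory.volume 0 (min r s)) ∧
    (∀ r ∈ Set.Ioo (0 : ℝ) T,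
        IntervalIntegrable
          (fun s => (∫ u in (0 : ℝ)..(min r s), K' r u * K' s u) * a r * b s)
          MeasureTheory.volume 0 T) ∧
    IntervalIntegrable
      (fun r => ∫ s in (0 : ℝ)..T, (∫ u in (0 : ℝ)..(min r s), K' r u * K' s u) * a r * b s)
      MeasureTheory.volume 0 T ∧
    (∫ t in (0 : ℝ)..T, (∫ r in t..T, a r * K' r t) * (∫ s in t..T, b s * K' s t))
      = ∫ r in (0 : ℝ)..T, ∫ s in (0 : ℝ)..T,
          (∫ u in (0 : ℝ)..(min r s), K' r u * K' s u) * a r * b s := by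
  classical
  have hSopen : IsOpen {q : ℝ × ℝ | 0 < q.2 ∧ q.2 < q.1 ∧ q.1 < T} := by
    have he : {q : ℝ × ℝ | 0 < q.2 ∧ q.2 < q.1 ∧ q.1 < T}
        = {q : ℝ × ℝ | 0 < q.2} ∩ {q : ℝ × ℝ | q.2 < q.1} ∩ {q : ℝ × ℝ | q.1 < T} := by
      ext q
      simp only [Set.mem_setOf_eq, Set.mem_inter_iff]
      tauto
    rw [he]
    exact ((isOpen_lt continuous_const continuous_snd).inter
      (isOpen_lt continuous_snd continuous_fst)).inter
      (isOpen_lt continuous_fst continuous_const)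
  set G : ℝ × ℝ → ℝ :=
    Set.indicator {q : ℝ × ℝ | 0 < q.2 ∧ q.2 < q.1 ∧ q.1 < T}
      (fun p => K' p.1 p.2) with hGdef
  have hGm : Measurable G := VIF.measG hSopen hK'cont
  have hGif : ∀ p : ℝ × ℝ, G p = if 0 < p.2 ∧ p.2 < p.1 ∧ p.1 < T then K' p.1 p.2 else 0 := by
    intro p
    rw [hGdef]
    simp [Set.indicator_apply, Set.mem_setOf_eq]
  set κ : ℝ := c * T ^ β with hκdef
  have hκ : 0 ≤ κ := mul_nonneg hc.le (Real.rpow_nonneg hT.le _)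
  have hGb : ∀ p : ℝ × ℝ, |G p| ≤ κ * Set.indicator {q : ℝ × ℝ | 0 < q.2 ∧ q.2 < q.1 ∧ q.1 < T}
      (fun q => (q.1 - q.2) ^ (α - 1) * q.2 ^ (-β)) p := by
    intro p
    by_cases hp : p ∈ {q : ℝ × ℝ | 0 < q.2 ∧ q.2 < q.1 ∧ q.1 < T}
    · rw [hGdef, Set.indicator_of_mem hp, Set.indicator_of_mem hp]
      obtain ⟨h1, h2, h3⟩ := id hp
      have hb2 := hH2 p.2 p.1 h1 h2 h3
      have h4 : (p.1 / p.2) ^ β ≤ (T / p.2) ^ β := by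
        apply Real.rpow_le_rpow (div_nonneg (by linarith) h1.le) _ hβ.le
        rw [div_eq_mul_inv, div_eq_mul_inv]
        exact mul_le_mul_of_nonneg_right h3.le (inv_nonneg.mpr h1.le)
      have h5 : (T / p.2) ^ β = T ^ β * p.2 ^ (-β) := by
        rw [Real.div_rpow hT.le h1.le, Real.rpow_neg h1.le, div_eq_mul_inv]
      calc |K' p.1 p.2| ≤ c * (p.1 - p.2) ^ (α - 1) * (p.1 / p.2) ^ β := hb2
        _ ≤ c * (p.1 - p.2) ^ (α - 1) * (T / p.2) ^ β :=
            mul_le_mul_of_nonneg_left h4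
              (mul_nonneg hc.le (Real.rpow_nonneg (by linarith) _))
        _ = κ * ((p.1 - p.2) ^ (α - 1) * p.2 ^ (-β)) := by rw [h5, hκdef]; ring
    · rw [hGdef, Set.indicator_of_notMem hp, Set.indicator_of_notMem hp, mul_zero, abs_zero]
  have hCa0 : 0 ≤ Ca := le_trans (abs_nonneg _) (haB T ⟨hT.le, le_rfl⟩)
  have hCb0 : 0 ≤ Cb := le_trans (abs_nonneg _) (hbB T ⟨hT.le, le_rfl⟩)
  have hAa : ∀ u ∈ Set.Ioo (0 : ℝ) T,
      Integrable (fun r => a r * G (r, u)) (volume.restrict (Set.Ioc (0 : ℝ) T)) ∧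
        ∫ r in Set.Ioc (0 : ℝ) T, ‖a r * G (r, u)‖ ≤ Ca * κ * (T ^ α / α) * u ^ (-β) :=
    fun u hu => VIF2.A hT hα hβ hκ hGm hGb ha hCa0 haB hu
  have hAb : ∀ u ∈ Set.Ioo (0 : ℝ) T,
      Integrable (fun s => b s * G (s, u)) (volume.restrict (Set.Ioc (0 : ℝ) T)) ∧
        ∫ s in Set.Ioc (0 : ℝ) T, ‖b s * G (s, u)‖ ≤ Cb * κ * (T ^ α / α) * u ^ (-β) :=
    fun u hu => VIF2.A hT hα hβ hκ hGm hGb hb hCb0 hbB hu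
  -- Part 1
  have part1 : ∀ t ∈ Set.Ioo (0 : ℝ) T,
      IntervalIntegrable (fun r => a r * K' r t) MeasureTheory.volume t T ∧
      IntervalIntegrable (fun s => b s * K' s t) MeasureTheory.volume t T := by
    intro t ht
    have key : ∀ f : ℝ → ℝ, Integrable (fun r => f r * G (r, t)) (volume.restrict (Set.Ioc (0 : ℝ) T)) →
        IntervalIntegrable (fun r => f r * K' r t) MeasureTheory.volume t T := by
      intro f hint
      rw [intervalIntegrable_iff, Set.uIoc_of_le ht.2.le]
      have h1 : IntegrableOn (fun r => f r * G (r, t)) (Set.Ioc t T) volume :=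
        MeasureTheory.IntegrableOn.mono_set hint (Set.Ioc_subset_Ioc ht.1.le le_rfl)
      apply Integrable.congr h1
      filter_upwards [VIF.ae_Ioo t T] with r hr
      rw [hGif (r, t),
        if_pos (show 0 < (r, t).2 ∧ (r, t).2 < (r, t).1 ∧ (r, t).1 < T from
          ⟨ht.1, hr.1, hr.2⟩)]
    exact ⟨key a (hAa t ht).1, key b (hAb t ht).1⟩
  -- the big kernel on the triple product space
  set F : ℝ → ℝ × ℝ → ℝ :=
    fun u p => a p.1 * G (p.1, u) * (b p.2 * G (p.2, u)) with hFdef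
  have hFm : Measurable (Function.uncurry F) := by
    have h : Function.uncurry F = fun z : ℝ × (ℝ × ℝ) =>
        a z.2.1 * G (z.2.1, z.1) * (b z.2.2 * G (z.2.2, z.1)) := rfl
    rw [h]
    exact (((ha.comp (measurable_fst.comp measurable_snd)).mul
        (hGm.comp ((measurable_fst.comp measurable_snd).prodMk measurable_fst)))).mul
      ((hb.comp (measurable_snd.comp measurable_snd)).mul
        (hGm.comp ((measurable_snd.comp measurable_snd).prodMk measurable_fst)))
  have hF : Integrable (Function.uncurry F) ((volume.restrict (Set.Ioc (0 : ℝ) T)).prod ((volume.restrict (Set.Ioc (0 : ℝ) T)).prod (volume.restrict (Set.Ioc (0 : ℝ) T)))) := by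
    refine (integrable_prod_iff hFm.aestronglyMeasurable).mpr ⟨?_, ?_⟩
    · filter_upwards [VIF.ae_Ioo 0 T] with u hu
      exact ((hAa u hu).1).mul_prod ((hAb u hu).1)
    · apply Integrable.mono'
        (g := fun u => Ca * κ * (T ^ α / α) * (Cb * κ * (T ^ α / α)) * (u ^ (-β) * u ^ (-β)))
      · have hi : Integrable (fun u : ℝ => u ^ (-(β + β))) (volume.restrict (Set.Ioc (0 : ℝ) T)) :=
          VIF.rpow_Ioc (by linarith) hT.le
        have hi2 : Integrable (fun u : ℝ => u ^ (-β) * u ^ (-β)) (volume.restrict (Set.Ioc (0 : ℝ) T)) := by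
          apply hi.congr
          filter_upwards [VIF.ae_Ioo 0 T] with u hu
          rw [show -(β + β) = -β + -β from by ring, Real.rpow_add hu.1]
        exact hi2.const_mul _
      · exact hFm.norm.aestronglyMeasurable.integral_prod_right'
      · filter_upwards [VIF.ae_Ioo 0 T] with u hu
        have e1 : (∫ p, ‖Function.uncurry F (u, p)‖ ∂((volume.restrict (Set.Ioc (0 : ℝ) T)).prod (volume.restrict (Set.Ioc (0 : ℝ) T))))
            = (∫ r, ‖a r * G (r, u)‖ ∂(volume.restrict (Set.Ioc (0 : ℝ) T))) * ∫ s, ‖b s * G (s, u)‖ ∂(volume.restrict (Set.Ioc (0 : ℝ) T)) := by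
          rw [← integral_prod_mul (μ := (volume.restrict (Set.Ioc (0 : ℝ) T))) (ν := (volume.restrict (Set.Ioc (0 : ℝ) T))) (f := fun r => ‖a r * G (r, u)‖)
            (g := fun s => ‖b s * G (s, u)‖)]
          exact MeasureTheory.integral_congr_ae (ae_of_all _ fun p => norm_mul _ _)
        rw [Real.norm_eq_abs,
          abs_of_nonneg (MeasureTheory.integral_nonneg fun p => norm_nonneg _), e1]
        have hnn2 : (0 : ℝ) ≤ ∫ s, ‖b s * G (s, u)‖ ∂(volume.restrict (Set.Ioc (0 : ℝ) T)) :=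
          MeasureTheory.integral_nonneg fun s => norm_nonneg _
        have hnn3 : (0 : ℝ) ≤ Ca * κ * (T ^ α / α) * u ^ (-β) := by
          have : (0 : ℝ) ≤ T ^ α / α :=
            div_nonneg (Real.rpow_nonneg hT.le _) hα.le
          exact mul_nonneg (mul_nonneg (mul_nonneg hCa0 hκ) this)
            (Real.rpow_nonneg hu.1.le _)
        calc (∫ r, ‖a r * G (r, u)‖ ∂(volume.restrict (Set.Ioc (0 : ℝ) T))) * ∫ s, ‖b s * G (s, u)‖ ∂(volume.restrict (Set.Ioc (0 : ℝ) T))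
            ≤ (Ca * κ * (T ^ α / α) * u ^ (-β)) * (Cb * κ * (T ^ α / α) * u ^ (-β)) :=
              mul_le_mul (hAa u hu).2 (hAb u hu).2 hnn2 hnn3
          _ = Ca * κ * (T ^ α / α) * (Cb * κ * (T ^ α / α)) * (u ^ (-β) * u ^ (-β)) := by
              ring
  have hM1 : Integrable (fun u => ∫ p, Function.uncurry F (u, p) ∂((volume.restrict (Set.Ioc (0 : ℝ) T)).prod (volume.restrict (Set.Ioc (0 : ℝ) T)))) (volume.restrict (Set.Ioc (0 : ℝ) T)) :=
    hF.integral_prod_left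
  have hM2 : Integrable (fun p : ℝ × ℝ => ∫ u, Function.uncurry F (u, p) ∂(volume.restrict (Set.Ioc (0 : ℝ) T)))
      ((volume.restrict (Set.Ioc (0 : ℝ) T)).prod (volume.restrict (Set.Ioc (0 : ℝ) T))) := by
    have h := hF.swap.integral_prod_left
    exact h
  have hProd : ∀ t : ℝ, (∫ p, Function.uncurry F (t, p) ∂((volume.restrict (Set.Ioc (0 : ℝ) T)).prod (volume.restrict (Set.Ioc (0 : ℝ) T))))
      = (∫ r, a r * G (r, t) ∂(volume.restrict (Set.Ioc (0 : ℝ) T))) * ∫ s, b s * G (s, t) ∂(volume.restrict (Set.Ioc (0 : ℝ) T)) :=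
    fun t => integral_prod_mul (fun r => a r * G (r, t)) (fun s => b s * G (s, t))
  have hC_a : ∀ t ∈ Set.Ioo (0 : ℝ) T,
      (∫ r in t..T, a r * K' r t) = ∫ r, a r * G (r, t) ∂(volume.restrict (Set.Ioc (0 : ℝ) T)) :=
    fun t ht => VIF2.C hGif a ht
  have hC_b : ∀ t ∈ Set.Ioo (0 : ℝ) T,
      (∫ s in t..T, b s * K' s t) = ∫ s, b s * G (s, t) ∂(volume.restrict (Set.Ioc (0 : ℝ) T)) :=
    fun t ht => VIF2.C hGif b ht
  -- Part 2
  have part2 : IntervalIntegrable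
      (fun t => (∫ r in t..T, a r * K' r t) * (∫ s in t..T, b s * K' s t))
      MeasureTheory.volume 0 T := by
    rw [intervalIntegrable_iff, Set.uIoc_of_le hT.le]
    apply Integrable.congr hM1
    filter_upwards [VIF.ae_Ioo 0 T] with t ht
    rw [hProd t, ← hC_a t ht, ← hC_b t ht]
  -- Part 3
  have part3 : ∀ r ∈ Set.Ioo (0 : ℝ) T, ∀ s ∈ Set.Ioo (0 : ℝ) T, r ≠ s →
      IntervalIntegrable (fun u => K' r u * K' s u) MeasureTheory.volume 0 (min r s) := by
    intro r hr s hs hne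
    have hmin0 : (0 : ℝ) ≤ min r s := le_min hr.1.le hs.1.le
    rw [intervalIntegrable_iff, Set.uIoc_of_le hmin0]
    have hB1 : Integrable (fun u => G (r, u) * G (s, u)) (volume.restrict (Set.Ioc (0 : ℝ) T)) := by
      rcases lt_or_gt_of_ne hne with h | h
      · exact VIF2.B1 hT hα (by linarith) hβ hβ' hκ hGm hGb hr hs h
      · have h2 := VIF2.B1 hT hα (by linarith) hβ hβ' hκ hGm hGb hs hr h
        exact h2.congr (ae_of_all _ fun u => mul_comm _ _)
    have hsub : IntegrableOn (fun u => G (r, u) * G (s, u)) (Set.Ioc 0 (min r s)) volume :=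
      MeasureTheory.IntegrableOn.mono_set hB1
        (Set.Ioc_subset_Ioc le_rfl (le_trans (min_le_left _ _) hr.2.le))
    apply Integrable.congr hsub
    filter_upwards [VIF.ae_Ioo 0 (min r s)] with u hu
    have h2 : u < r := lt_of_lt_of_le hu.2 (min_le_left _ _)
    have h3 : u < s := lt_of_lt_of_le hu.2 (min_le_right _ _)
    rw [hGif (r, u), hGif (s, u),
      if_pos (show 0 < (r, u).2 ∧ (r, u).2 < (r, u).1 ∧ (r, u).1 < T from ⟨hu.1, h2, hr.2⟩),
      if_pos (show 0 < (s, u).2 ∧ (s, u).2 < (s, u).1 ∧ (s, u).1 < T from ⟨hu.1, h3, hs.2⟩)]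
  -- Part 4
  have part4 : ∀ r ∈ Set.Ioo (0 : ℝ) T,
      IntervalIntegrable
        (fun s => (∫ u in (0 : ℝ)..(min r s), K' r u * K' s u) * a r * b s)
        MeasureTheory.volume 0 T := by
    intro r hr
    rw [intervalIntegrable_iff, Set.uIoc_of_le hT.le]
    have hm4 : Measurable fun z : ℝ × ℝ => a r * G (r, z.1) * (b z.2 * G (z.2, z.1)) :=
      ((measurable_const.mul (hGm.comp (measurable_const.prodMk measurable_fst)))).mul
        ((hb.comp measurable_snd).mul (hGm.comp (measurable_snd.prodMk measurable_fst)))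
    have hF2 : Integrable (fun z : ℝ × ℝ => a r * G (r, z.1) * (b z.2 * G (z.2, z.1)))
        ((volume.restrict (Set.Ioc (0 : ℝ) T)).prod (volume.restrict (Set.Ioc (0 : ℝ) T))) := by
      refine (integrable_prod_iff hm4.aestronglyMeasurable).mpr ⟨?_, ?_⟩
      · filter_upwards [VIF.ae_Ioo 0 T] with u hu
        exact ((hAb u hu).1).const_mul _
      · apply Integrable.mono'
          (g := fun u => Ca * κ * (Cb * κ * (T ^ α / α)) *
            Set.indicator (Set.Ioc 0 r) (fun u => u ^ (-β) * u ^ (-β) * (r - u) ^ (α - 1)) u)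
        · exact (((VIF.L3 hβ hβ' (by linarith) (by linarith) hr.1).integrable_indicator
            measurableSet_Ioc).restrict).const_mul _
        · exact hm4.norm.aestronglyMeasurable.integral_prod_right'
        · filter_upwards [VIF.ae_Ioo 0 T] with u hu
          have e2 : (∫ s, ‖a r * G (r, u) * (b s * G (s, u))‖ ∂(volume.restrict (Set.Ioc (0 : ℝ) T)))
              = ‖a r * G (r, u)‖ * ∫ s, ‖b s * G (s, u)‖ ∂(volume.restrict (Set.Ioc (0 : ℝ) T)) := by
            simp_rw [norm_mul]
            exact integral_const_mul _ _
          rw [Real.norm_eq_abs,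
            abs_of_nonneg (MeasureTheory.integral_nonneg fun s => norm_nonneg _), e2]
          by_cases hur : u < r
          · have hmem : (r, u) ∈ {q : ℝ × ℝ | 0 < q.2 ∧ q.2 < q.1 ∧ q.1 < T} :=
              ⟨hu.1, hur, hr.2⟩
            have hg := hGb (r, u)
            rw [Set.indicator_of_mem hmem] at hg
            have hg' : |G (r, u)| ≤ κ * ((r - u) ^ (α - 1) * u ^ (-β)) := hg
            have h1 : ‖a r * G (r, u)‖ ≤ Ca * (κ * ((r - u) ^ (α - 1) * u ^ (-β))) := by
              rw [Real.norm_eq_abs, abs_mul]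
              exact mul_le_mul (haB r ⟨le_of_lt (lt_trans hu.1 hur), hr.2.le⟩) hg'
                (abs_nonneg _) hCa0
            have h2 := (hAb u hu).2
            have hmemI : u ∈ Set.Ioc (0 : ℝ) r := ⟨hu.1, hur.le⟩
            rw [Set.indicator_of_mem hmemI]
            have hnnc : (0 : ℝ) ≤ Ca * (κ * ((r - u) ^ (α - 1) * u ^ (-β))) :=
              mul_nonneg hCa0 (mul_nonneg hκ (mul_nonneg
                (Real.rpow_nonneg (by linarith) _) (Real.rpow_nonneg hu.1.le _)))
            calc ‖a r * G (r, u)‖ * ∫ s, ‖b s * G (s, u)‖ ∂(volume.restrict (Set.Ioc (0 : ℝ) T))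
                ≤ (Ca * (κ * ((r - u) ^ (α - 1) * u ^ (-β)))) *
                  (Cb * κ * (T ^ α / α) * u ^ (-β)) :=
                  mul_le_mul h1 h2 (MeasureTheory.integral_nonneg fun s => norm_nonneg _) hnnc
              _ = Ca * κ * (Cb * κ * (T ^ α / α)) *
                  (u ^ (-β) * u ^ (-β) * (r - u) ^ (α - 1)) := by ring
          · have hG0 : G (r, u) = 0 := by
              rw [hGif (r, u)]
              exact if_neg fun h => hur h.2.1
            rw [hG0, mul_zero, norm_zero, zero_mul]
            apply mul_nonneg
            · apply mul_nonneg (mul_nonneg hCa0 hκ)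
              apply mul_nonneg (mul_nonneg hCb0 hκ)
              exact div_nonneg (Real.rpow_nonneg hT.le _) hα.le
            · apply Set.indicator_nonneg
              intro x hx
              exact mul_nonneg (mul_nonneg (Real.rpow_nonneg hx.1.le _)
                (Real.rpow_nonneg hx.1.le _))
                (Real.rpow_nonneg (by linarith [hx.2] : (0 : ℝ) ≤ r - x) _)
    apply Integrable.congr hF2.integral_prod_right
    filter_upwards [VIF.ae_Ioo 0 T] with s hs
    have h : (fun u => a r * G (r, u) * (b s * G (s, u)))
        = fun u => a r * b s * (G (r, u) * G (s, u)) := by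
      funext u
      ring
    show (∫ u, a r * G (r, u) * (b s * G (s, u)) ∂(volume.restrict (Set.Ioc (0 : ℝ) T))) = _
    rw [h, MeasureTheory.integral_const_mul, ← VIF2.B2 hGif hr hs]
    ring
  -- pointwise identification of the inner integral
  have inner_eq : ∀ r' s' : ℝ, r' ∈ Set.Ioo (0 : ℝ) T → s' ∈ Set.Ioo (0 : ℝ) T →
      (∫ u, Function.uncurry F (u, (r', s')) ∂(volume.restrict (Set.Ioc (0 : ℝ) T)))
        = (∫ u in (0 : ℝ)..(min r' s'), K' r' u * K' s' u) * a r' * b s' := by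
    intro r' s' hr' hs'
    have h : (fun u => Function.uncurry F (u, (r', s')))
        = fun u => a r' * b s' * (G (r', u) * G (s', u)) := by
      funext u
      show a r' * G (r', u) * (b s' * G (s', u)) = _
      ring
    rw [h, MeasureTheory.integral_const_mul, ← VIF2.B2 hGif hr' hs']
    ring
  -- Part 5
  have part5 : IntervalIntegrable
      (fun r => ∫ s in (0 : ℝ)..T, (∫ u in (0 : ℝ)..(min r s), K' r u * K' s u) * a r * b s)
      MeasureTheory.volume 0 T := by
    rw [intervalIntegrable_iff, Set.uIoc_of_le hT.le]
    apply Integrable.congr hM2.integral_prod_left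
    filter_upwards [VIF.ae_Ioo 0 T] with r hr
    rw [intervalIntegral.integral_of_le hT.le]
    apply MeasureTheory.integral_congr_ae
    filter_upwards [VIF.ae_Ioo 0 T] with s hs
    exact inner_eq r s hr hs
  -- Final equality
  have main : (∫ t in (0 : ℝ)..T, (∫ r in t..T, a r * K' r t) * (∫ s in t..T, b s * K' s t))
      = ∫ r in (0 : ℝ)..T, ∫ s in (0 : ℝ)..T,
          (∫ u in (0 : ℝ)..(min r s), K' r u * K' s u) * a r * b s := by
    have L : (∫ t in Set.Ioc (0 : ℝ) T,
          (∫ r in t..T, a r * K' r t) * (∫ s in t..T, b s * K' s t))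
        = ∫ x, ∫ y, (∫ u, Function.uncurry F (u, (x, y)) ∂(volume.restrict (Set.Ioc (0 : ℝ) T))) ∂(volume.restrict (Set.Ioc (0 : ℝ) T)) ∂(volume.restrict (Set.Ioc (0 : ℝ) T)) := by
      calc (∫ t in Set.Ioc (0 : ℝ) T,
            (∫ r in t..T, a r * K' r t) * (∫ s in t..T, b s * K' s t))
          = ∫ t, (∫ p, Function.uncurry F (t, p) ∂((volume.restrict (Set.Ioc (0 : ℝ) T)).prod (volume.restrict (Set.Ioc (0 : ℝ) T)))) ∂(volume.restrict (Set.Ioc (0 : ℝ) T)) := by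
            apply MeasureTheory.integral_congr_ae
            filter_upwards [VIF.ae_Ioo 0 T] with t ht
            rw [hC_a t ht, hC_b t ht]
            exact (hProd t).symm
        _ = ∫ p, (∫ t, Function.uncurry F (t, p) ∂(volume.restrict (Set.Ioc (0 : ℝ) T))) ∂((volume.restrict (Set.Ioc (0 : ℝ) T)).prod (volume.restrict (Set.Ioc (0 : ℝ) T))) :=
            MeasureTheory.integral_integral_swap hF
        _ = ∫ x, ∫ y, (∫ u, Function.uncurry F (u, (x, y)) ∂(volume.restrict (Set.Ioc (0 : ℝ) T))) ∂(volume.restrict (Set.Ioc (0 : ℝ) T)) ∂(volume.restrict (Set.Ioc (0 : ℝ) T)) :=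
            MeasureTheory.integral_prod _ hM2
    have R : (∫ r in Set.Ioc (0 : ℝ) T, ∫ s in (0 : ℝ)..T,
          (∫ u in (0 : ℝ)..(min r s), K' r u * K' s u) * a r * b s)
        = ∫ x, ∫ y, (∫ u, Function.uncurry F (u, (x, y)) ∂(volume.restrict (Set.Ioc (0 : ℝ) T))) ∂(volume.restrict (Set.Ioc (0 : ℝ) T)) ∂(volume.restrict (Set.Ioc (0 : ℝ) T)) := by
      apply MeasureTheory.integral_congr_ae
      filter_upwards [VIF.ae_Ioo 0 T] with r hr
      rw [intervalIntegral.integral_of_le hT.le]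
      apply MeasureTheory.integral_congr_ae
      filter_upwards [VIF.ae_Ioo 0 T] with s hs
      exact (inner_eq r s hr hs).symm
    rw [intervalIntegral.integral_of_le hT.le, intervalIntegral.integral_of_le hT.le, L, R]
  exact ⟨part1, part2, part3, part4, part5, main⟩
end

section
/- For every bounded measurable function a : [0,T] → ℝ, all the integrals below converge and ∫_0^T ( ∫_t^T |a_r| |(∂K/∂t)(r,t)| dr )² dt = 2 ∫_0^T ∫_0^r φ̃(r,s) |a_r| |a_s| ds dr. -/
open Real MeasureTheory intervalIntegral Set
open scoped ENNReal

lemma myIntegralRpow {p b : ℝ} (hp : -1 < p) :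
    ∫ u in (0:ℝ)..b, u ^ p = b ^ (p+1) / (p+1) := by
  rw [integral_rpow (Or.inl hp), Real.zero_rpow (by linarith : p+1 ≠ 0), sub_zero]

lemma betaAux (p q m : ℝ) (hp : -1 < p) (hq : -1 < q) (hm : 0 < m) :
    IntervalIntegrable (fun u => u ^ p * (m - u) ^ q) volume 0 m ∧
    ∫ u in (0:ℝ)..m, u ^ p * (m - u) ^ q ≤
      (((2:ℝ)^(-q) + 1) * ((2:ℝ)^(-(p+1)) / (p+1)) +
        ((2:ℝ)^(-p) + 1) * ((2:ℝ)^(-(q+1)) / (q+1))) * m ^ (p+q+1) := by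
  have hm2 : 0 < m/2 := by linarith
  have hmf : Measurable fun u : ℝ => u ^ p * (m - u) ^ q :=
    (measurable_id.pow measurable_const).mul
      ((measurable_const.sub measurable_id).pow measurable_const)
  have hCq : ∀ u ∈ Set.Icc (0:ℝ) (m/2), (m - u) ^ q ≤ ((2:ℝ)^(-q) + 1) * m ^ q := by
    intro u hu
    have h1 : m/2 ≤ m - u := by have := hu.2; linarith
    have h2 : m - u ≤ m := by have := hu.1; linarith
    have hmq : (0:ℝ) ≤ m ^ q := Real.rpow_nonneg hm.le q
    rcases le_or_gt 0 q with h | h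
    · have : (m - u) ^ q ≤ m ^ q := Real.rpow_le_rpow (by linarith) h2 h
      nlinarith [Real.rpow_nonneg (by norm_num : (0:ℝ) ≤ 2) (-q)]
    · have h3 : (m - u) ^ q ≤ (m/2) ^ q :=
        Real.rpow_le_rpow_of_nonpos hm2 h1 h.le
      have h4 : (m/2) ^ q = (2:ℝ)^(-q) * m ^ q := by
        rw [div_rpow hm.le (by norm_num), Real.rpow_neg (by norm_num)]
        ring
      nlinarith
  have hCp : ∀ u ∈ Set.Icc (m/2) m, u ^ p ≤ ((2:ℝ)^(-p) + 1) * m ^ p := by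
    intro u hu
    have hmp : (0:ℝ) ≤ m ^ p := Real.rpow_nonneg hm.le p
    rcases le_or_gt 0 p with h | h
    · have : u ^ p ≤ m ^ p := Real.rpow_le_rpow (by linarith [hu.1]) hu.2 h
      nlinarith [Real.rpow_nonneg (by norm_num : (0:ℝ) ≤ 2) (-p)]
    · have h3 : u ^ p ≤ (m/2) ^ p :=
        Real.rpow_le_rpow_of_nonpos hm2 hu.1 h.le
      have h4 : (m/2) ^ p = (2:ℝ)^(-p) * m ^ p := by
        rw [div_rpow hm.le (by norm_num), Real.rpow_neg (by norm_num)]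
        ring
      nlinarith
  have hb1 : ∀ u ∈ Set.Icc (0:ℝ) (m/2),
      u ^ p * (m - u) ^ q ≤ (((2:ℝ)^(-q) + 1) * m ^ q) * u ^ p := by
    intro u hu
    have := hCq u hu
    have hup : (0:ℝ) ≤ u ^ p := Real.rpow_nonneg hu.1 p
    calc u ^ p * (m - u) ^ q = (m - u) ^ q * u ^ p := by ring
    _ ≤ (((2:ℝ)^(-q) + 1) * m ^ q) * u ^ p := mul_le_mul_of_nonneg_right this hup
  have hb2 : ∀ u ∈ Set.Icc (m/2) m,
      u ^ p * (m - u) ^ q ≤ (((2:ℝ)^(-p) + 1) * m ^ p) * (m - u) ^ q := by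
    intro u hu
    have hup : (0:ℝ) ≤ (m - u) ^ q := Real.rpow_nonneg (by linarith [hu.2]) q
    exact mul_le_mul_of_nonneg_right (hCp u hu) hup
  have hg1 : IntervalIntegrable (fun u : ℝ => (((2:ℝ)^(-q) + 1) * m ^ q) * u ^ p)
      volume 0 (m/2) := (intervalIntegrable_rpow' hp).const_mul _
  have hg2' : IntervalIntegrable (fun u : ℝ => (m - u) ^ q) volume (m/2) m := by
    have := (intervalIntegrable_rpow' hq (a := 0) (b := m/2)).comp_sub_left m
    have h0 : m - 0 = m := by ring
    have h1 : m - m/2 = m/2 := by ring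
    rw [h0, h1] at this
    exact this.symm
  have hg2 : IntervalIntegrable (fun u : ℝ => (((2:ℝ)^(-p) + 1) * m ^ p) * (m - u) ^ q)
      volume (m/2) m := hg2'.const_mul _
  have I1 : IntervalIntegrable (fun u => u ^ p * (m - u) ^ q) volume 0 (m/2) := by
    apply hg1.mono_fun hmf.aestronglyMeasurable
    filter_upwards [ae_restrict_mem measurableSet_uIoc] with u hu
    rw [Set.uIoc_of_le hm2.le] at hu
    have hu' : u ∈ Set.Icc (0:ℝ) (m/2) := ⟨hu.1.le, hu.2⟩
    have h1 : (0:ℝ) ≤ u ^ p * (m - u) ^ q :=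
      mul_nonneg (Real.rpow_nonneg hu'.1 p) (Real.rpow_nonneg (by linarith [hu'.2]) q)
    have h2 : (0:ℝ) ≤ (((2:ℝ)^(-q) + 1) * m ^ q) * u ^ p := le_trans h1 (hb1 u hu')
    simp only [Real.norm_eq_abs, abs_of_nonneg h1, abs_of_nonneg h2]
    exact hb1 u hu'
  have I2 : IntervalIntegrable (fun u => u ^ p * (m - u) ^ q) volume (m/2) m := by
    apply hg2.mono_fun hmf.aestronglyMeasurable
    filter_upwards [ae_restrict_mem measurableSet_uIoc] with u hu
    rw [Set.uIoc_of_le (by linarith : m/2 ≤ m)] at hu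
    have hu' : u ∈ Set.Icc (m/2) m := ⟨hu.1.le, hu.2⟩
    have h1 : (0:ℝ) ≤ u ^ p * (m - u) ^ q :=
      mul_nonneg (Real.rpow_nonneg (by linarith [hu'.1]) p)
        (Real.rpow_nonneg (by linarith [hu'.2]) q)
    have h2 : (0:ℝ) ≤ (((2:ℝ)^(-p) + 1) * m ^ p) * (m - u) ^ q := le_trans h1 (hb2 u hu')
    simp only [Real.norm_eq_abs, abs_of_nonneg h1, abs_of_nonneg h2]
    exact hb2 u hu'
  refine ⟨I1.trans I2, ?_⟩
  rw [← integral_add_adjacent_intervals I1 I2]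
  have e1 : ∫ u in (0:ℝ)..(m/2), (((2:ℝ)^(-q) + 1) * m ^ q) * u ^ p
      = (((2:ℝ)^(-q) + 1) * m ^ q) * ((m/2) ^ (p+1) / (p+1)) := by
    rw [intervalIntegral.integral_const_mul, myIntegralRpow hp]
  have e2 : ∫ u in (m/2)..m, (((2:ℝ)^(-p) + 1) * m ^ p) * (m - u) ^ q
      = (((2:ℝ)^(-p) + 1) * m ^ p) * ((m/2) ^ (q+1) / (q+1)) := by
    rw [intervalIntegral.integral_const_mul]
    congr 1
    have : ∫ u in (m/2)..m, (m - u) ^ q = ∫ u in (m - m)..(m - m/2), u ^ q :=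
      intervalIntegral.integral_comp_sub_left (fun v => v ^ q) m
    rw [this, sub_self, (by ring : m - m/2 = m/2), myIntegralRpow hq]
  have t1 : ∫ u in (0:ℝ)..(m/2), u ^ p * (m - u) ^ q
      ≤ (((2:ℝ)^(-q) + 1) * m ^ q) * ((m/2) ^ (p+1) / (p+1)) := by
    rw [← e1]
    exact intervalIntegral.integral_mono_on hm2.le I1 hg1 hb1
  have t2 : ∫ u in (m/2)..m, u ^ p * (m - u) ^ q
      ≤ (((2:ℝ)^(-p) + 1) * m ^ p) * ((m/2) ^ (q+1) / (q+1)) := by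
    rw [← e2]
    exact intervalIntegral.integral_mono_on (by linarith) I2 hg2 hb2
  have halg1 : (m/2) ^ (p+1) = (2:ℝ)^(-(p+1)) * m ^ (p+1) := by
    rw [div_rpow hm.le (by norm_num), Real.rpow_neg (by norm_num)]; ring
  have halg2 : (m/2) ^ (q+1) = (2:ℝ)^(-(q+1)) * m ^ (q+1) := by
    rw [div_rpow hm.le (by norm_num), Real.rpow_neg (by norm_num)]; ring
  have hm1 : m ^ q * m ^ (p+1) = m ^ (p+q+1) := by
    rw [← Real.rpow_add hm]; ring_nf
  have hm2' : m ^ p * m ^ (q+1) = m ^ (p+q+1) := by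
    rw [← Real.rpow_add hm]; ring_nf
  calc (∫ u in (0:ℝ)..(m/2), u ^ p * (m - u) ^ q) + ∫ u in (m/2)..m, u ^ p * (m - u) ^ q
      ≤ (((2:ℝ)^(-q) + 1) * m ^ q) * ((m/2) ^ (p+1) / (p+1))
        + (((2:ℝ)^(-p) + 1) * m ^ p) * ((m/2) ^ (q+1) / (q+1)) := add_le_add t1 t2
    _ = (((2:ℝ)^(-q) + 1) * ((2:ℝ)^(-(p+1)) / (p+1)) +
        ((2:ℝ)^(-p) + 1) * ((2:ℝ)^(-(q+1)) / (q+1))) * m ^ (p+q+1) := by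
      rw [halg1, halg2]
      linear_combination (((2:ℝ)^(-q) + 1) * ((2:ℝ)^(-(p+1)) / (p+1))) * hm1 +
        (((2:ℝ)^(-p) + 1) * ((2:ℝ)^(-(q+1)) / (q+1))) * hm2'

lemma betaPack (p q : ℝ) (hp : -1 < p) (hq : -1 < q) :
    ∃ B : ℝ, 0 ≤ B ∧ ∀ m : ℝ, 0 < m →
      IntervalIntegrable (fun u => u ^ p * (m - u) ^ q) volume 0 m ∧
      ∫ u in (0:ℝ)..m, u ^ p * (m - u) ^ q ≤ B * m ^ (p+q+1) := by
  refine ⟨_, ?_, fun m hm => ⟨(betaAux p q m hp hq hm).1, (betaAux p q m hp hq hm).2⟩⟩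
  have h1 : (0:ℝ) < p + 1 := by linarith
  have h2 : (0:ℝ) < q + 1 := by linarith
  apply add_nonneg
  · apply mul_nonneg
    · have := Real.rpow_nonneg (by norm_num : (0:ℝ) ≤ 2) (-q); linarith
    · exact div_nonneg (Real.rpow_nonneg (by norm_num) _) h1.le
  · apply mul_nonneg
    · have := Real.rpow_nonneg (by norm_num : (0:ℝ) ≤ 2) (-p); linarith
    · exact div_nonneg (Real.rpow_nonneg (by norm_num) _) h2.le

lemma lintegral_sq_expand (f : ℝ → ℝ≥0∞) (hf : Measurable f) :
    (∫⁻ x, f x) ^ 2 = ∫⁻ x, ∫⁻ y, f x * f y := by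
  have h1 : ∀ x, ∫⁻ y, f x * f y = f x * ∫⁻ y, f y := fun x =>
    lintegral_const_mul (f x) hf
  simp_rw [h1]
  rw [lintegral_mul_const _ hf, pow_two]

lemma lintegral_symm_halves (Φ : ℝ → ℝ → ℝ≥0∞)
    (hΦ : Measurable (Function.uncurry Φ))
    (hsymm : ∀ x y, Φ x y = Φ y x) :
    ∫⁻ x, ∫⁻ y, Φ x y = 2 * ∫⁻ x, ∫⁻ y in Set.Iio x, Φ x y := by
  have hind : ∀ x y, (Set.Ioi x).indicator (Φ x) y
      = (Set.Iio y).indicator (fun x' => Φ x' y) x := by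
    intro x y
    by_cases h : x < y
    · rw [Set.indicator_of_mem (Set.mem_Ioi.2 h), Set.indicator_of_mem (Set.mem_Iio.2 h)]
    · rw [Set.indicator_of_notMem (by simpa using h),
        Set.indicator_of_notMem (by simpa using h)]
  have hindmeas : Measurable (Function.uncurry fun x y => (Set.Ioi x).indicator (Φ x) y) := by
    have : (Function.uncurry fun x y => (Set.Ioi x).indicator (Φ x) y)
        = {p : ℝ × ℝ | p.1 < p.2}.indicator (Function.uncurry Φ) := by
      ext p
      simp [Function.uncurry, Set.indicator_apply, Set.mem_Ioi, Set.mem_setOf_eq]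
    rw [this]
    exact hΦ.indicator (measurableSet_lt measurable_fst measurable_snd)
  have step1 : ∀ x, ∫⁻ y, Φ x y
      = (∫⁻ y in Set.Iio x, Φ x y) + ∫⁻ y in Set.Ioi x, Φ x y := by
    intro x
    rw [← lintegral_add_compl (fun y => Φ x y) (measurableSet_Iio (a := x)), Set.compl_Iio]
    congr 1
    exact setLIntegral_congr (Ioi_ae_eq_Ici (a := x)).symm
  have step2 : ∫⁻ x, ∫⁻ y in Set.Ioi x, Φ x y = ∫⁻ x, ∫⁻ y in Set.Iio x, Φ x y := by
    have e1 : ∫⁻ x, ∫⁻ y in Set.Ioi x, Φ x y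
        = ∫⁻ x, ∫⁻ y, (Set.Ioi x).indicator (Φ x) y := by
      congr 1; ext x
      rw [lintegral_indicator measurableSet_Ioi]
    have e2 : ∫⁻ y, ∫⁻ x, (Set.Ioi x).indicator (Φ x) y
        = ∫⁻ y, ∫⁻ x in Set.Iio y, Φ x y := by
      congr 1; ext y
      simp_rw [hind]
      rw [lintegral_indicator measurableSet_Iio]
    rw [e1, lintegral_lintegral_swap hindmeas.aemeasurable, e2]
    congr 1; ext y
    congr 1; ext x
    exact hsymm x y
  calc ∫⁻ x, ∫⁻ y, Φ x y
      = ∫⁻ x, ((∫⁻ y in Set.Iio x, Φ x y) + ∫⁻ y in Set.Ioi x, Φ x y) := by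
        congr 1; ext x; exact step1 x
    _ = (∫⁻ x, ∫⁻ y in Set.Iio x, Φ x y) + ∫⁻ x, ∫⁻ y in Set.Ioi x, Φ x y := by
        apply lintegral_add_left
        have : Measurable (Function.uncurry fun x y => (Set.Iio x).indicator (Φ x) y) := by
          have h : (Function.uncurry fun x y => (Set.Iio x).indicator (Φ x) y)
              = {p : ℝ × ℝ | p.2 < p.1}.indicator (Function.uncurry Φ) := by
            ext p
            simp [Function.uncurry, Set.indicator_apply, Set.mem_Iio, Set.mem_setOf_eq]
          rw [h]
          exact hΦ.indicator (measurableSet_lt measurable_snd measurable_fst)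
        have hm := Measurable.lintegral_prod_right (ν := volume) (f := fun x y => (Set.Iio x).indicator (Φ x) y)
          this
        have h2 : (fun a => ∫⁻ y in Set.Iio a, Φ a y)
            = fun a => ∫⁻ y, (Set.Iio a).indicator (Φ a) y := by
          ext a; rw [lintegral_indicator measurableSet_Iio]
        rw [h2]; exact hm
    _ = 2 * ∫⁻ x, ∫⁻ y in Set.Iio x, Φ x y := by rw [step2, two_mul]

lemma aeNeReal (x : ℝ) : ∀ᵐ r : ℝ ∂(volume : Measure ℝ), r ≠ x := by
  rw [ae_iff]
  simp only [not_not]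
  simpa using measure_singleton (α := ℝ) (μ := volume) x

lemma integrable_of_integrableOn_of_zero {f : ℝ → ℝ} {s : Set ℝ}
    (hs : MeasurableSet s) (hint : IntegrableOn f s volume)
    (hzero : ∀ x ∉ s, f x = 0) : Integrable f volume := by
  have h : f = s.indicator f := by
    ext x
    by_cases hx : x ∈ s
    · rw [Set.indicator_of_mem hx]
    · rw [Set.indicator_of_notMem hx, hzero x hx]
  rw [h]
  exact (integrable_indicator_iff hs).2 hint

lemma integral_eq_setIntegral_of_zero {f : ℝ → ℝ} {s : Set ℝ}
    (hs : MeasurableSet s) (hzero : ∀ x ∉ s, f x = 0) :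
    ∫ x, f x ∂volume = ∫ x in s, f x ∂volume := by
  have h : f = s.indicator f := by
    ext x
    by_cases hx : x ∈ s
    · rw [Set.indicator_of_mem hx]
    · rw [Set.indicator_of_notMem hx, hzero x hx]
  conv_lhs => rw [h]
  exact integral_indicator hs

lemma lintegral_eq_setLIntegral_of_zero {g : ℝ → ℝ≥0∞} {s : Set ℝ}
    (hs : MeasurableSet s) (hzero : ∀ x ∉ s, g x = 0) :
    ∫⁻ x, g x ∂volume = ∫⁻ x in s, g x ∂volume := by
  have h : g = s.indicator g := by
    ext x
    by_cases hx : x ∈ s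
    · rw [Set.indicator_of_mem hx]
    · rw [Set.indicator_of_notMem hx, hzero x hx]
  conv_lhs => rw [h]
  exact lintegral_indicator hs g

/-- For a Volterra kernel `K` satisfying (H1)-(H2) with derivative
`K' = ∂K/∂t`, and bounded measurable `a : [0,T] → ℝ`, all the integrals converge and
`∫_0^T (∫_t^T |a_r| |K'(r,t)| dr)² dt = 2 ∫_0^T ∫_0^r φ̃(r,s) |a_r| |a_s| ds dr`,
where `φ̃(r,s) = ∫_0^{min(r,s)} |K'(r,u)| |K'(s,u)| du`. -/
theorem volterra_abs_norm_identity
    (T : ℝ) (hT : 0 < T) (K K' : ℝ → ℝ → ℝ)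
    (hVol : ∀ t s : ℝ, t < s → K t s = 0)
    (hKcont : ContinuousOn (fun p : ℝ × ℝ => K p.1 p.2)
      {p : ℝ × ℝ | 0 < p.2 ∧ p.2 ≤ p.1 ∧ p.1 < T})
    (hK' : ∀ s t : ℝ, 0 < s → s < t → t < T → HasDerivAt (fun τ => K τ s) (K' t s) t)
    (hK'cont : ContinuousOn (fun p : ℝ × ℝ => K' p.1 p.2)
      {p : ℝ × ℝ | 0 < p.2 ∧ p.2 < p.1 ∧ p.1 < T})
    (α β c : ℝ) (hα : 0 < α) (hα' : α < 1 / 2) (hβ : 0 < β) (hβ' : β < 1 / 2)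
    (hc : 0 < c)
    (hH2 : ∀ s t : ℝ, 0 < s → s < t → t < T →
      |K' t s| ≤ c * (t - s) ^ (α - 1) * (t / s) ^ β)
    (a : ℝ → ℝ) (ha : Measurable a)
    (Ca : ℝ) (haB : ∀ t ∈ Set.Icc (0 : ℝ) T, |a t| ≤ Ca) :
    (∀ t ∈ Set.Ioo (0 : ℝ) T,
        IntervalIntegrable (fun r => |a r| * |K' r t|) MeasureTheory.volume t T) ∧
    IntervalIntegrable (fun t => (∫ r in t..T, |a r| * |K' r t|) ^ 2)
      MeasureTheory.volume 0 T ∧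
    (∀ r ∈ Set.Ioo (0 : ℝ) T, ∀ s ∈ Set.Ioo (0 : ℝ) T, r ≠ s →
        IntervalIntegrable (fun u => |K' r u| * |K' s u|) MeasureTheory.volume 0 (min r s)) ∧
    (∀ r ∈ Set.Ioo (0 : ℝ) T,
        IntervalIntegrable
          (fun s => (∫ u in (0 : ℝ)..(min r s), |K' r u| * |K' s u|) * |a r| * |a s|)
          MeasureTheory.volume 0 r) ∧
    IntervalIntegrable
      (fun r => ∫ s in (0 : ℝ)..r, (∫ u in (0 : ℝ)..(min r s), |K' r u| * |K' s u|) * |a r| * |a s|)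
      MeasureTheory.volume 0 T ∧
    (∫ t in (0 : ℝ)..T, (∫ r in t..T, |a r| * |K' r t|) ^ 2)
      = 2 * ∫ r in (0 : ℝ)..T, ∫ s in (0 : ℝ)..r,
          (∫ u in (0 : ℝ)..(min r s), |K' r u| * |K' s u|) * |a r| * |a s| := by
  classical
  have hCa0 : 0 ≤ Ca := le_trans (abs_nonneg _) (haB 0 ⟨le_rfl, hT.le⟩)
  set U : Set (ℝ × ℝ) := {p : ℝ × ℝ | 0 < p.2 ∧ p.2 < p.1 ∧ p.1 < T} with hUdef
  have hUopen : IsOpen U := by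
    have h : U = (fun p : ℝ × ℝ => p.2) ⁻¹' (Set.Ioi 0) ∩
        ({p : ℝ × ℝ | p.2 < p.1} ∩ {p : ℝ × ℝ | p.1 < T}) := by
      ext p; simp only [hUdef, Set.mem_setOf_eq, Set.mem_inter_iff, Set.mem_preimage,
        Set.mem_Ioi]
    rw [h]
    exact (isOpen_Ioi.preimage continuous_snd).inter
      ((isOpen_lt continuous_snd continuous_fst).inter
        (isOpen_lt continuous_fst continuous_const))
  set Q : ℝ × ℝ → ℝ := U.indicator (fun p => |K' p.1 p.2|) with hQdef
  have hQmeas : Measurable Q := by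
    rw [hQdef, ← Set.piecewise_eq_indicator]
    exact ContinuousOn.measurable_piecewise hK'cont.abs continuousOn_const hUopen.measurableSet
  have hQnn : ∀ p, 0 ≤ Q p := fun p => Set.indicator_nonneg (fun q _ => abs_nonneg _) p
  have hQeq : ∀ {r t : ℝ}, 0 < t → t < r → r < T → Q (r, t) = |K' r t| := by
    intro r t h1 h2 h3
    exact Set.indicator_of_mem (show (r, t) ∈ U from ⟨h1, h2, h3⟩) _
  have hQzero : ∀ {r t : ℝ}, ¬(0 < t ∧ t < r ∧ r < T) → Q (r, t) = 0 := by
    intro r t h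
    exact Set.indicator_of_notMem (by simpa [hUdef] using h) _
  have hQbd : ∀ {r t : ℝ}, 0 < t → t < r → r < T →
      Q (r, t) ≤ c * (r - t) ^ (α - 1) * (r / t) ^ β := by
    intro r t h1 h2 h3
    rw [hQeq h1 h2 h3]
    exact hH2 t r h1 h2 h3
  -- Part 1 --------------------------------------------------------------
  have hdom1int : ∀ t : ℝ, IntervalIntegrable
      (fun r => (Ca * c * (T / t) ^ β) * (r - t) ^ (α - 1)) volume t T := by
    intro t
    apply IntervalIntegrable.const_mul
    have h := (intervalIntegrable_rpow' (by linarith : (-1:ℝ) < α - 1)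
      (a := 0) (b := T - t)).comp_sub_right t
    simpa using h
  have hptbd1 : ∀ t ∈ Set.Ioo (0:ℝ) T, ∀ r ∈ Set.Ioc t T,
      |a r| * Q (r, t) ≤ (Ca * c * (T / t) ^ β) * (r - t) ^ (α - 1) := by
    intro t ht r hr
    have hrt0 : (0:ℝ) ≤ r - t := by linarith [hr.1]
    have hTt : (0:ℝ) ≤ T / t := div_nonneg hT.le ht.1.le
    rcases eq_or_lt_of_le hr.2 with hrT | hrT
    · rw [hrT, hQzero (fun h => lt_irrefl T h.2.2), mul_zero]
      apply mul_nonneg (mul_nonneg (mul_nonneg hCa0 hc.le) (Real.rpow_nonneg hTt β))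
        (Real.rpow_nonneg (by linarith [ht.2]) _)
    · have h1 : Q (r, t) ≤ c * (r - t) ^ (α - 1) * (r / t) ^ β := hQbd ht.1 hr.1 hrT
      have h2 : (r / t) ^ β ≤ (T / t) ^ β :=
        Real.rpow_le_rpow (div_nonneg (by linarith [hr.1, ht.1]) ht.1.le)
          ((div_le_div_iff_of_pos_right ht.1).mpr hrT.le) hβ.le
      have h3 : Q (r, t) ≤ c * (r - t) ^ (α - 1) * (T / t) ^ β := by
        refine le_trans h1 ?_
        exact mul_le_mul_of_nonneg_left h2
          (mul_nonneg hc.le (Real.rpow_nonneg hrt0 _))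
      have h4 : |a r| ≤ Ca := haB r ⟨by linarith [hr.1, ht.1], hr.2⟩
      calc |a r| * Q (r, t) ≤ Ca * (c * (r - t) ^ (α - 1) * (T / t) ^ β) :=
            mul_le_mul h4 h3 (hQnn _) hCa0
        _ = (Ca * c * (T / t) ^ β) * (r - t) ^ (α - 1) := by ring
  have hQraem : ∀ t : ℝ, Measurable (fun r => |a r| * Q (r, t)) :=
    fun t => ha.abs.mul (hQmeas.comp (measurable_id.prodMk measurable_const))
  have haeq1 : ∀ t ∈ Set.Ioo (0:ℝ) T,
      (fun r => |a r| * |K' r t|) =ᵐ[volume.restrict (Set.Ioc t T)]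
        (fun r => |a r| * Q (r, t)) := by
    intro t ht
    filter_upwards [ae_restrict_mem measurableSet_Ioc, ae_restrict_of_ae (aeNeReal T)]
      with r hr hrT
    rw [hQeq ht.1 hr.1 (lt_of_le_of_ne hr.2 hrT)]
  have part1 : ∀ t ∈ Set.Ioo (0:ℝ) T,
      IntervalIntegrable (fun r => |a r| * |K' r t|) volume t T := by
    intro t ht
    apply (hdom1int t).mono_fun
    · rw [Set.uIoc_of_le ht.2.le]
      exact (hQraem t).aestronglyMeasurable.congr (haeq1 t ht).symm
    · rw [Set.uIoc_of_le ht.2.le]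
      filter_upwards [ae_restrict_mem measurableSet_Ioc, haeq1 t ht] with r hr heq
    -- ‖|a r| * |K' r t|‖ ≤ ‖dom‖
      have hnn : (0:ℝ) ≤ |a r| * Q (r, t) := mul_nonneg (abs_nonneg _) (hQnn _)
      have hbd := hptbd1 t ht r hr
      simp only [Real.norm_eq_abs, heq, abs_of_nonneg hnn]
      exact le_trans hbd (le_abs_self _)
  -- F and its properties ------------------------------------------------
  set F : ℝ → ℝ := fun t => ∫ r, |a r| * Q (r, t) ∂volume with hFdef
  have hQzr : ∀ t : ℝ, ∀ r : ℝ, r ∉ Set.Ioc t T → |a r| * Q (r, t) = 0 := by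
    intro t r hr
    rw [Set.mem_Ioc, not_and_or, not_lt, not_le] at hr
    rcases hr with h | h
    · rw [hQzero (fun hh => absurd hh.2.1 (not_lt.2 h)), mul_zero]
    · rw [hQzero (fun hh => absurd hh.2.2 (not_lt.2 (le_of_lt h))), mul_zero]
  have hIntOn1 : ∀ t ∈ Set.Ioo (0:ℝ) T,
      IntegrableOn (fun r => |a r| * Q (r, t)) (Set.Ioc t T) volume := by
    intro t ht
    have h := (hdom1int t).mono_fun ((hQraem t).aestronglyMeasurable)
      (by
        rw [Set.uIoc_of_le ht.2.le]
        filter_upwards [ae_restrict_mem measurableSet_Ioc] with r hr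
        have hnn : (0:ℝ) ≤ |a r| * Q (r, t) := mul_nonneg (abs_nonneg _) (hQnn _)
        simp only [Real.norm_eq_abs, abs_of_nonneg hnn]
        exact le_trans (hptbd1 t ht r hr) (le_abs_self _))
    exact (intervalIntegrable_iff_integrableOn_Ioc_of_le ht.2.le).1 h
  have hInt1 : ∀ t ∈ Set.Ioo (0:ℝ) T,
      Integrable (fun r => |a r| * Q (r, t)) volume := fun t ht =>
    integrable_of_integrableOn_of_zero measurableSet_Ioc (hIntOn1 t ht) (hQzr t)
  have hFeq : ∀ t ∈ Set.Ioo (0:ℝ) T, F t = ∫ r in t..T, |a r| * |K' r t| := by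
    intro t ht
    show (∫ r, |a r| * Q (r, t) ∂volume) = _
    rw [integral_eq_setIntegral_of_zero measurableSet_Ioc (hQzr t)]
    rw [intervalIntegral.integral_of_le ht.2.le]
    apply setIntegral_congr_ae measurableSet_Ioc
    filter_upwards [aeNeReal T] with r hrT hr
    rw [hQeq ht.1 hr.1 (lt_of_le_of_ne hr.2 hrT)]
  have hF0 : ∀ t, 0 ≤ F t := fun t =>
    integral_nonneg (fun r => mul_nonneg (abs_nonneg _) (hQnn _))
  set M : ℝ := Ca * c * T ^ β * T ^ α / α with hMdef
  have hM0 : 0 ≤ M := by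
    apply div_nonneg _ hα.le
    exact mul_nonneg (mul_nonneg (mul_nonneg hCa0 hc.le) (Real.rpow_nonneg hT.le β))
      (Real.rpow_nonneg hT.le α)
  have hFbd : ∀ t ∈ Set.Ioo (0:ℝ) T, F t ≤ M * t ^ (-β) := by
    intro t ht
    have hdomIO : IntegrableOn (fun r => (Ca * c * (T / t) ^ β) * (r - t) ^ (α - 1))
        (Set.Ioc t T) volume :=
      (intervalIntegrable_iff_integrableOn_Ioc_of_le ht.2.le).1 (hdom1int t)
    have h1 : F t ≤ ∫ r in Set.Ioc t T, (Ca * c * (T / t) ^ β) * (r - t) ^ (α - 1) := by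
      show (∫ r, |a r| * Q (r, t) ∂volume) ≤ _
      rw [integral_eq_setIntegral_of_zero measurableSet_Ioc (hQzr t)]
      exact setIntegral_mono_on (hIntOn1 t ht) hdomIO measurableSet_Ioc (hptbd1 t ht)
    have h2 : ∫ r in Set.Ioc t T, (Ca * c * (T / t) ^ β) * (r - t) ^ (α - 1)
        = (Ca * c * (T / t) ^ β) * ((T - t) ^ α / α) := by
      rw [← intervalIntegral.integral_of_le ht.2.le, intervalIntegral.integral_const_mul]
      congr 1
      have h3 : ∫ r in t..T, (r - t) ^ (α - 1) = ∫ x in (t - t)..(T - t), x ^ (α - 1) :=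
        intervalIntegral.integral_comp_sub_right (fun x => x ^ (α - 1)) t
      rw [h3, sub_self, myIntegralRpow (by linarith : (-1:ℝ) < α - 1), sub_add_cancel]
    have h4 : (T - t) ^ α ≤ T ^ α :=
      Real.rpow_le_rpow (by linarith [ht.2]) (by linarith [ht.1]) hα.le
    have h5 : (T / t) ^ β = T ^ β * t ^ (-β) := by
      rw [Real.div_rpow hT.le ht.1.le, Real.rpow_neg ht.1.le]
      ring
    have h6 : (0:ℝ) ≤ Ca * c * (T / t) ^ β :=
      mul_nonneg (mul_nonneg hCa0 hc.le) (Real.rpow_nonneg (div_nonneg hT.le ht.1.le) β)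
    calc F t ≤ (Ca * c * (T / t) ^ β) * ((T - t) ^ α / α) := h1.trans (le_of_eq h2)
      _ ≤ (Ca * c * (T / t) ^ β) * (T ^ α / α) := by
          apply mul_le_mul_of_nonneg_left _ h6
          exact div_le_div_of_nonneg_right h4 hα.le
      _ = M * t ^ (-β) := by rw [h5, hMdef]; ring
  have hFmeas : StronglyMeasurable F := by
    apply MeasureTheory.StronglyMeasurable.integral_prod_right'
      (f := fun q : ℝ × ℝ => |a q.2| * Q (q.2, q.1))
    exact (ha.comp measurable_snd).abs.mul
      (hQmeas.comp ((measurable_snd).prodMk measurable_fst)) |>.stronglyMeasurable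
  -- Part 2 ----------------------------------------------------------------
  have hdom2 : IntegrableOn (fun t : ℝ => M^2 * t ^ (-(2*β))) (Set.Ioc 0 T) volume := by
    apply (intervalIntegrable_iff_integrableOn_Ioc_of_le hT.le).1
    exact (intervalIntegrable_rpow' (by linarith : (-1:ℝ) < -(2*β))).const_mul _
  have haeIoo : ∀ᵐ t ∂volume.restrict (Set.Ioc (0:ℝ) T), t ∈ Set.Ioo (0:ℝ) T := by
    filter_upwards [ae_restrict_mem measurableSet_Ioc, ae_restrict_of_ae (aeNeReal T)]
      with t ht htT
    exact ⟨ht.1, lt_of_le_of_ne ht.2 htT⟩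
  have hFsqbd : ∀ t ∈ Set.Ioo (0:ℝ) T, (F t)^2 ≤ M^2 * t ^ (-(2*β)) := by
    intro t ht
    have h1 : (F t)^2 ≤ (M * t ^ (-β))^2 := by
      apply pow_le_pow_left₀ (hF0 t) (hFbd t ht)
    have h2 : (M * t ^ (-β))^2 = M^2 * t ^ (-(2*β)) := by
      have : (t ^ (-β))^2 = t ^ (-(2*β)) := by
        rw [← Real.rpow_natCast (t ^ (-β)) 2, ← Real.rpow_mul ht.1.le]
        norm_num
        ring_nf
      rw [mul_pow, this]
    linarith [h1, le_of_eq h2]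
  have hFcong : (fun t => (F t)^2) =ᵐ[volume.restrict (Set.Ioc (0:ℝ) T)]
      (fun t => (∫ r in t..T, |a r| * |K' r t|) ^ 2) := by
    filter_upwards [haeIoo] with t ht
    rw [hFeq t ht]
  have part2 : IntervalIntegrable (fun t => (∫ r in t..T, |a r| * |K' r t|) ^ 2)
      volume 0 T := by
    rw [intervalIntegrable_iff_integrableOn_Ioc_of_le hT.le]
    apply Integrable.mono' hdom2 ((hFmeas.pow 2).aestronglyMeasurable.congr hFcong)
    filter_upwards [haeIoo] with t ht
    rw [← hFeq t ht, Real.norm_eq_abs, abs_of_nonneg (sq_nonneg _)]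
    exact hFsqbd t ht
  -- products Q(r,u) Q(s,u) ------------------------------------------------
  obtain ⟨B1, hB1nn, hB1⟩ := betaPack (-(2*β)) (α - 1)
    (by linarith) (by linarith)
  have hexp1 : (-(2*β)) + (α - 1) + 1 = α - 2*β := by ring
  set ψ : ℝ → ℝ → ℝ := fun r s => ∫ u, Q (r, u) * Q (s, u) ∂volume with hψdef
  have hψnn : ∀ r s, 0 ≤ ψ r s := fun r s =>
    integral_nonneg (fun u => mul_nonneg (hQnn _) (hQnn _))
  have hQQzr : ∀ r s : ℝ, ∀ u : ℝ, u ∉ Set.Ioc (0:ℝ) s → Q (r, u) * Q (s, u) = 0 := by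
    intro r s u hu
    rw [Set.mem_Ioc, not_and_or, not_lt, not_le] at hu
    rcases hu with h | h
    · rw [hQzero (r := s) (t := u) (fun hh => absurd hh.1 (not_lt.2 h)), mul_zero]
    · rw [hQzero (r := s) (t := u) (fun hh => absurd hh.2.1 (not_lt.2 h.le)), mul_zero]
  have hQQmeas : ∀ r s : ℝ, Measurable (fun u => Q (r, u) * Q (s, u)) := by
    intro r s
    exact (hQmeas.comp (measurable_const.prodMk measurable_id)).mul
      (hQmeas.comp (measurable_const.prodMk measurable_id))
  have prodBound : ∀ r s : ℝ, 0 < s → s < r → r < T → ∀ u ∈ Set.Ioc (0:ℝ) s,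
      Q (r, u) * Q (s, u) ≤ (c * c * (r - s) ^ (α - 1) * T ^ (2*β)) *
        (u ^ (-(2*β)) * (s - u) ^ (α - 1)) := by
    intro r s hs hsr hrT u hu
    rcases eq_or_lt_of_le hu.2 with h | hus
    · rw [h, hQzero (r := s) (t := s) (fun hh => lt_irrefl s hh.2.1), mul_zero]
      rw [sub_self, Real.zero_rpow (by linarith : α - 1 ≠ 0), mul_zero, mul_zero]
    · have hur : u < r := lt_trans hus hsr
      have hsT : s < T := lt_trans hsr hrT
      have h1 : Q (r, u) ≤ c * (r - u) ^ (α - 1) * (r / u) ^ β := hQbd hu.1 hur hrT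
      have h2 : Q (s, u) ≤ c * (s - u) ^ (α - 1) * (s / u) ^ β := hQbd hu.1 hus hsT
      have hnn1 : (0:ℝ) ≤ c * (r - u) ^ (α - 1) * (r / u) ^ β :=
        mul_nonneg (mul_nonneg hc.le (Real.rpow_nonneg (by linarith) _))
          (Real.rpow_nonneg (div_nonneg (by linarith) hu.1.le) _)
      have hnn2 : (0:ℝ) ≤ c * (s - u) ^ (α - 1) * (s / u) ^ β :=
        mul_nonneg (mul_nonneg hc.le (Real.rpow_nonneg (by linarith) _))
          (Real.rpow_nonneg (div_nonneg (by linarith) hu.1.le) _)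
      have e0 : Q (r, u) * Q (s, u)
          ≤ (c * (r - u) ^ (α - 1) * (r / u) ^ β) * (c * (s - u) ^ (α - 1) * (s / u) ^ β) :=
        mul_le_mul h1 h2 (hQnn _) hnn1
      have eA : (r - u) ^ (α - 1) ≤ (r - s) ^ (α - 1) :=
        Real.rpow_le_rpow_of_nonpos (by linarith) (by linarith) (by linarith)
      have eB : (r / u) ^ β ≤ (T / u) ^ β :=
        Real.rpow_le_rpow (div_nonneg (by linarith) hu.1.le)
          ((div_le_div_iff_of_pos_right hu.1).mpr hrT.le) hβ.le
      have eC : (s / u) ^ β ≤ (T / u) ^ β :=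
        Real.rpow_le_rpow (div_nonneg (by linarith) hu.1.le)
          ((div_le_div_iff_of_pos_right hu.1).mpr hsT.le) hβ.le
      have hTu : (0:ℝ) ≤ (T / u) ^ β := Real.rpow_nonneg (div_nonneg hT.le hu.1.le) _
      have e1 : (c * (r - u) ^ (α - 1) * (r / u) ^ β) * (c * (s - u) ^ (α - 1) * (s / u) ^ β)
          ≤ (c * (r - s) ^ (α - 1) * (T / u) ^ β) * (c * (s - u) ^ (α - 1) * (T / u) ^ β) := by
        apply mul_le_mul
        · exact mul_le_mul (mul_le_mul_of_nonneg_left eA hc.le) eB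
            (Real.rpow_nonneg (div_nonneg (by linarith) hu.1.le) _)
            (mul_nonneg hc.le (Real.rpow_nonneg (by linarith) _))
        · exact mul_le_mul_of_nonneg_left eC
            (mul_nonneg hc.le (Real.rpow_nonneg (by linarith) _))
        · exact hnn2
        · exact mul_nonneg (mul_nonneg hc.le (Real.rpow_nonneg (by linarith) _)) hTu
      have e2 : (T / u) ^ β * (T / u) ^ β = T ^ (2*β) * u ^ (-(2*β)) := by
        rw [← Real.rpow_add (div_pos hT hu.1), (by ring : β + β = 2*β),
          Real.div_rpow hT.le hu.1.le, Real.rpow_neg hu.1.le]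
        ring
      calc Q (r, u) * Q (s, u)
          ≤ (c * (r - s) ^ (α - 1) * (T / u) ^ β) * (c * (s - u) ^ (α - 1) * (T / u) ^ β) :=
            le_trans e0 e1
        _ = (c * c * (r - s) ^ (α - 1)) * ((s - u) ^ (α - 1) * ((T / u) ^ β * (T / u) ^ β)) := by
            ring
        _ = (c * c * (r - s) ^ (α - 1) * T ^ (2*β)) * (u ^ (-(2*β)) * (s - u) ^ (α - 1)) := by
            rw [e2]; ring
  -- dominator for the u-integral
  have hdom3 : ∀ r s : ℝ, IntervalIntegrable
      (fun u => (c * c * (r - s) ^ (α - 1) * T ^ (2*β)) *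
        (u ^ (-(2*β)) * (s - u) ^ (α - 1))) volume 0 s → True := fun _ _ _ => trivial
  have core3 : ∀ r s : ℝ, 0 < s → s < r → r < T →
      IntegrableOn (fun u => Q (r, u) * Q (s, u)) (Set.Ioc 0 s) volume ∧
      IntervalIntegrable (fun u => |K' r u| * |K' s u|) volume 0 s ∧
      ψ r s ≤ (c * c * T ^ (2*β) * B1) * ((r - s) ^ (α - 1) * s ^ (α - 2*β)) ∧
      (∫ u in (0:ℝ)..s, |K' r u| * |K' s u|) = ψ r s := by
    intro r s hs hsr hrT
    have hC0 : (0:ℝ) ≤ c * c * (r - s) ^ (α - 1) * T ^ (2*β) :=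
      mul_nonneg (mul_nonneg (mul_nonneg hc.le hc.le)
        (Real.rpow_nonneg (by linarith) _)) (Real.rpow_nonneg hT.le _)
    have hbeta := hB1 s hs
    have hdomII : IntervalIntegrable
        (fun u => (c * c * (r - s) ^ (α - 1) * T ^ (2*β)) *
          (u ^ (-(2*β)) * (s - u) ^ (α - 1))) volume 0 s := hbeta.1.const_mul _
    have haeQQ : (fun u => |K' r u| * |K' s u|) =ᵐ[volume.restrict (Set.Ioc (0:ℝ) s)]
        (fun u => Q (r, u) * Q (s, u)) := by
      filter_upwards [ae_restrict_mem measurableSet_Ioc, ae_restrict_of_ae (aeNeReal s)]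
        with u hu hus
      have hus' : u < s := lt_of_le_of_ne hu.2 hus
      rw [hQeq hu.1 (lt_trans hus' hsr) hrT, hQeq hu.1 hus' (lt_trans hsr hrT)]
    have hIntQQ : IntegrableOn (fun u => Q (r, u) * Q (s, u)) (Set.Ioc 0 s) volume := by
      have h := hdomII.mono_fun (hQQmeas r s).aestronglyMeasurable
        (by
          rw [Set.uIoc_of_le hs.le]
          filter_upwards [ae_restrict_mem measurableSet_Ioc] with u hu
          have hnn : (0:ℝ) ≤ Q (r, u) * Q (s, u) := mul_nonneg (hQnn _) (hQnn _)
          simp only [Real.norm_eq_abs, abs_of_nonneg hnn]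
          exact le_trans (prodBound r s hs hsr hrT u hu) (le_abs_self _))
      exact (intervalIntegrable_iff_integrableOn_Ioc_of_le hs.le).1 h
    have hIntK : IntervalIntegrable (fun u => |K' r u| * |K' s u|) volume 0 s := by
      rw [intervalIntegrable_iff_integrableOn_Ioc_of_le hs.le]
      exact (hIntQQ.congr haeQQ.symm)
    have heqint : (∫ u in (0:ℝ)..s, |K' r u| * |K' s u|) = ψ r s := by
      rw [intervalIntegral.integral_of_le hs.le, integral_congr_ae haeQQ]
      exact (integral_eq_setIntegral_of_zero measurableSet_Ioc (hQQzr r s)).symm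
    refine ⟨hIntQQ, hIntK, ?_, heqint⟩
    have hψeq : ψ r s = ∫ u in Set.Ioc (0:ℝ) s, Q (r, u) * Q (s, u) :=
      integral_eq_setIntegral_of_zero measurableSet_Ioc (hQQzr r s)
    have h1 : ψ r s ≤ ∫ u in Set.Ioc (0:ℝ) s,
        (c * c * (r - s) ^ (α - 1) * T ^ (2*β)) * (u ^ (-(2*β)) * (s - u) ^ (α - 1)) := by
      rw [hψeq]
      exact setIntegral_mono_on hIntQQ
        ((intervalIntegrable_iff_integrableOn_Ioc_of_le hs.le).1 hdomII)
        measurableSet_Ioc (prodBound r s hs hsr hrT)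
    have h2 : ∫ u in Set.Ioc (0:ℝ) s,
        (c * c * (r - s) ^ (α - 1) * T ^ (2*β)) * (u ^ (-(2*β)) * (s - u) ^ (α - 1))
        = (c * c * (r - s) ^ (α - 1) * T ^ (2*β)) *
          ∫ u in (0:ℝ)..s, u ^ (-(2*β)) * (s - u) ^ (α - 1) := by
      rw [← intervalIntegral.integral_of_le hs.le, intervalIntegral.integral_const_mul]
    have h3 : (∫ u in (0:ℝ)..s, u ^ (-(2*β)) * (s - u) ^ (α - 1)) ≤ B1 * s ^ (α - 2*β) := by
      have := hbeta.2
      rwa [hexp1] at this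
    calc ψ r s ≤ (c * c * (r - s) ^ (α - 1) * T ^ (2*β)) *
          ∫ u in (0:ℝ)..s, u ^ (-(2*β)) * (s - u) ^ (α - 1) := h1.trans (le_of_eq h2)
      _ ≤ (c * c * (r - s) ^ (α - 1) * T ^ (2*β)) * (B1 * s ^ (α - 2*β)) :=
          mul_le_mul_of_nonneg_left h3 hC0
      _ = (c * c * T ^ (2*β) * B1) * ((r - s) ^ (α - 1) * s ^ (α - 2*β)) := by ring
  have part3 : ∀ r ∈ Set.Ioo (0:ℝ) T, ∀ s ∈ Set.Ioo (0:ℝ) T, r ≠ s →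
      IntervalIntegrable (fun u => |K' r u| * |K' s u|) volume 0 (min r s) := by
    intro r hr s hs hrs
    rcases lt_or_gt_of_ne hrs with h | h
    · rw [min_eq_left h.le]
      have := (core3 s r hr.1 h hs.2).2.1
      simpa [mul_comm] using this
    · rw [min_eq_right (le_of_lt h)]
      exact (core3 r s hs.1 h hr.2).2.1
  -- Part 4 ------------------------------------------------------------------
  obtain ⟨B2, hB2nn, hB2⟩ := betaPack (α - 2*β) (α - 1) (by linarith) (by linarith)
  have hexp2 : (α - 2*β) + (α - 1) + 1 = 2*α - 2*β := by ring
  have hψmeasr : ∀ r : ℝ, StronglyMeasurable (fun s => ψ r s) := by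
    intro r
    apply MeasureTheory.StronglyMeasurable.integral_prod_right'
      (f := fun q : ℝ × ℝ => Q (r, q.2) * Q (q.1, q.2))
    exact ((hQmeas.comp (measurable_const.prodMk measurable_snd)).mul
      (hQmeas.comp (measurable_fst.prodMk measurable_snd))).stronglyMeasurable
  set C1 : ℝ := Ca * Ca * (c * c * T ^ (2*β) * B1) with hC1def
  have hC1nn : 0 ≤ C1 := by
    apply mul_nonneg (mul_nonneg hCa0 hCa0)
    exact mul_nonneg (mul_nonneg (mul_nonneg hc.le hc.le) (Real.rpow_nonneg hT.le _)) hB1nn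
  have hptbd4 : ∀ r ∈ Set.Ioo (0:ℝ) T, ∀ s ∈ Set.Ioo (0:ℝ) r,
      ψ r s * |a r| * |a s| ≤ C1 * (s ^ (α - 2*β) * (r - s) ^ (α - 1)) := by
    intro r hr s hs
    have hψbd := (core3 r s hs.1 hs.2 hr.2).2.2.1
    have har : |a r| ≤ Ca := haB r ⟨hr.1.le, hr.2.le⟩
    have has : |a s| ≤ Ca := haB s ⟨hs.1.le, by linarith [hs.2, hr.2]⟩
    have h1 : ψ r s * |a r| * |a s| ≤ ψ r s * Ca * Ca := by
      apply mul_le_mul (mul_le_mul_of_nonneg_left har (hψnn r s)) has (abs_nonneg _)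
      exact mul_nonneg (hψnn r s) hCa0
    have h2 : ψ r s * Ca * Ca
        ≤ ((c * c * T ^ (2*β) * B1) * ((r - s) ^ (α - 1) * s ^ (α - 2*β))) * Ca * Ca := by
      apply mul_le_mul_of_nonneg_right (mul_le_mul_of_nonneg_right hψbd hCa0) hCa0
    calc ψ r s * |a r| * |a s| ≤ ψ r s * Ca * Ca := h1
      _ ≤ ((c * c * T ^ (2*β) * B1) * ((r - s) ^ (α - 1) * s ^ (α - 2*β))) * Ca * Ca := h2
      _ = C1 * (s ^ (α - 2*β) * (r - s) ^ (α - 1)) := by rw [hC1def]; ring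
  have hdom4 : ∀ r : ℝ, 0 < r → IntervalIntegrable
      (fun s => C1 * (s ^ (α - 2*β) * (r - s) ^ (α - 1))) volume 0 r :=
    fun r hr => ((hB2 r hr).1).const_mul _
  have haeIoo' : ∀ r : ℝ, ∀ᵐ s ∂volume.restrict (Set.Ioc (0:ℝ) r), s ∈ Set.Ioo (0:ℝ) r := by
    intro r
    filter_upwards [ae_restrict_mem measurableSet_Ioc, ae_restrict_of_ae (aeNeReal r)]
      with s hsm hsr
    exact ⟨hsm.1, lt_of_le_of_ne hsm.2 hsr⟩
  have hIntOn4 : ∀ r ∈ Set.Ioo (0:ℝ) T,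
      IntegrableOn (fun s => ψ r s * |a r| * |a s|) (Set.Ioc 0 r) volume := by
    intro r hr
    have h := (hdom4 r hr.1).mono_fun (g := fun s => ψ r s * |a r| * |a s|)
      ((((hψmeasr r).measurable.mul measurable_const).mul ha.abs).aestronglyMeasurable)
      (by
        rw [Set.uIoc_of_le hr.1.le]
        filter_upwards [haeIoo' r] with s hs
        have hnn : (0:ℝ) ≤ ψ r s * |a r| * |a s| :=
          mul_nonneg (mul_nonneg (hψnn r s) (abs_nonneg _)) (abs_nonneg _)
        simp only [Real.norm_eq_abs, abs_of_nonneg hnn]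
        exact le_trans (hptbd4 r hr s hs) (le_abs_self _))
    exact (intervalIntegrable_iff_integrableOn_Ioc_of_le hr.1.le).1 h
  have haecong4 : ∀ r ∈ Set.Ioo (0:ℝ) T,
      (fun s => ψ r s * |a r| * |a s|) =ᵐ[volume.restrict (Set.Ioc (0:ℝ) r)]
      (fun s => (∫ u in (0:ℝ)..(min r s), |K' r u| * |K' s u|) * |a r| * |a s|) := by
    intro r hr
    filter_upwards [haeIoo' r] with s hs
    rw [min_eq_right hs.2.le, (core3 r s hs.1 hs.2 hr.2).2.2.2]
  have part4 : ∀ r ∈ Set.Ioo (0:ℝ) T,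
      IntervalIntegrable
        (fun s => (∫ u in (0:ℝ)..(min r s), |K' r u| * |K' s u|) * |a r| * |a s|)
        volume 0 r := by
    intro r hr
    rw [intervalIntegrable_iff_integrableOn_Ioc_of_le hr.1.le]
    exact (hIntOn4 r hr).congr (haecong4 r hr)
  -- G and Part 5 --------------------------------------------------------------
  set G : ℝ → ℝ := fun r =>
    ∫ s, (Set.Ioc (0:ℝ) r).indicator (fun s' => ψ r s' * |a r| * |a s'|) s ∂volume
    with hGdef
  have hfeqG : ∀ r s : ℝ,
      (Set.Ioc (0:ℝ) r).indicator (fun s' => ψ r s' * |a r| * |a s'|) s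
      = ({q : ℝ × ℝ | 0 < q.2 ∧ q.2 ≤ q.1}).indicator
          (fun q => ψ q.1 q.2 * |a q.1| * |a q.2|) (r, s) := by
    intro r s
    by_cases h : s ∈ Set.Ioc (0:ℝ) r
    · rw [Set.indicator_of_mem h, Set.indicator_of_mem (show (r, s) ∈ {q : ℝ × ℝ | 0 < q.2 ∧ q.2 ≤ q.1} from ⟨h.1, h.2⟩)]
    · rw [Set.indicator_of_notMem h, Set.indicator_of_notMem (by simpa using h)]
  have hψuncurry : Measurable (fun q : ℝ × ℝ => ψ q.1 q.2) := by
    have : StronglyMeasurable (fun q : ℝ × ℝ => ψ q.1 q.2) := by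
      apply MeasureTheory.StronglyMeasurable.integral_prod_right'
        (f := fun z : (ℝ × ℝ) × ℝ => Q (z.1.1, z.2) * Q (z.1.2, z.2))
      exact ((hQmeas.comp ((measurable_fst.comp measurable_fst).prodMk measurable_snd)).mul
        (hQmeas.comp ((measurable_snd.comp measurable_fst).prodMk
          measurable_snd))).stronglyMeasurable
    exact this.measurable
  have hGsm : StronglyMeasurable G := by
    have hmble : Measurable (fun q : ℝ × ℝ =>
        ({q : ℝ × ℝ | 0 < q.2 ∧ q.2 ≤ q.1}).indicator
          (fun q => ψ q.1 q.2 * |a q.1| * |a q.2|) q) := by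
      apply Measurable.indicator
      · exact ((hψuncurry.mul (ha.comp measurable_fst).abs).mul (ha.comp measurable_snd).abs)
      · have : {q : ℝ × ℝ | 0 < q.2 ∧ q.2 ≤ q.1}
            = {q : ℝ × ℝ | 0 < q.2} ∩ {q : ℝ × ℝ | q.2 ≤ q.1} := by
          ext q; simp [Set.mem_setOf_eq]
        rw [this]
        exact (measurableSet_lt measurable_const measurable_snd).inter
          (measurableSet_le measurable_snd measurable_fst)
    have h2 : G = fun r => ∫ s,
        ({q : ℝ × ℝ | 0 < q.2 ∧ q.2 ≤ q.1}).indicator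
          (fun q => ψ q.1 q.2 * |a q.1| * |a q.2|) (r, s) ∂volume := by
      funext r
      exact integral_congr_ae (Filter.Eventually.of_forall (fun s => hfeqG r s))
    rw [h2]
    exact hmble.stronglyMeasurable.integral_prod_right'
  have hGnn : ∀ r, 0 ≤ G r := by
    intro r
    apply MeasureTheory.integral_nonneg
    intro s
    apply Set.indicator_nonneg
    intro s' _
    exact mul_nonneg (mul_nonneg (hψnn r s') (abs_nonneg _)) (abs_nonneg _)
  have hGIoc : ∀ r : ℝ, G r = ∫ s in Set.Ioc (0:ℝ) r, ψ r s * |a r| * |a s| := by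
    intro r
    exact integral_indicator measurableSet_Ioc
  have hGeq : ∀ r ∈ Set.Ioo (0:ℝ) T,
      G r = ∫ s in (0:ℝ)..r,
        (∫ u in (0:ℝ)..(min r s), |K' r u| * |K' s u|) * |a r| * |a s| := by
    intro r hr
    rw [hGIoc r, intervalIntegral.integral_of_le hr.1.le]
    exact integral_congr_ae (haecong4 r hr)
  set C2 : ℝ := C1 * B2 with hC2def
  have hGbd : ∀ r ∈ Set.Ioo (0:ℝ) T, G r ≤ C2 * r ^ (2*α - 2*β) := by
    intro r hr
    have h1 : G r ≤ ∫ s in Set.Ioc (0:ℝ) r, C1 * (s ^ (α - 2*β) * (r - s) ^ (α - 1)) := by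
      rw [hGIoc r]
      apply integral_mono_ae (hIntOn4 r hr)
        ((intervalIntegrable_iff_integrableOn_Ioc_of_le hr.1.le).1 (hdom4 r hr.1))
      filter_upwards [haeIoo' r] with s hs
      exact hptbd4 r hr s hs
    have h2 : ∫ s in Set.Ioc (0:ℝ) r, C1 * (s ^ (α - 2*β) * (r - s) ^ (α - 1))
        = C1 * ∫ s in (0:ℝ)..r, s ^ (α - 2*β) * (r - s) ^ (α - 1) := by
      rw [← intervalIntegral.integral_of_le hr.1.le, intervalIntegral.integral_const_mul]
    have h3 : (∫ s in (0:ℝ)..r, s ^ (α - 2*β) * (r - s) ^ (α - 1)) ≤ B2 * r ^ (2*α - 2*β) := by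
      have := (hB2 r hr.1).2
      rwa [hexp2] at this
    calc G r ≤ C1 * ∫ s in (0:ℝ)..r, s ^ (α - 2*β) * (r - s) ^ (α - 1) :=
          h1.trans (le_of_eq h2)
      _ ≤ C1 * (B2 * r ^ (2*α - 2*β)) := mul_le_mul_of_nonneg_left h3 hC1nn
      _ = C2 * r ^ (2*α - 2*β) := by rw [hC2def]; ring
  have hC2nn : 0 ≤ C2 := mul_nonneg hC1nn hB2nn
  have hGcong : G =ᵐ[volume.restrict (Set.Ioc (0:ℝ) T)]
      (fun r => ∫ s in (0:ℝ)..r,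
        (∫ u in (0:ℝ)..(min r s), |K' r u| * |K' s u|) * |a r| * |a s|) := by
    filter_upwards [haeIoo] with r hr
    exact hGeq r hr
  have part5 : IntervalIntegrable
      (fun r => ∫ s in (0:ℝ)..r,
        (∫ u in (0:ℝ)..(min r s), |K' r u| * |K' s u|) * |a r| * |a s|)
      volume 0 T := by
    rw [intervalIntegrable_iff_integrableOn_Ioc_of_le hT.le]
    have hdom5 : IntegrableOn (fun r : ℝ => C2 * r ^ (2*α - 2*β)) (Set.Ioc 0 T) volume := by
      apply (intervalIntegrable_iff_integrableOn_Ioc_of_le hT.le).1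
      exact (intervalIntegrable_rpow' (by linarith : (-1:ℝ) < 2*α - 2*β)).const_mul _
    apply Integrable.mono' hdom5 (hGsm.aestronglyMeasurable.congr hGcong)
    filter_upwards [haeIoo, hGcong] with r hr hcr
    rw [← hcr, Real.norm_eq_abs, abs_of_nonneg (hGnn r)]
    exact hGbd r hr
  -- ENNReal machinery ---------------------------------------------------------
  set fE : ℝ × ℝ → ℝ≥0∞ := fun q => ENNReal.ofReal (|a q.1| * Q (q.1, q.2)) with hfEdef
  have hfEmeas : Measurable fE :=
    ((ha.comp measurable_fst).abs.mul
      (hQmeas.comp (measurable_fst.prodMk measurable_snd))).ennreal_ofReal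
  set I : ℝ → ℝ≥0∞ := fun t => ∫⁻ r, fE (r, t) ∂volume with hIdef
  have hIF : ∀ t ∈ Set.Ioo (0:ℝ) T, I t = ENNReal.ofReal (F t) := by
    intro t ht
    have h := ofReal_integral_eq_lintegral_ofReal (hInt1 t ht)
      (Filter.Eventually.of_forall (fun r => mul_nonneg (abs_nonneg _) (hQnn _)))
    exact h.symm
  have hfE0 : ∀ t : ℝ, t ∉ Set.Ioo (0:ℝ) T → ∀ r : ℝ, fE (r, t) = 0 := by
    intro t ht r
    show ENNReal.ofReal (|a r| * Q (r, t)) = 0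
    rw [hQzero (fun hh => ht ⟨hh.1, lt_trans hh.2.1 hh.2.2⟩), mul_zero, ENNReal.ofReal_zero]
  have hfE0' : ∀ r : ℝ, r ∉ Set.Ioo (0:ℝ) T → ∀ t : ℝ, fE (r, t) = 0 := by
    intro r hr t
    show ENNReal.ofReal (|a r| * Q (r, t)) = 0
    rw [hQzero (fun hh => hr ⟨lt_trans hh.1 hh.2.1, hh.2.2⟩), mul_zero, ENNReal.ofReal_zero]
  have hI0 : ∀ t : ℝ, t ∉ Set.Ioo (0:ℝ) T → I t = 0 := by
    intro t ht
    have h : (fun r => fE (r, t)) = fun _ => (0:ℝ≥0∞) := by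
      funext r; exact hfE0 t ht r
    show (∫⁻ r, fE (r, t) ∂volume) = 0
    rw [h, lintegral_zero]
  set Φl : ℝ → ℝ → ℝ≥0∞ := fun r s => ∫⁻ t, fE (r, t) * fE (s, t) ∂volume with hΦdef
  have hΦmeas : Measurable (Function.uncurry Φl) := by
    apply Measurable.lintegral_prod_right' (ν := volume)
      (f := fun z : (ℝ × ℝ) × ℝ => fE (z.1.1, z.2) * fE (z.1.2, z.2))
    exact (hfEmeas.comp ((measurable_fst.comp measurable_fst).prodMk measurable_snd)).mul
      (hfEmeas.comp ((measurable_snd.comp measurable_fst).prodMk measurable_snd))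
  have hΦsymm : ∀ r s, Φl r s = Φl s r := by
    intro r s
    exact lintegral_congr (fun t => mul_comm _ _)
  have hΦ0 : ∀ r : ℝ, r ∉ Set.Ioo (0:ℝ) T → ∀ s, Φl r s = 0 := by
    intro r hr s
    have h : (fun t => fE (r, t) * fE (s, t)) = fun _ => (0:ℝ≥0∞) := by
      funext t; rw [hfE0' r hr t, zero_mul]
    show (∫⁻ t, fE (r, t) * fE (s, t) ∂volume) = 0
    rw [h, lintegral_zero]
  have hΦ0s : ∀ r : ℝ, ∀ s : ℝ, s ∉ Set.Ioo (0:ℝ) T → Φl r s = 0 := by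
    intro r s hs
    rw [hΦsymm r s]
    exact hΦ0 s hs r
  -- Tonelli chain
  have E1 : ∫⁻ t, (I t)^2 = ∫⁻ r, ∫⁻ s, Φl r s := by
    have hsq : ∀ t, (I t)^2 = ∫⁻ r, ∫⁻ s, fE (r, t) * fE (s, t) := by
      intro t
      exact lintegral_sq_expand (fun r => fE (r, t))
        (hfEmeas.comp (measurable_id.prodMk measurable_const))
    have hm1 : AEMeasurable
        (Function.uncurry fun t r => ∫⁻ s, fE (r, t) * fE (s, t))
        (volume.prod volume) := by
      apply Measurable.aemeasurable
      apply Measurable.lintegral_prod_right' (ν := volume)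
        (f := fun z : (ℝ × ℝ) × ℝ => fE (z.1.2, z.1.1) * fE (z.2, z.1.1))
      exact (hfEmeas.comp ((measurable_snd.comp measurable_fst).prodMk
          (measurable_fst.comp measurable_fst))).mul
        (hfEmeas.comp (measurable_snd.prodMk (measurable_fst.comp measurable_fst)))
    have hm2 : ∀ r : ℝ, AEMeasurable
        (Function.uncurry fun t s => fE (r, t) * fE (s, t)) (volume.prod volume) := by
      intro r
      apply Measurable.aemeasurable
      exact (hfEmeas.comp (measurable_const.prodMk measurable_fst)).mul
        (hfEmeas.comp (measurable_snd.prodMk measurable_fst))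
    calc ∫⁻ t, (I t)^2 = ∫⁻ t, ∫⁻ r, ∫⁻ s, fE (r, t) * fE (s, t) := lintegral_congr hsq
      _ = ∫⁻ r, ∫⁻ t, ∫⁻ s, fE (r, t) * fE (s, t) := lintegral_lintegral_swap hm1
      _ = ∫⁻ r, ∫⁻ s, Φl r s :=
          lintegral_congr (fun r => lintegral_lintegral_swap (hm2 r))
  have E2 : ∫⁻ r, ∫⁻ s, Φl r s = 2 * ∫⁻ r, ∫⁻ s in Set.Iio r, Φl r s :=
    lintegral_symm_halves Φl hΦmeas hΦsymm
  -- connection with the real integrals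
  have E4 : ENNReal.ofReal (∫ t in (0:ℝ)..T, (∫ r in t..T, |a r| * |K' r t|) ^ 2)
      = ∫⁻ t, (I t)^2 := by
    rw [intervalIntegral.integral_of_le hT.le]
    have hIntF2 : Integrable (fun t => (F t)^2) (volume.restrict (Set.Ioc (0:ℝ) T)) :=
      ((intervalIntegrable_iff_integrableOn_Ioc_of_le hT.le).1 part2).congr hFcong.symm
    calc ENNReal.ofReal (∫ t in Set.Ioc (0:ℝ) T, (∫ r in t..T, |a r| * |K' r t|) ^ 2)
        = ENNReal.ofReal (∫ t in Set.Ioc (0:ℝ) T, (F t)^2) := by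
          rw [integral_congr_ae hFcong]
      _ = ∫⁻ t in Set.Ioc (0:ℝ) T, ENNReal.ofReal ((F t)^2) :=
          ofReal_integral_eq_lintegral_ofReal hIntF2
            (Filter.Eventually.of_forall (fun t => sq_nonneg _))
      _ = ∫⁻ t in Set.Ioc (0:ℝ) T, (I t)^2 := by
          apply lintegral_congr_ae
          filter_upwards [haeIoo] with t ht
          rw [hIF t ht, ← ENNReal.ofReal_pow (hF0 t)]
      _ = ∫⁻ t, (I t)^2 := by
          refine (lintegral_eq_setLIntegral_of_zero measurableSet_Ioc ?_).symm
          intro t ht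
          rw [hI0 t (fun hh => ht ⟨hh.1, hh.2.le⟩)]
          simp
  have key : ∀ r ∈ Set.Ioo (0:ℝ) T, ∀ s ∈ Set.Ioo (0:ℝ) r,
      ENNReal.ofReal (ψ r s * |a r| * |a s|) = Φl r s := by
    intro r hr s hs
    have hIntprod : Integrable (fun t => (|a r| * |a s|) * (Q (r, t) * Q (s, t))) volume := by
      apply Integrable.const_mul
      exact integrable_of_integrableOn_of_zero measurableSet_Ioc
        (core3 r s hs.1 hs.2 hr.2).1 (hQQzr r s)
    have h1 : Φl r s = ∫⁻ t, ENNReal.ofReal ((|a r| * |a s|) * (Q (r, t) * Q (s, t))) := by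
      apply lintegral_congr
      intro t
      show ENNReal.ofReal (|a r| * Q (r, t)) * ENNReal.ofReal (|a s| * Q (s, t)) = _
      rw [← ENNReal.ofReal_mul (mul_nonneg (abs_nonneg _) (hQnn _))]
      congr 1
      ring
    have h2 : ∫⁻ t, ENNReal.ofReal ((|a r| * |a s|) * (Q (r, t) * Q (s, t)))
        = ENNReal.ofReal (∫ t, (|a r| * |a s|) * (Q (r, t) * Q (s, t)) ∂volume) :=
      (ofReal_integral_eq_lintegral_ofReal hIntprod
        (Filter.Eventually.of_forall (fun t =>
          mul_nonneg (mul_nonneg (abs_nonneg _) (abs_nonneg _))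
            (mul_nonneg (hQnn _) (hQnn _))))).symm
    have h3 : ∫ t, (|a r| * |a s|) * (Q (r, t) * Q (s, t)) ∂volume
        = (|a r| * |a s|) * ψ r s := integral_const_mul _ _
    rw [h1, h2, h3]
    congr 1
    ring
  have hGof : ∀ r ∈ Set.Ioo (0:ℝ) T,
      ENNReal.ofReal (G r) = ∫⁻ s in Set.Iio r, Φl r s := by
    intro r hr
    have hIntInd : Integrable
        ((Set.Ioc (0:ℝ) r).indicator (fun s => ψ r s * |a r| * |a s|)) volume :=
      (integrable_indicator_iff measurableSet_Ioc).2 (hIntOn4 r hr)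
    have h1 : ENNReal.ofReal (G r)
        = ∫⁻ s, ENNReal.ofReal
            ((Set.Ioc (0:ℝ) r).indicator (fun s' => ψ r s' * |a r| * |a s'|) s) :=
      ofReal_integral_eq_lintegral_ofReal hIntInd
        (Filter.Eventually.of_forall (fun s => Set.indicator_nonneg
          (fun s' _ => mul_nonneg (mul_nonneg (hψnn r s') (abs_nonneg _)) (abs_nonneg _)) s))
    have h2 : ∀ s, ENNReal.ofReal
        ((Set.Ioc (0:ℝ) r).indicator (fun s' => ψ r s' * |a r| * |a s'|) s)
        = (Set.Ioc (0:ℝ) r).indicator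
            (fun s' => ENNReal.ofReal (ψ r s' * |a r| * |a s'|)) s := by
      intro s
      by_cases h : s ∈ Set.Ioc (0:ℝ) r
      · rw [Set.indicator_of_mem h, Set.indicator_of_mem h]
      · rw [Set.indicator_of_notMem h, Set.indicator_of_notMem h, ENNReal.ofReal_zero]
    have h4 : ∫⁻ s in Set.Ioc (0:ℝ) r, ENNReal.ofReal (ψ r s * |a r| * |a s|)
        = ∫⁻ s in Set.Ioc (0:ℝ) r, Φl r s := by
      apply lintegral_congr_ae
      filter_upwards [haeIoo' r] with s hs
      exact key r hr s hs
    have h5 : ∫⁻ s in Set.Ioc (0:ℝ) r, Φl r s = ∫⁻ s in Set.Iio r, Φl r s := by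
      have hIoo : ∫⁻ s in Set.Ioc (0:ℝ) r, Φl r s = ∫⁻ s in Set.Ioo (0:ℝ) r, Φl r s :=
        (setLIntegral_congr (Ioo_ae_eq_Ioc (a := (0:ℝ)) (b := r))).symm
      have hunion : Set.Iio r = Set.Iic (0:ℝ) ∪ Set.Ioo 0 r := by
        ext x
        simp only [Set.mem_Iio, Set.mem_union, Set.mem_Iic, Set.mem_Ioo]
        constructor
        · intro h
          rcases le_or_gt x 0 with h' | h'
          · exact Or.inl h'
          · exact Or.inr ⟨h', h⟩
        · intro h
          rcases h with h | h
          · exact lt_of_le_of_lt h hr.1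
          · exact h.2
      have hdisj : Disjoint (Set.Iic (0:ℝ)) (Set.Ioo 0 r) :=
        Set.disjoint_left.mpr (fun x hx hx' => absurd hx'.1 (not_lt.2 hx))
      have hzero : ∫⁻ s in Set.Iic (0:ℝ), Φl r s = 0 := by
        have h := setLIntegral_congr_fun_ae (μ := volume) (f := fun s => Φl r s)
          (g := fun _ => (0:ℝ≥0∞)) measurableSet_Iic
          (Filter.Eventually.of_forall (fun s hs =>
            hΦ0s r s (fun hh => absurd (lt_of_lt_of_le hh.1 hs) (lt_irrefl 0))))
        rw [h, lintegral_zero]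
      rw [hIoo, hunion, lintegral_union measurableSet_Ioo hdisj, hzero, zero_add]
    calc ENNReal.ofReal (G r)
        = ∫⁻ s, ENNReal.ofReal
            ((Set.Ioc (0:ℝ) r).indicator (fun s' => ψ r s' * |a r| * |a s'|) s) := h1
      _ = ∫⁻ s, (Set.Ioc (0:ℝ) r).indicator
            (fun s' => ENNReal.ofReal (ψ r s' * |a r| * |a s'|)) s := lintegral_congr h2
      _ = ∫⁻ s in Set.Ioc (0:ℝ) r, ENNReal.ofReal (ψ r s * |a r| * |a s|) :=
          lintegral_indicator measurableSet_Ioc _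
      _ = ∫⁻ s in Set.Iio r, Φl r s := h4.trans h5
  have E5 : ENNReal.ofReal (∫ r in (0:ℝ)..T, ∫ s in (0:ℝ)..r,
        (∫ u in (0:ℝ)..(min r s), |K' r u| * |K' s u|) * |a r| * |a s|)
      = ∫⁻ r, ∫⁻ s in Set.Iio r, Φl r s := by
    rw [intervalIntegral.integral_of_le hT.le]
    have hIntG : Integrable G (volume.restrict (Set.Ioc (0:ℝ) T)) :=
      ((intervalIntegrable_iff_integrableOn_Ioc_of_le hT.le).1 part5).congr hGcong.symm
    calc ENNReal.ofReal (∫ r in Set.Ioc (0:ℝ) T, ∫ s in (0:ℝ)..r,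
          (∫ u in (0:ℝ)..(min r s), |K' r u| * |K' s u|) * |a r| * |a s|)
        = ENNReal.ofReal (∫ r in Set.Ioc (0:ℝ) T, G r) := by
          rw [integral_congr_ae hGcong]
      _ = ∫⁻ r in Set.Ioc (0:ℝ) T, ENNReal.ofReal (G r) :=
          ofReal_integral_eq_lintegral_ofReal hIntG
            (Filter.Eventually.of_forall (fun r => hGnn r))
      _ = ∫⁻ r in Set.Ioc (0:ℝ) T, ∫⁻ s in Set.Iio r, Φl r s := by
          apply lintegral_congr_ae
          filter_upwards [haeIoo] with r hr
          exact hGof r hr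
      _ = ∫⁻ r, ∫⁻ s in Set.Iio r, Φl r s := by
          refine (lintegral_eq_setLIntegral_of_zero measurableSet_Ioc ?_).symm
          intro r hrm
          have h : (fun s => Φl r s) = fun _ => (0:ℝ≥0∞) := by
            funext s
            exact hΦ0 r (fun hh => hrm ⟨hh.1, hh.2.le⟩) s
          rw [h]
          simp
  -- final computation
  have hLHSnn : 0 ≤ ∫ t in (0:ℝ)..T, (∫ r in t..T, |a r| * |K' r t|) ^ 2 :=
    intervalIntegral.integral_nonneg hT.le (fun t _ => sq_nonneg _)
  have hRHSnn : 0 ≤ ∫ r in (0:ℝ)..T, ∫ s in (0:ℝ)..r,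
      (∫ u in (0:ℝ)..(min r s), |K' r u| * |K' s u|) * |a r| * |a s| := by
    apply intervalIntegral.integral_nonneg hT.le
    intro r hrm
    apply intervalIntegral.integral_nonneg hrm.1
    intro s hsm
    apply mul_nonneg (mul_nonneg _ (abs_nonneg _)) (abs_nonneg _)
    apply intervalIntegral.integral_nonneg (le_min hrm.1 hsm.1)
    intro u _
    exact mul_nonneg (abs_nonneg _) (abs_nonneg _)
  have hfinal : ENNReal.ofReal (∫ t in (0:ℝ)..T, (∫ r in t..T, |a r| * |K' r t|) ^ 2)
      = 2 * ENNReal.ofReal (∫ r in (0:ℝ)..T, ∫ s in (0:ℝ)..r,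
          (∫ u in (0:ℝ)..(min r s), |K' r u| * |K' s u|) * |a r| * |a s|) := by
    rw [E4, E1, E2, E5]
  refine ⟨part1, part2, part3, part4, part5, ?_⟩
  have h := congrArg ENNReal.toReal hfinal
  rw [ENNReal.toReal_ofReal hLHSnn, ENNReal.toReal_mul, ENNReal.toReal_ofReal hRHSnn] at h
  simpa using h
end

section
/- For every x ∈ ℝⁿ, u(t,x) converges to g(x) as t → T from the left; that is, u satisfies the terminal condition u(T,x) = g(x) when extended by continuity. -/
open Real MeasureTheory intervalIntegral
open scoped NNReal ENNReal

lemma aux_map_affine (c s : ℝ) (hs : 0 < s) :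
    MeasurePreserving (fun z : ℝ => c + s * z) (s.toNNReal • volume) volume := by
  constructor
  · exact (measurable_const_mul s).const_add c
  · have h1 : (fun z : ℝ => c + s * z) = (fun y : ℝ => c + y) ∘ (fun z : ℝ => s * z) := rfl
    rw [h1, Measure.map_smul,
      ← Measure.map_map (measurable_const_add c) (measurable_const_mul s)]
    rw [show (fun z : ℝ => s * z) = (s * ·) from rfl, Real.map_volume_mul_left hs.ne',
      Measure.map_smul, (measurePreserving_add_left volume c).map_eq]
    rw [ENNReal.smul_def, smul_smul]
    have h2 : ((s.toNNReal : ℝ≥0∞) * ENNReal.ofReal |s⁻¹|) = 1 := by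
      show ENNReal.ofReal s * ENNReal.ofReal |s⁻¹| = 1
      rw [← ENNReal.ofReal_mul hs.le, abs_of_pos (inv_pos.mpr hs),
        mul_inv_cancel₀ hs.ne', ENNReal.ofReal_one]
    rw [h2, one_smul]

lemma aux_pi_smul (n : ℕ) (ρ : Fin n → ℝ≥0) :
    Measure.pi (fun j => (ρ j : ℝ≥0) • (volume : Measure ℝ))
      = (∏ j, ρ j) • Measure.pi (fun _ : Fin n => (volume : Measure ℝ)) := by
  refine Measure.pi_eq fun s hs => ?_
  simp only [Measure.smul_apply, Measure.pi_pi, smul_eq_mul, ENNReal.smul_def,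
    ENNReal.coe_finset_prod]
  rw [← Finset.prod_mul_distrib]

noncomputable def auxEquiv (c s : ℝ) (hs : s ≠ 0) : ℝ ≃ᵐ ℝ where
  toFun := fun z => c + s * z
  invFun := fun y => (y - c) / s
  left_inv := fun z => by field_simp; ring
  right_inv := fun y => by field_simp; ring
  measurable_toFun := (measurable_const_mul s).const_add c
  measurable_invFun := (measurable_id.sub measurable_const).div_const s

lemma aux_change (n : ℕ) (c s : Fin n → ℝ) (hs : ∀ j, 0 < s j) (F : (Fin n → ℝ) → ℝ) :
    ∫ y : Fin n → ℝ, F y = (∏ j, s j) * ∫ z : Fin n → ℝ, F (fun j => c j + s j * z j) := by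
  have hmp : MeasurePreserving (fun (z : Fin n → ℝ) (j : Fin n) => c j + s j * z j)
      (Measure.pi fun j => (s j).toNNReal • volume) (Measure.pi fun _ => volume) :=
    measurePreserving_pi _ _ fun j => aux_map_affine (c j) (s j) (hs j)
  have hemb : MeasurableEmbedding (fun (z : Fin n → ℝ) (j : Fin n) => c j + s j * z j) :=
    (MeasurableEquiv.piCongrRight
      (fun j => auxEquiv (c j) (s j) (hs j).ne')).measurableEmbedding
  calc ∫ y : Fin n → ℝ, F y = ∫ y, F y ∂(Measure.pi fun _ => volume) := by rw [← volume_pi]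
    _ = ∫ z, F (fun j => c j + s j * z j) ∂(Measure.pi fun j => (s j).toNNReal • volume) :=
        (hmp.integral_comp hemb F).symm
    _ = (∏ j, s j) * ∫ z : Fin n → ℝ, F (fun j => c j + s j * z j) := by
        rw [aux_pi_smul, integral_smul_nnreal_measure, ← volume_pi]
        rw [NNReal.smul_def, NNReal.coe_prod]
        congr 1
        exact Finset.prod_congr rfl fun j _ => Real.coe_toNNReal _ (hs j).le

lemma aux_kernel (σ zj : ℝ) (hσ : 0 < σ) :
    Real.sqrt σ * ((2 * Real.pi * σ) ^ (-(1:ℝ)/2)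
        * Real.exp (-(Real.sqrt σ * zj) ^ 2 / (2 * σ)))
      = (2 * Real.pi) ^ (-(1:ℝ)/2) * Real.exp (-zj ^ 2 / 2) := by
  have h2π : (0:ℝ) < 2 * Real.pi := by positivity
  have hsq : Real.sqrt σ ≠ 0 := by positivity
  have harg : -(Real.sqrt σ * zj) ^ 2 / (2 * σ) = -zj ^ 2 / 2 := by
    rw [mul_pow, Real.sq_sqrt hσ.le]; field_simp
  rw [harg, Real.mul_rpow h2π.le hσ.le,
    show (-(1:ℝ)/2) = -(1/2 : ℝ) by norm_num,
    Real.rpow_neg hσ.le, ← Real.sqrt_eq_rpow]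
  field_simp

lemma aux_gauss_one :
    ∫ z : ℝ, (2 * Real.pi) ^ (-(1:ℝ)/2) * Real.exp (-z ^ 2 / 2) = 1 := by
  rw [MeasureTheory.integral_const_mul]
  have h1 : ∀ z : ℝ, -z ^ 2 / 2 = -(2⁻¹ * z ^ 2) := fun z => by ring
  simp_rw [h1]
  have h2 := integral_gaussian 2⁻¹
  simp_rw [neg_mul] at h2 ⊢
  rw [h2]
  have h3 : Real.pi / 2⁻¹ = 2 * Real.pi := by ring
  rw [h3, show (-(1:ℝ)/2) = -(1/2 : ℝ) by norm_num,
    Real.rpow_neg (by positivity), ← Real.sqrt_eq_rpow]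
  exact inv_mul_cancel₀ (by positivity)

lemma aux_rearrange {n : ℕ} (a b c : Fin n → ℝ) (G : ℝ) (h : ∀ j, a j * b j = c j) :
    (∏ j, a j) * (G * ∏ j, b j) = G * ∏ j, c j := by
  calc (∏ j, a j) * (G * ∏ j, b j) = G * ((∏ j, a j) * ∏ j, b j) := by ring
    _ = G * ∏ j, a j * b j := by rw [← Finset.prod_mul_distrib]
    _ = G * ∏ j, c j := by rw [Finset.prod_congr rfl fun j _ => h j]


/-- For every `x ∈ ℝⁿ`, `u(t,x) → g(x)` as `t → T⁻`: the Feynman–Kac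
function `u` attains the terminal condition `u(T,x) = g(x)` by continuity. -/
theorem feynman_kac_terminal_condition
    (n : ℕ) (hn : 1 ≤ n) (t₀ T : ℝ) (ht₀ : 0 ≤ t₀) (hT : t₀ < T)
    (R : Fin n → ℝ → ℝ)
    (hRsmooth : ∀ j, ContDiffOn ℝ 1 (R j) (Set.Icc t₀ T))
    (hRnonneg : ∀ j, ∀ t ∈ Set.Icc t₀ T, 0 ≤ R j t)
    (hRmono : ∀ j, StrictMonoOn (R j) (Set.Icc t₀ T))
    (hRT : ∀ j, 0 < R j T)
    (r : Fin n → ℝ → ℝ) (A₁ f : ℝ → ℝ)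
    (hr : ∀ j, ContinuousOn (r j) (Set.Icc t₀ T))
    (hA₁ : ContinuousOn A₁ (Set.Icc t₀ T)) (hf : ContinuousOn f (Set.Icc t₀ T))
    (Cr CA Cf : ℝ) (hrB : ∀ j, ∀ t ∈ Set.Icc t₀ T, |r j t| ≤ Cr)
    (hA₁B : ∀ t ∈ Set.Icc t₀ T, |A₁ t| ≤ CA) (hfB : ∀ t ∈ Set.Icc t₀ T, |f t| ≤ Cf)
    (g : (Fin n → ℝ) → ℝ) (hg : Continuous g)
    (c' lam' : ℝ) (hc' : 0 < c') (hlam' : 0 < lam')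
    (hlam'' : ∀ j, lam' < (16 * R j T)⁻¹)
    (hgrowth : ∀ x : Fin n → ℝ, |g x| ≤ c' * Real.exp (lam' * ∑ j, (x j) ^ 2))
    (u : ℝ → (Fin n → ℝ) → ℝ)
    (hu : ∀ t : ℝ, t₀ ≤ t → t < T → ∀ x : Fin n → ℝ,
      u t x = -(∫ s in t..T, Real.exp (∫ ρ in s..t, A₁ ρ) * f s)
        + Real.exp (-(∫ s in t..T, A₁ s)) *
          ∫ y : Fin n → ℝ, g y *
            ∏ j, (2 * Real.pi * (R j T - R j t)) ^ (-(1 : ℝ) / 2) *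
              Real.exp (-(x j - (∫ s in t..T, r j s) - y j) ^ 2
                / (2 * (R j T - R j t)))) :
    ∀ x : Fin n → ℝ,
      Filter.Tendsto (fun t => u t x) (nhdsWithin T (Set.Iio T)) (nhds (g x)) := by
  intro x
  have htmem : t₀ ∈ Set.Icc t₀ T := ⟨le_refl _, hT.le⟩
  have hTmem : T ∈ Set.Icc t₀ T := ⟨hT.le, le_refl T⟩
  have hCr : 0 ≤ Cr := (abs_nonneg _).trans (hrB ⟨0, hn⟩ t₀ htmem)
  have hCA : 0 ≤ CA := (abs_nonneg _).trans (hA₁B t₀ htmem)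
  have hCf : 0 ≤ Cf := (abs_nonneg _).trans (hfB t₀ htmem)
  have hIoo : Set.Ioo t₀ T ∈ nhdsWithin T (Set.Iio T) :=
    Ioo_mem_nhdsLT_of_mem ⟨hT, le_refl T⟩
  have htendTt : Filter.Tendsto (fun t => T - t) (nhdsWithin T (Set.Iio T)) (nhds 0) := by
    have h1 : Filter.Tendsto (fun t : ℝ => T - t) (nhds T) (nhds (T - T)) :=
      (continuous_const.sub continuous_id).tendsto T
    simpa using h1.mono_left nhdsWithin_le_nhds
  -- `m j t → 0`
  have hm0 : ∀ j : Fin n, Filter.Tendsto (fun t => ∫ s in t..T, r j s)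
      (nhdsWithin T (Set.Iio T)) (nhds 0) := by
    intro j
    apply squeeze_zero_norm'
    · filter_upwards [hIoo] with t ht
      have hb : ∀ s ∈ Set.uIoc t T, ‖r j s‖ ≤ Cr := by
        intro s hs
        rw [Set.uIoc_of_le ht.2.le] at hs
        exact hrB j s ⟨ht.1.le.trans hs.1.le, hs.2⟩
      calc ‖∫ s in t..T, r j s‖ ≤ Cr * |T - t| :=
            intervalIntegral.norm_integral_le_of_norm_le_const hb
        _ = Cr * (T - t) := by rw [abs_of_nonneg (sub_nonneg.mpr ht.2.le)]
    · simpa using htendTt.const_mul Cr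
  -- `R j t → R j T`
  have hl_eq : nhdsWithin T (Set.Iio T) = nhdsWithin T (Set.Ioo t₀ T) := by
    rw [nhdsWithin_restrict'' (Set.Iio T) hIoo,
      Set.inter_eq_self_of_subset_right Set.Ioo_subset_Iio_self]
  have hσ0 : ∀ j : Fin n, Filter.Tendsto (fun t => R j T - R j t)
      (nhdsWithin T (Set.Iio T)) (nhds 0) := by
    intro j
    have hc : Filter.Tendsto (R j) (nhdsWithin T (Set.Icc t₀ T)) (nhds (R j T)) :=
      (hRsmooth j).continuousOn T hTmem
    have hc2 : Filter.Tendsto (R j) (nhdsWithin T (Set.Iio T)) (nhds (R j T)) := by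
      rw [hl_eq]
      exact hc.mono_left (nhdsWithin_mono T Set.Ioo_subset_Icc_self)
    have := (tendsto_const_nhds (x := R j T)).sub hc2
    simpa using this
  have hsq0 : ∀ j : Fin n, Filter.Tendsto (fun t => Real.sqrt (R j T - R j t))
      (nhdsWithin T (Set.Iio T)) (nhds 0) := by
    intro j
    have := (Real.continuous_sqrt.tendsto 0).comp (hσ0 j)
    simpa [Function.comp_def, Real.sqrt_zero] using this
  have hc0 : ∀ j : Fin n, Filter.Tendsto (fun t => x j - ∫ s in t..T, r j s)
      (nhdsWithin T (Set.Iio T)) (nhds (x j)) := by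
    intro j
    simpa using tendsto_const_nhds.sub (hm0 j)
  -- the two scalar factors
  have tendsto_a : Filter.Tendsto (fun t => ∫ s in t..T, Real.exp (∫ ρ in s..t, A₁ ρ) * f s)
      (nhdsWithin T (Set.Iio T)) (nhds 0) := by
    apply squeeze_zero_norm'
    · filter_upwards [hIoo] with t ht
      have hb : ∀ s ∈ Set.uIoc t T,
          ‖Real.exp (∫ ρ in s..t, A₁ ρ) * f s‖ ≤ Real.exp (CA * (T - t₀)) * Cf := by
        intro s hs
        rw [Set.uIoc_of_le ht.2.le] at hs
        have hsmem : s ∈ Set.Icc t₀ T := ⟨ht.1.le.trans hs.1.le, hs.2⟩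
        have hIb : |∫ ρ in s..t, A₁ ρ| ≤ CA * (T - t₀) := by
          have hb2 : ∀ ρ ∈ Set.uIoc s t, ‖A₁ ρ‖ ≤ CA := by
            intro ρ hρ
            rw [Set.uIoc_comm, Set.uIoc_of_le hs.1.le] at hρ
            exact hA₁B ρ ⟨ht.1.le.trans hρ.1.le, hρ.2.trans hsmem.2⟩
          calc |∫ ρ in s..t, A₁ ρ| ≤ CA * |t - s| :=
                intervalIntegral.norm_integral_le_of_norm_le_const hb2
            _ ≤ CA * (T - t₀) := by
                apply mul_le_mul_of_nonneg_left _ hCA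
                rw [abs_of_nonpos (by linarith [hs.1])]
                linarith [ht.1, hs.2, hs.1]
        rw [norm_mul, Real.norm_eq_abs, Real.norm_eq_abs, abs_of_pos (Real.exp_pos _)]
        exact mul_le_mul (Real.exp_le_exp.mpr ((le_abs_self _).trans hIb))
          (hfB s hsmem) (abs_nonneg _) (Real.exp_pos _).le
      calc ‖∫ s in t..T, Real.exp (∫ ρ in s..t, A₁ ρ) * f s‖
          ≤ Real.exp (CA * (T - t₀)) * Cf * |T - t| :=
            intervalIntegral.norm_integral_le_of_norm_le_const hb
        _ = Real.exp (CA * (T - t₀)) * Cf * (T - t) := by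
            rw [abs_of_nonneg (sub_nonneg.mpr ht.2.le)]
    · simpa using htendTt.const_mul (Real.exp (CA * (T - t₀)) * Cf)
  have tendsto_b : Filter.Tendsto (fun t => Real.exp (-(∫ s in t..T, A₁ s)))
      (nhdsWithin T (Set.Iio T)) (nhds 1) := by
    have hA0 : Filter.Tendsto (fun t => ∫ s in t..T, A₁ s)
        (nhdsWithin T (Set.Iio T)) (nhds 0) := by
      apply squeeze_zero_norm'
      · filter_upwards [hIoo] with t ht
        have hb : ∀ s ∈ Set.uIoc t T, ‖A₁ s‖ ≤ CA := by
          intro s hs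
          rw [Set.uIoc_of_le ht.2.le] at hs
          exact hA₁B s ⟨ht.1.le.trans hs.1.le, hs.2⟩
        calc ‖∫ s in t..T, A₁ s‖ ≤ CA * |T - t| :=
              intervalIntegral.norm_integral_le_of_norm_le_const hb
          _ = CA * (T - t) := by rw [abs_of_nonneg (sub_nonneg.mpr ht.2.le)]
      · simpa using htendTt.const_mul CA
    have hA0' : Filter.Tendsto (fun t => -(∫ s in t..T, A₁ s))
        (nhdsWithin T (Set.Iio T)) (nhds 0) := by simpa using hA0.neg
    have := (Real.continuous_exp.tendsto 0).comp hA0'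
    simpa [Function.comp_def] using this
  -- dominated convergence setup
  set F : ℝ → (Fin n → ℝ) → ℝ := fun t z =>
    g (fun j => (x j - ∫ s in t..T, r j s) + Real.sqrt (R j T - R j t) * z j) *
      ∏ j, (2 * Real.pi) ^ (-(1:ℝ)/2) * Real.exp (-(z j) ^ 2 / 2) with hF
  have hKcont : Continuous fun z : Fin n → ℝ =>
      ∏ j, (2 * Real.pi) ^ (-(1:ℝ)/2) * Real.exp (-(z j) ^ 2 / 2) := by
    apply continuous_finset_prod
    intro j _
    exact continuous_const.mul (Real.continuous_exp.comp
      ((((continuous_apply j).pow 2).neg).div_const 2))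
  have ha0 : (0:ℝ) ≤ (2 * Real.pi) ^ (-(1:ℝ)/2) := Real.rpow_nonneg (by positivity) _
  have hK0 : ∀ z : Fin n → ℝ,
      0 ≤ ∏ j, (2 * Real.pi) ^ (-(1:ℝ)/2) * Real.exp (-(z j) ^ 2 / 2) :=
    fun z => Finset.prod_nonneg fun j _ => mul_nonneg ha0 (Real.exp_pos _).le
  have hDCT : Filter.Tendsto (fun t => ∫ z : Fin n → ℝ, F t z) (nhdsWithin T (Set.Iio T))
      (nhds (∫ z : Fin n → ℝ, g x *
        ∏ j, (2 * Real.pi) ^ (-(1:ℝ)/2) * Real.exp (-(z j) ^ 2 / 2))) := by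
    apply MeasureTheory.tendsto_integral_filter_of_dominated_convergence
      (bound := fun z : Fin n → ℝ =>
        c' * Real.exp (2 * lam' * ∑ j, (|x j| + Cr * (T - t₀)) ^ 2) *
          ((2 * Real.pi) ^ (-(1:ℝ)/2)) ^ n * ∏ j, Real.exp (-(3/8 : ℝ) * (z j) ^ 2))
    · -- measurability
      refine Filter.Eventually.of_forall fun t => ?_
      rw [hF]
      exact ((hg.comp (continuous_pi fun j =>
        continuous_const.add (continuous_const.mul (continuous_apply j)))).mul
          hKcont).aestronglyMeasurable
    · -- bound
      filter_upwards [hIoo] with t ht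
      refine Filter.Eventually.of_forall fun z => ?_
      have htIcc : t ∈ Set.Icc t₀ T := ⟨ht.1.le, ht.2.le⟩
      have hσpos : ∀ j : Fin n, 0 < R j T - R j t :=
        fun j => sub_pos.mpr (hRmono j htIcc hTmem ht.2)
      have hσle : ∀ j : Fin n, R j T - R j t ≤ R j T := fun j => by
        have := hRnonneg j t htIcc; linarith
      have hmb : ∀ j : Fin n, |∫ s in t..T, r j s| ≤ Cr * (T - t₀) := by
        intro j
        have hb : ∀ s ∈ Set.uIoc t T, ‖r j s‖ ≤ Cr := by
          intro s hs
          rw [Set.uIoc_of_le ht.2.le] at hs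
          exact hrB j s ⟨ht.1.le.trans hs.1.le, hs.2⟩
        calc |∫ s in t..T, r j s| ≤ Cr * |T - t| :=
              intervalIntegral.norm_integral_le_of_norm_le_const hb
          _ ≤ Cr * (T - t₀) := by
              rw [abs_of_nonneg (sub_nonneg.mpr ht.2.le)]
              exact mul_le_mul_of_nonneg_left (by linarith [ht.1]) hCr
      have hcb : ∀ j : Fin n, |x j - ∫ s in t..T, r j s| ≤ |x j| + Cr * (T - t₀) := by
        intro j
        have h1 : |x j - ∫ s in t..T, r j s| ≤ |x j| + |∫ s in t..T, r j s| := by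
          simpa [sub_eq_add_neg] using abs_add_le (x j) (-(∫ s in t..T, r j s))
        exact h1.trans (add_le_add_right (hmb j) _)
      have hmain : ∀ j : Fin n,
          Real.exp (lam' * ((x j - ∫ s in t..T, r j s) +
              Real.sqrt (R j T - R j t) * z j) ^ 2) * Real.exp (-(z j) ^ 2 / 2)
            ≤ Real.exp (2 * lam' * (|x j| + Cr * (T - t₀)) ^ 2) *
              Real.exp (-(3/8 : ℝ) * (z j) ^ 2) := by
        intro j
        rw [← Real.exp_add, ← Real.exp_add]
        apply Real.exp_le_exp.mpr
        have hs2 : Real.sqrt (R j T - R j t) ^ 2 = R j T - R j t :=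
          Real.sq_sqrt (hσpos j).le
        have hq : ((x j - ∫ s in t..T, r j s) + Real.sqrt (R j T - R j t) * z j) ^ 2
            ≤ 2 * (x j - ∫ s in t..T, r j s) ^ 2 + 2 * (R j T - R j t) * (z j) ^ 2 := by
          nlinarith [sq_nonneg ((x j - ∫ s in t..T, r j s) -
            Real.sqrt (R j T - R j t) * z j), hs2, sq_nonneg (z j)]
        have hKsq : (x j - ∫ s in t..T, r j s) ^ 2 ≤ (|x j| + Cr * (T - t₀)) ^ 2 := by
          rw [← sq_abs (x j - ∫ s in t..T, r j s)]
          exact pow_le_pow_left₀ (abs_nonneg _) (hcb j) 2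
        have hls : lam' * (R j T - R j t) ≤ 1/16 := by
          have h2 : lam' * R j T < 1/16 := by
            have h3 := hlam'' j
            rw [inv_eq_one_div, lt_div_iff₀ (by have := hRT j; positivity)] at h3
            linarith
          have h1 := mul_le_mul_of_nonneg_left (hσle j) hlam'.le
          linarith
        nlinarith [mul_le_mul_of_nonneg_left hq hlam'.le,
          mul_le_mul_of_nonneg_left hKsq (by positivity : (0:ℝ) ≤ 2 * lam'),
          mul_le_mul_of_nonneg_right hls (sq_nonneg (z j)), sq_nonneg (z j)]
      rw [hF]
      simp only []
      rw [Real.norm_eq_abs, abs_mul, abs_of_nonneg (hK0 z)]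
      have h1 : |g (fun j => (x j - ∫ s in t..T, r j s) +
            Real.sqrt (R j T - R j t) * z j)|
          ≤ c' * Real.exp (lam' * ∑ j, ((x j - ∫ s in t..T, r j s) +
            Real.sqrt (R j T - R j t) * z j) ^ 2) :=
        hgrowth _
      calc |g (fun j => (x j - ∫ s in t..T, r j s) + Real.sqrt (R j T - R j t) * z j)| *
            ∏ j, (2 * Real.pi) ^ (-(1:ℝ)/2) * Real.exp (-(z j) ^ 2 / 2)
          ≤ (c' * Real.exp (lam' * ∑ j, ((x j - ∫ s in t..T, r j s) +
              Real.sqrt (R j T - R j t) * z j) ^ 2)) *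
            ∏ j, (2 * Real.pi) ^ (-(1:ℝ)/2) * Real.exp (-(z j) ^ 2 / 2) :=
            mul_le_mul_of_nonneg_right h1 (hK0 z)
        _ = (c' * ((2 * Real.pi) ^ (-(1:ℝ)/2)) ^ n) *
            ∏ j, (Real.exp (lam' * ((x j - ∫ s in t..T, r j s) +
              Real.sqrt (R j T - R j t) * z j) ^ 2) * Real.exp (-(z j) ^ 2 / 2)) := by
            rw [Finset.prod_mul_distrib (f := fun j : Fin n => Real.exp (lam' *
              ((x j - ∫ s in t..T, r j s) + Real.sqrt (R j T - R j t) * z j) ^ 2)),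
              Finset.prod_mul_distrib (f := fun _ : Fin n => (2 * Real.pi) ^ (-(1:ℝ)/2)),
              Finset.mul_sum, Real.exp_sum, Finset.prod_const, Finset.card_univ,
              Fintype.card_fin]
            ring
        _ ≤ (c' * ((2 * Real.pi) ^ (-(1:ℝ)/2)) ^ n) *
            ∏ j, (Real.exp (2 * lam' * (|x j| + Cr * (T - t₀)) ^ 2) *
              Real.exp (-(3/8 : ℝ) * (z j) ^ 2)) := by
            apply mul_le_mul_of_nonneg_left _ (by positivity)
            exact Finset.prod_le_prod (fun j _ => by positivity) (fun j _ => hmain j)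
        _ = c' * Real.exp (2 * lam' * ∑ j, (|x j| + Cr * (T - t₀)) ^ 2) *
            ((2 * Real.pi) ^ (-(1:ℝ)/2)) ^ n * ∏ j, Real.exp (-(3/8 : ℝ) * (z j) ^ 2) := by
            rw [Finset.prod_mul_distrib, Finset.mul_sum, Real.exp_sum]
            ring
    · -- integrability of the bound
      apply Integrable.const_mul
      exact Integrable.fintype_prod
        (f := fun (j : Fin n) (y : ℝ) => Real.exp (-(3/8 : ℝ) * y ^ 2))
        fun j => integrable_exp_neg_mul_sq (by norm_num)
    · -- pointwise limit
      refine Filter.Eventually.of_forall fun z => ?_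
      rw [hF]
      simp only []
      have hφ : Filter.Tendsto (fun t => (fun j => (x j - ∫ s in t..T, r j s) +
          Real.sqrt (R j T - R j t) * z j)) (nhdsWithin T (Set.Iio T)) (nhds x) := by
        rw [tendsto_pi_nhds]
        intro j
        have := (hc0 j).add ((hsq0 j).mul_const (z j))
        simpa using this
      exact Filter.Tendsto.mul_const _ ((hg.tendsto x).comp hφ)
  have hlimval : (∫ z : Fin n → ℝ, g x *
      ∏ j, (2 * Real.pi) ^ (-(1:ℝ)/2) * Real.exp (-(z j) ^ 2 / 2)) = g x := by
    rw [MeasureTheory.integral_const_mul, volume_pi,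
      MeasureTheory.integral_fintype_prod_eq_prod (ι := Fin n)
        (f := fun (_ : Fin n) (y : ℝ) => (2 * Real.pi) ^ (-(1:ℝ)/2) * Real.exp (-y ^ 2 / 2))]
    simp [aux_gauss_one]
  -- change of variables identity
  have key : ∀ t ∈ Set.Ioo t₀ T,
      (∫ y : Fin n → ℝ, g y * ∏ j, (2 * Real.pi * (R j T - R j t)) ^ (-(1:ℝ)/2) *
        Real.exp (-(x j - (∫ s in t..T, r j s) - y j) ^ 2 / (2 * (R j T - R j t))))
        = ∫ z : Fin n → ℝ, F t z := by
    intro t ht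
    have htIcc : t ∈ Set.Icc t₀ T := ⟨ht.1.le, ht.2.le⟩
    have hσpos : ∀ j : Fin n, 0 < R j T - R j t :=
      fun j => sub_pos.mpr (hRmono j htIcc hTmem ht.2)
    have hspos : ∀ j : Fin n, 0 < Real.sqrt (R j T - R j t) :=
      fun j => Real.sqrt_pos.mpr (hσpos j)
    rw [aux_change n (fun j => x j - ∫ s in t..T, r j s)
        (fun j => Real.sqrt (R j T - R j t)) hspos
        (fun y => g y * ∏ j, (2 * Real.pi * (R j T - R j t)) ^ (-(1:ℝ)/2) *
          Real.exp (-(x j - (∫ s in t..T, r j s) - y j) ^ 2 / (2 * (R j T - R j t))))]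
    rw [← MeasureTheory.integral_const_mul]
    refine MeasureTheory.integral_congr_ae (Filter.Eventually.of_forall fun z => ?_)
    rw [hF]
    simp only []
    apply aux_rearrange
    intro j
    have harg : -(x j - (∫ s in t..T, r j s) -
        ((x j - ∫ s in t..T, r j s) + Real.sqrt (R j T - R j t) * z j)) ^ 2
        = -(Real.sqrt (R j T - R j t) * z j) ^ 2 := by ring
    rw [harg]
    exact aux_kernel _ _ (hσpos j)
  -- assembling
  have hDCT' : Filter.Tendsto (fun t => ∫ z : Fin n → ℝ, F t z)
      (nhdsWithin T (Set.Iio T)) (nhds (g x)) := by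
    rw [hlimval] at hDCT; exact hDCT
  have hfinal := tendsto_a.neg.add (tendsto_b.mul hDCT')
  have hev : (fun t => -(∫ s in t..T, Real.exp (∫ ρ in s..t, A₁ ρ) * f s)
      + Real.exp (-(∫ s in t..T, A₁ s)) * ∫ z : Fin n → ℝ, F t z)
      =ᶠ[nhdsWithin T (Set.Iio T)] (fun t => u t x) := by
    filter_upwards [hIoo] with t ht
    rw [hu t ht.1.le ht.2 x, key t ht]
  exact Filter.Tendsto.congr' hev (by simpa using hfinal)
end

section
/- There exist constants M > 0 and 0 < λ < min_{1≤j≤n} (4 R_j(T))^{−1} such that |u(t,x)| ≤ M exp(λ|x|²) for all (t,x) ∈ [t₀,T) × ℝⁿ. -/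
open Real MeasureTheory intervalIntegral

set_option maxHeartbeats 1000000

/-- One-dimensional Gaussian estimate: integrability and bound for
`exp(λ' y²) · (2πσ)^{-1/2} exp(-(z-y)²/(2σ))`. -/
lemma gauss_aux (σ lam' z : ℝ) (hσ : 0 < σ) (hl : 0 < lam') (hls : lam' * σ ≤ 1/4) :
    Integrable (fun y : ℝ => Real.exp (lam' * y ^ 2) *
      ((2 * Real.pi * σ) ^ (-(1 : ℝ)/2) * Real.exp (-(z - y) ^ 2 / (2 * σ)))) ∧
    (∫ y : ℝ, Real.exp (lam' * y ^ 2) *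
      ((2 * Real.pi * σ) ^ (-(1 : ℝ)/2) * Real.exp (-(z - y) ^ 2 / (2 * σ))))
      ≤ 2 * Real.exp (2 * lam' * z ^ 2) := by
  have ha : 0 < 1/(2*σ) - lam' := by
    rw [sub_pos, lt_div_iff₀ (by linarith : (0:ℝ) < 2*σ)]
    nlinarith
  set a : ℝ := 1/(2*σ) - lam' with ha_def
  have h2σa : 1/2 ≤ 2*σ*a := by
    rw [ha_def]; field_simp; nlinarith
  have h2σa' : 0 < 2*σ*a := by positivity
  have hα : 1/(2*σ) = a + lam' := by rw [ha_def]; ring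
  clear_value a
  set m : ℝ := z/(2*σ*a) with hm_def
  set E : ℝ := lam' * z^2 / (2*σ*a) with hE_def
  have hm2 : m = z * (a + lam') / a := by
    rw [hm_def, div_eq_div_iff h2σa'.ne' ha.ne', ← hα]
    field_simp
  have hE2eq : E = lam' * z^2 * (a + lam') / a := by
    rw [hE_def, div_eq_div_iff h2σa'.ne' ha.ne', ← hα]
    field_simp
  clear_value m E
  have hπσ : 0 < 2 * Real.pi * σ := by positivity
  have key : ∀ y : ℝ, Real.exp (lam' * y ^ 2) *
      ((2 * Real.pi * σ) ^ (-(1 : ℝ)/2) * Real.exp (-(z - y) ^ 2 / (2 * σ)))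
      = ((2 * Real.pi * σ) ^ (-(1 : ℝ)/2) * Real.exp E) * Real.exp (-a * (y - m) ^ 2) := by
    intro y
    have hexp : lam' * y ^ 2 + (-(z - y) ^ 2 / (2 * σ)) = E + (-a * (y - m) ^ 2) := by
      rw [hm2, hE2eq, div_eq_mul_one_div (-(z - y) ^ 2) (2 * σ), hα]
      field_simp
      ring
    calc Real.exp (lam' * y ^ 2) *
        ((2 * Real.pi * σ) ^ (-(1 : ℝ)/2) * Real.exp (-(z - y) ^ 2 / (2 * σ)))
        = (2 * Real.pi * σ) ^ (-(1 : ℝ)/2) *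
          Real.exp (lam' * y ^ 2 + (-(z - y) ^ 2 / (2 * σ))) := by
          rw [Real.exp_add]; ring
      _ = (2 * Real.pi * σ) ^ (-(1 : ℝ)/2) * Real.exp (E + (-a * (y - m) ^ 2)) := by
          rw [hexp]
      _ = ((2 * Real.pi * σ) ^ (-(1 : ℝ)/2) * Real.exp E) * Real.exp (-a * (y - m) ^ 2) := by
          rw [Real.exp_add]; ring
  have hint : Integrable (fun y : ℝ => ((2 * Real.pi * σ) ^ (-(1 : ℝ)/2) * Real.exp E) *
      Real.exp (-a * (y - m) ^ 2)) := by
    have : Integrable (fun y : ℝ => Real.exp (-a * y ^ 2)) := integrable_exp_neg_mul_sq ha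
    exact (this.comp_sub_right m).const_mul _
  have hfun : (fun y : ℝ => Real.exp (lam' * y ^ 2) *
      ((2 * Real.pi * σ) ^ (-(1 : ℝ)/2) * Real.exp (-(z - y) ^ 2 / (2 * σ))))
      = fun y : ℝ => ((2 * Real.pi * σ) ^ (-(1 : ℝ)/2) * Real.exp E) *
        Real.exp (-a * (y - m) ^ 2) := funext key
  constructor
  · rw [hfun]; exact hint
  · rw [hfun]
    rw [MeasureTheory.integral_const_mul]
    have htrans : (∫ y : ℝ, Real.exp (-a * (y - m) ^ 2)) = ∫ y : ℝ, Real.exp (-a * y ^ 2) :=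
      MeasureTheory.integral_sub_right_eq_self (fun y => Real.exp (-a * y ^ 2)) m
    rw [htrans, integral_gaussian]
    -- now bound ((2πσ)^(-1/2) * exp E) * √(π/a) ≤ 2 * exp(2 λ' z²)
    have hrpow : (2 * Real.pi * σ) ^ (-(1 : ℝ)/2) = (Real.sqrt (2 * Real.pi * σ))⁻¹ := by
      rw [show (-(1:ℝ)/2) = -(1/2) by ring, Real.rpow_neg hπσ.le, ← Real.sqrt_eq_rpow]
    have hK : (2 * Real.pi * σ) ^ (-(1 : ℝ)/2) * Real.sqrt (Real.pi / a) ≤ 2 := by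
      rw [hrpow]
      have h1 : (Real.sqrt (2 * Real.pi * σ))⁻¹ * Real.sqrt (Real.pi / a)
          = Real.sqrt ((Real.pi / a) / (2 * Real.pi * σ)) := by
        rw [Real.sqrt_div (by positivity) (2 * Real.pi * σ)]
        ring
      rw [h1]
      have h2 : (Real.pi / a) / (2 * Real.pi * σ) = 1 / (2 * σ * a) := by
        field_simp
      rw [h2]
      have h3 : 1 / (2 * σ * a) ≤ 4 := by
        rw [div_le_iff₀ h2σa']; nlinarith
      calc Real.sqrt (1 / (2 * σ * a)) ≤ Real.sqrt 4 := Real.sqrt_le_sqrt h3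
        _ = 2 := by
          rw [show (4:ℝ) = 2^2 by norm_num, Real.sqrt_sq (by norm_num : (0:ℝ) ≤ 2)]
    have hE2 : E ≤ 2 * lam' * z ^ 2 := by
      rw [hE_def, div_le_iff₀ h2σa']
      have h4 := mul_le_mul_of_nonneg_left h2σa
        (show (0:ℝ) ≤ 2 * (lam' * z ^ 2) by positivity)
      nlinarith [h4]
    have hEexp : Real.exp E ≤ Real.exp (2 * lam' * z ^ 2) := Real.exp_le_exp.mpr hE2
    have hKnn : 0 ≤ (2 * Real.pi * σ) ^ (-(1 : ℝ)/2) := Real.rpow_nonneg hπσ.le _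
    calc (2 * Real.pi * σ) ^ (-(1 : ℝ)/2) * Real.exp E * Real.sqrt (Real.pi / a)
        = ((2 * Real.pi * σ) ^ (-(1 : ℝ)/2) * Real.sqrt (Real.pi / a)) * Real.exp E := by ring
      _ ≤ 2 * Real.exp (2 * lam' * z ^ 2) := by
          apply mul_le_mul hK hEexp (Real.exp_pos _).le (by norm_num)

/-- There exist `M > 0` and `0 < λ < min_j (4 R_j(T))⁻¹` such that
`|u(t,x)| ≤ M exp(λ|x|²)` for all `(t,x) ∈ [t₀,T) × ℝⁿ`. -/
theorem feynman_kac_growth_bound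
    (n : ℕ) (hn : 1 ≤ n) (t₀ T : ℝ) (ht₀ : 0 ≤ t₀) (hT : t₀ < T)
    (R : Fin n → ℝ → ℝ)
    (hRsmooth : ∀ j, ContDiffOn ℝ 1 (R j) (Set.Icc t₀ T))
    (hRnonneg : ∀ j, ∀ t ∈ Set.Icc t₀ T, 0 ≤ R j t)
    (hRmono : ∀ j, StrictMonoOn (R j) (Set.Icc t₀ T))
    (hRT : ∀ j, 0 < R j T)
    (r : Fin n → ℝ → ℝ) (A₁ f : ℝ → ℝ)
    (hr : ∀ j, ContinuousOn (r j) (Set.Icc t₀ T))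
    (hA₁ : ContinuousOn A₁ (Set.Icc t₀ T)) (hf : ContinuousOn f (Set.Icc t₀ T))
    (Cr CA Cf : ℝ) (hrB : ∀ j, ∀ t ∈ Set.Icc t₀ T, |r j t| ≤ Cr)
    (hA₁B : ∀ t ∈ Set.Icc t₀ T, |A₁ t| ≤ CA) (hfB : ∀ t ∈ Set.Icc t₀ T, |f t| ≤ Cf)
    (g : (Fin n → ℝ) → ℝ) (hg : Continuous g)
    (c' lam' : ℝ) (hc' : 0 < c') (hlam' : 0 < lam')
    (hlam'' : ∀ j, lam' < (16 * R j T)⁻¹)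
    (hgrowth : ∀ x : Fin n → ℝ, |g x| ≤ c' * Real.exp (lam' * ∑ j, (x j) ^ 2))
    (u : ℝ → (Fin n → ℝ) → ℝ)
    (hu : ∀ t : ℝ, t₀ ≤ t → t < T → ∀ x : Fin n → ℝ,
      u t x = -(∫ s in t..T, Real.exp (∫ ρ in s..t, A₁ ρ) * f s)
        + Real.exp (-(∫ s in t..T, A₁ s)) *
          ∫ y : Fin n → ℝ, g y *
            ∏ j, (2 * Real.pi * (R j T - R j t)) ^ (-(1 : ℝ) / 2) *
              Real.exp (-(x j - (∫ s in t..T, r j s) - y j) ^ 2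
                / (2 * (R j T - R j t)))) :
    ∃ M lam : ℝ, 0 < M ∧ 0 < lam ∧ (∀ j, lam < (4 * R j T)⁻¹) ∧
      ∀ t : ℝ, t₀ ≤ t → t < T → ∀ x : Fin n → ℝ,
        |u t x| ≤ M * Real.exp (lam * ∑ j, (x j) ^ 2) := by
  have ht₀T : t₀ ∈ Set.Icc t₀ T := ⟨le_refl _, hT.le⟩
  have hTmem : T ∈ Set.Icc t₀ T := ⟨hT.le, le_refl _⟩
  have hCr : 0 ≤ Cr := le_trans (abs_nonneg _) (hrB ⟨0, hn⟩ t₀ ht₀T)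
  have hCA : 0 ≤ CA := le_trans (abs_nonneg _) (hA₁B t₀ ht₀T)
  have hCf : 0 ≤ Cf := le_trans (abs_nonneg _) (hfB t₀ ht₀T)
  set B : ℝ := Cr * (T - t₀) with hB_def
  have hB : 0 ≤ B := mul_nonneg hCr (by linarith)
  set K : ℝ := Real.exp (CA * (T - t₀)) with hK_def
  have hK0 : 0 < K := Real.exp_pos _
  set M : ℝ := Cf * (T - t₀) * K + K * (c' * (2 * Real.exp (4 * lam' * B ^ 2)) ^ n) + 1
    with hM_def
  refine ⟨M, 4 * lam', ?_, by linarith, ?_, ?_⟩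
  · have h1 : 0 ≤ Cf * (T - t₀) * K := by
      apply mul_nonneg (mul_nonneg hCf (by linarith)) hK0.le
    have h2 : 0 ≤ K * (c' * (2 * Real.exp (4 * lam' * B ^ 2)) ^ n) := by positivity
    rw [hM_def]; linarith
  · intro j
    have hR := hRT j
    have h16 : lam' * (16 * R j T) < 1 := by
      have hpos : 0 < 16 * R j T := by linarith
      have := mul_lt_mul_of_pos_right (hlam'' j) hpos
      rwa [inv_mul_cancel₀ hpos.ne'] at this
    have hpos4 : 0 < 4 * R j T := by linarith
    have hlt : 4 * lam' * (4 * R j T) < 1 := by nlinarith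
    calc 4 * lam' = 4 * lam' * (4 * R j T) * (4 * R j T)⁻¹ := by field_simp
      _ < 1 * (4 * R j T)⁻¹ := mul_lt_mul_of_pos_right hlt (inv_pos.mpr hpos4)
      _ = (4 * R j T)⁻¹ := one_mul _
  · intro t ht1 ht2 x
    have htmem : t ∈ Set.Icc t₀ T := ⟨ht1, ht2.le⟩
    rw [hu t ht1 ht2 x]
    -- bound the first term
    have hA_int_bound : ∀ s ∈ Set.Icc t₀ T, |∫ ρ in s..t, A₁ ρ| ≤ CA * (T - t₀) := by
      intro s hs
      have h1 : |∫ ρ in s..t, A₁ ρ| ≤ CA * |t - s| := by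
        rw [← Real.norm_eq_abs]
        apply intervalIntegral.norm_integral_le_of_norm_le_const
        intro ρ hρ
        rw [Set.mem_uIoc] at hρ
        rw [Real.norm_eq_abs]
        apply hA₁B
        rcases hρ with ⟨h1, h2⟩ | ⟨h1, h2⟩ <;>
          exact ⟨by linarith [hs.1, hs.2], by linarith [hs.1, hs.2]⟩
      have h2 : |t - s| ≤ T - t₀ := by
        rw [abs_sub_le_iff]
        constructor <;> linarith [hs.1, hs.2]
      calc |∫ ρ in s..t, A₁ ρ| ≤ CA * |t - s| := h1
        _ ≤ CA * (T - t₀) := by apply mul_le_mul_of_nonneg_left h2 hCA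
    have hT1 : |∫ s in t..T, Real.exp (∫ ρ in s..t, A₁ ρ) * f s| ≤ Cf * (T - t₀) * K := by
      have hstep : |∫ s in t..T, Real.exp (∫ ρ in s..t, A₁ ρ) * f s| ≤ (K * Cf) * |T - t| := by
        rw [← Real.norm_eq_abs]
        apply intervalIntegral.norm_integral_le_of_norm_le_const
        intro s hs
        rw [Set.mem_uIoc] at hs
        have hsmem : s ∈ Set.Icc t₀ T := by
          rcases hs with ⟨h1, h2⟩ | ⟨h1, h2⟩ <;> exact ⟨by linarith, by linarith⟩
        have hA := hA_int_bound s hsmem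
        have hexp : Real.exp (∫ ρ in s..t, A₁ ρ) ≤ K := by
          rw [hK_def]
          apply Real.exp_le_exp.mpr
          calc (∫ ρ in s..t, A₁ ρ) ≤ |∫ ρ in s..t, A₁ ρ| := le_abs_self _
            _ ≤ CA * (T - t₀) := hA
        rw [Real.norm_eq_abs, abs_mul, Real.abs_exp]
        exact mul_le_mul hexp (hfB s hsmem) (abs_nonneg _) hK0.le
      have hTt : |T - t| ≤ T - t₀ := by rw [abs_of_nonneg (by linarith)]; linarith
      calc |∫ s in t..T, Real.exp (∫ ρ in s..t, A₁ ρ) * f s| ≤ (K * Cf) * |T - t| := hstep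
        _ ≤ (K * Cf) * (T - t₀) := by
            apply mul_le_mul_of_nonneg_left hTt (mul_nonneg hK0.le hCf)
        _ = Cf * (T - t₀) * K := by ring
    -- prefactor bound
    have hpre : Real.exp (-(∫ s in t..T, A₁ s)) ≤ K := by
      rw [hK_def]
      apply Real.exp_le_exp.mpr
      have h1 : |∫ s in t..T, A₁ s| ≤ CA * |T - t| := by
        rw [← Real.norm_eq_abs]
        apply intervalIntegral.norm_integral_le_of_norm_le_const
        intro s hs
        rw [Set.mem_uIoc] at hs
        rw [Real.norm_eq_abs]
        apply hA₁B
        rcases hs with ⟨h1, h2⟩ | ⟨h1, h2⟩ <;> exact ⟨by linarith, by linarith⟩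
      have hTt : |T - t| ≤ T - t₀ := by rw [abs_of_nonneg (by linarith)]; linarith
      calc -(∫ s in t..T, A₁ s) ≤ |∫ s in t..T, A₁ s| := neg_le_abs _
        _ ≤ CA * |T - t| := h1
        _ ≤ CA * (T - t₀) := mul_le_mul_of_nonneg_left hTt hCA
    -- per-coordinate data
    have hσpos0 : ∀ j, 0 < R j T - R j t := by
      intro j
      have := hRmono j htmem hTmem ht2
      linarith
    obtain ⟨c, hc_eq⟩ : ∃ c : Fin n → ℝ, ∀ j, c j = ∫ s in t..T, r j s :=
      ⟨_, fun _ => rfl⟩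
    obtain ⟨σ, hσj⟩ : ∃ σ : Fin n → ℝ, ∀ j, σ j = R j T - R j t :=
      ⟨_, fun _ => rfl⟩
    obtain ⟨z, hzj⟩ : ∃ z : Fin n → ℝ, ∀ j, z j = x j - c j :=
      ⟨_, fun _ => rfl⟩
    have hσpos : ∀ j, 0 < σ j := fun j => by rw [hσj]; exact hσpos0 j
    have hσle : ∀ j, σ j ≤ R j T := by
      intro j
      have := hRnonneg j t htmem
      rw [hσj]; linarith
    have hlσ : ∀ j, lam' * σ j ≤ 1/4 := by
      intro j
      have hR := hRT j
      have h16 : lam' * (16 * R j T) < 1 := by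
        have hpos : 0 < 16 * R j T := by linarith
        have := mul_lt_mul_of_pos_right (hlam'' j) hpos
        rwa [inv_mul_cancel₀ hpos.ne'] at this
      have h2 := mul_le_mul_of_nonneg_left (hσle j) hlam'.le
      calc lam' * σ j ≤ lam' * R j T := h2
        _ ≤ 1/16 := by nlinarith
        _ ≤ 1/4 := by norm_num
    have hcB : ∀ j, |c j| ≤ B := by
      intro j
      rw [hc_eq]
      have h1 : |∫ s in t..T, r j s| ≤ Cr * |T - t| := by
        rw [← Real.norm_eq_abs]
        apply intervalIntegral.norm_integral_le_of_norm_le_const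
        intro s hs
        rw [Set.mem_uIoc] at hs
        rw [Real.norm_eq_abs]
        apply hrB
        rcases hs with ⟨h1, h2⟩ | ⟨h1, h2⟩ <;> exact ⟨by linarith, by linarith⟩
      have hTt : |T - t| ≤ T - t₀ := by rw [abs_of_nonneg (by linarith)]; linarith
      calc |∫ s in t..T, r j s| ≤ Cr * |T - t| := h1
        _ ≤ Cr * (T - t₀) := mul_le_mul_of_nonneg_left hTt hCr
    -- 1D Gaussian lemma per j
    have haux := fun j => gauss_aux (σ j) lam' (z j) (hσpos j) hlam' (hlσ j)
    obtain ⟨h, hh_def⟩ : ∃ h : Fin n → ℝ → ℝ, ∀ j y, h j y = Real.exp (lam' * y ^ 2) *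
        ((2 * Real.pi * σ j) ^ (-(1 : ℝ)/2) * Real.exp (-(z j - y) ^ 2 / (2 * σ j))) :=
      ⟨_, fun _ _ => rfl⟩
    have hhfun : ∀ j, h j = fun y => Real.exp (lam' * y ^ 2) *
        ((2 * Real.pi * σ j) ^ (-(1 : ℝ)/2) * Real.exp (-(z j - y) ^ 2 / (2 * σ j))) :=
      fun j => funext (hh_def j)
    have hint : ∀ j, Integrable (h j) := fun j => by rw [hhfun j]; exact (haux j).1
    have hintG : Integrable (fun y : Fin n → ℝ => ∏ j, h j (y j)) :=
      Integrable.fintype_prod hint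
    have hI : ∀ j, (∫ y : ℝ, h j y) ≤ 2 * Real.exp (2 * lam' * (z j) ^ 2) :=
      fun j => by simp only [hh_def]; exact (haux j).2
    have hkernel : ∀ j, ∀ w : ℝ,
        (2 * Real.pi * σ j) ^ (-(1 : ℝ)/2) * Real.exp (-(z j - w) ^ 2 / (2 * σ j))
        = (2 * Real.pi * (R j T - R j t)) ^ (-(1 : ℝ) / 2) *
          Real.exp (-(x j - (∫ s in t..T, r j s) - w) ^ 2 / (2 * (R j T - R j t))) := by
      intro j w
      rw [hσj, hzj, hc_eq]
    have hhnn : ∀ j, ∀ y : ℝ, 0 ≤ h j y := by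
      intro j y
      have h0 : (0:ℝ) ≤ (2 * Real.pi * σ j) ^ (-(1 : ℝ)/2) :=
        Real.rpow_nonneg (by nlinarith [hσpos j, Real.pi_pos]) _
      simp only [hh_def]
      exact mul_nonneg (Real.exp_pos _).le (mul_nonneg h0 (Real.exp_pos _).le)
    -- bound the big integral
    have hbig : |∫ y : Fin n → ℝ, g y *
        ∏ j, (2 * Real.pi * (R j T - R j t)) ^ (-(1 : ℝ) / 2) *
          Real.exp (-(x j - (∫ s in t..T, r j s) - y j) ^ 2 / (2 * (R j T - R j t)))|
        ≤ c' * ∏ j, ∫ y : ℝ, h j y := by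
      have hptwise : ∀ y : Fin n → ℝ, ‖g y *
          ∏ j, (2 * Real.pi * (R j T - R j t)) ^ (-(1 : ℝ) / 2) *
            Real.exp (-(x j - (∫ s in t..T, r j s) - y j) ^ 2 / (2 * (R j T - R j t)))‖
          ≤ c' * ∏ j, h j (y j) := by
        intro y
        have hprod_eq : c' * ∏ j, h j (y j)
            = (c' * Real.exp (lam' * ∑ j, (y j) ^ 2)) *
              ∏ j, (2 * Real.pi * (R j T - R j t)) ^ (-(1 : ℝ) / 2) *
                Real.exp (-(x j - (∫ s in t..T, r j s) - y j) ^ 2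
                  / (2 * (R j T - R j t))) := by
          calc c' * ∏ j, h j (y j)
              = c' * ∏ j, Real.exp (lam' * (y j) ^ 2) *
                ((2 * Real.pi * σ j) ^ (-(1 : ℝ)/2) *
                  Real.exp (-(z j - y j) ^ 2 / (2 * σ j))) := by
                simp only [hh_def]
            _ = (c' * Real.exp (lam' * ∑ j, (y j) ^ 2)) *
                ∏ j, (2 * Real.pi * σ j) ^ (-(1 : ℝ)/2) *
                  Real.exp (-(z j - y j) ^ 2 / (2 * σ j)) := by
                rw [Finset.prod_mul_distrib, Finset.mul_sum, Real.exp_sum]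
                ring
            _ = (c' * Real.exp (lam' * ∑ j, (y j) ^ 2)) *
                ∏ j, (2 * Real.pi * (R j T - R j t)) ^ (-(1 : ℝ) / 2) *
                  Real.exp (-(x j - (∫ s in t..T, r j s) - y j) ^ 2
                    / (2 * (R j T - R j t))) := by
                rw [Finset.prod_congr rfl (fun j _ => hkernel j (y j))]
        rw [hprod_eq, Real.norm_eq_abs, abs_mul]
        have hprodnn : 0 ≤ ∏ j, (2 * Real.pi * (R j T - R j t)) ^ (-(1 : ℝ) / 2) *
            Real.exp (-(x j - (∫ s in t..T, r j s) - y j) ^ 2 / (2 * (R j T - R j t))) := by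
          apply Finset.prod_nonneg
          intro j _
          have h1 : (0:ℝ) ≤ 2 * Real.pi * (R j T - R j t) := by
            nlinarith [hσpos0 j, Real.pi_pos]
          exact mul_nonneg (Real.rpow_nonneg h1 _) (Real.exp_pos _).le
        have habs : |∏ j, (2 * Real.pi * (R j T - R j t)) ^ (-(1 : ℝ) / 2) *
            Real.exp (-(x j - (∫ s in t..T, r j s) - y j) ^ 2 / (2 * (R j T - R j t)))|
            = ∏ j, (2 * Real.pi * (R j T - R j t)) ^ (-(1 : ℝ) / 2) *
              Real.exp (-(x j - (∫ s in t..T, r j s) - y j) ^ 2 / (2 * (R j T - R j t))) :=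
          abs_of_nonneg hprodnn
        rw [habs]
        apply mul_le_mul_of_nonneg_right (hgrowth y) hprodnn
      calc |∫ y : Fin n → ℝ, g y *
          ∏ j, (2 * Real.pi * (R j T - R j t)) ^ (-(1 : ℝ) / 2) *
            Real.exp (-(x j - (∫ s in t..T, r j s) - y j) ^ 2 / (2 * (R j T - R j t)))|
          ≤ ∫ y : Fin n → ℝ, ‖g y *
            ∏ j, (2 * Real.pi * (R j T - R j t)) ^ (-(1 : ℝ) / 2) *
              Real.exp (-(x j - (∫ s in t..T, r j s) - y j) ^ 2
                / (2 * (R j T - R j t)))‖ := by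
            rw [← Real.norm_eq_abs]
            exact MeasureTheory.norm_integral_le_integral_norm _
        _ ≤ ∫ y : Fin n → ℝ, c' * ∏ j, h j (y j) := by
            apply MeasureTheory.integral_mono_of_nonneg
            · exact Filter.Eventually.of_forall fun y => norm_nonneg _
            · exact hintG.const_mul c'
            · exact Filter.Eventually.of_forall hptwise
        _ = c' * ∫ y : Fin n → ℝ, ∏ j, h j (y j) :=
            MeasureTheory.integral_const_mul c' _
        _ = c' * ∏ j, ∫ y : ℝ, h j y := by
            rw [MeasureTheory.integral_fintype_prod_volume_eq_prod (ι := Fin n) h]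
    -- bound the product of 1D integrals
    have hprodbound : (∏ j, ∫ y : ℝ, h j y)
        ≤ (2 * Real.exp (4 * lam' * B ^ 2)) ^ n * Real.exp ((4 * lam') * ∑ j, (x j) ^ 2) := by
      have hstep : (∏ j, ∫ y : ℝ, h j y)
          ≤ ∏ j, (2 * Real.exp (4 * lam' * B ^ 2)) * Real.exp (4 * lam' * (x j) ^ 2) := by
        apply Finset.prod_le_prod
        · intro j _
          apply MeasureTheory.integral_nonneg
          intro y
          exact hhnn j y
        · intro j _
          have hz2 : (z j) ^ 2 ≤ 2 * (x j) ^ 2 + 2 * B ^ 2 := by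
            obtain ⟨hc1, hc2⟩ := abs_le.mp (hcB j)
            rw [hzj]
            nlinarith [sq_nonneg (x j + c j)]
          have h2 : 2 * lam' * (z j) ^ 2 ≤ 4 * lam' * B ^ 2 + 4 * lam' * (x j) ^ 2 := by
            nlinarith
          calc (∫ y : ℝ, h j y) ≤ 2 * Real.exp (2 * lam' * (z j) ^ 2) := hI j
            _ ≤ 2 * Real.exp (4 * lam' * B ^ 2 + 4 * lam' * (x j) ^ 2) := by
                have h3 := Real.exp_le_exp.mpr h2
                linarith
            _ = (2 * Real.exp (4 * lam' * B ^ 2)) * Real.exp (4 * lam' * (x j) ^ 2) := by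
                rw [Real.exp_add]; ring
      calc (∏ j, ∫ y : ℝ, h j y)
          ≤ ∏ j, (2 * Real.exp (4 * lam' * B ^ 2)) * Real.exp (4 * lam' * (x j) ^ 2) := hstep
        _ = (2 * Real.exp (4 * lam' * B ^ 2)) ^ n * Real.exp ((4 * lam') * ∑ j, (x j) ^ 2) := by
            rw [Finset.prod_mul_distrib, Finset.prod_const, ← Real.exp_sum, Finset.mul_sum]
            simp [Finset.card_univ]
    -- combine
    have hexp1 : 1 ≤ Real.exp ((4 * lam') * ∑ j, (x j) ^ 2) := by
      apply Real.one_le_exp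
      apply mul_nonneg (by linarith)
      apply Finset.sum_nonneg
      intro j _
      exact sq_nonneg _
    set Ex : ℝ := Real.exp ((4 * lam') * ∑ j, (x j) ^ 2) with hEx_def
    clear_value Ex
    have hbig2 : Real.exp (-(∫ s in t..T, A₁ s)) * |∫ y : Fin n → ℝ, g y *
        ∏ j, (2 * Real.pi * (R j T - R j t)) ^ (-(1 : ℝ) / 2) *
          Real.exp (-(x j - (∫ s in t..T, r j s) - y j) ^ 2 / (2 * (R j T - R j t)))|
        ≤ K * (c' * (2 * Real.exp (4 * lam' * B ^ 2)) ^ n) * Ex := by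
      have h1 : |∫ y : Fin n → ℝ, g y *
          ∏ j, (2 * Real.pi * (R j T - R j t)) ^ (-(1 : ℝ) / 2) *
            Real.exp (-(x j - (∫ s in t..T, r j s) - y j) ^ 2 / (2 * (R j T - R j t)))|
          ≤ c' * ((2 * Real.exp (4 * lam' * B ^ 2)) ^ n * Ex) := by
        calc _ ≤ c' * ∏ j, ∫ y : ℝ, h j y := hbig
          _ ≤ c' * ((2 * Real.exp (4 * lam' * B ^ 2)) ^ n * Ex) :=
              mul_le_mul_of_nonneg_left hprodbound hc'.le
      calc Real.exp (-(∫ s in t..T, A₁ s)) * |∫ y : Fin n → ℝ, g y *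
          ∏ j, (2 * Real.pi * (R j T - R j t)) ^ (-(1 : ℝ) / 2) *
            Real.exp (-(x j - (∫ s in t..T, r j s) - y j) ^ 2 / (2 * (R j T - R j t)))|
          ≤ K * (c' * ((2 * Real.exp (4 * lam' * B ^ 2)) ^ n * Ex)) := by
            apply mul_le_mul hpre h1 (abs_nonneg _) hK0.le
        _ = K * (c' * (2 * Real.exp (4 * lam' * B ^ 2)) ^ n) * Ex := by ring
    have hfinal : Cf * (T - t₀) * K + K * (c' * (2 * Real.exp (4 * lam' * B ^ 2)) ^ n) * Ex
        ≤ M * Ex := by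
      have hP : 0 ≤ Cf * (T - t₀) * K :=
        mul_nonneg (mul_nonneg hCf (by linarith)) hK0.le
      have hPE : Cf * (T - t₀) * K ≤ Cf * (T - t₀) * K * Ex :=
        le_mul_of_one_le_right hP hexp1
      have hMexp : M * Ex = Cf * (T - t₀) * K * Ex
          + K * (c' * (2 * Real.exp (4 * lam' * B ^ 2)) ^ n) * Ex + Ex := by
        rw [hM_def]; ring
      rw [hMexp]
      linarith [hPE, hexp1]
    calc |-(∫ s in t..T, Real.exp (∫ ρ in s..t, A₁ ρ) * f s)
          + Real.exp (-(∫ s in t..T, A₁ s)) * ∫ y : Fin n → ℝ, g y *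
            ∏ j, (2 * Real.pi * (R j T - R j t)) ^ (-(1 : ℝ) / 2) *
              Real.exp (-(x j - (∫ s in t..T, r j s) - y j) ^ 2 / (2 * (R j T - R j t)))|
        ≤ |-(∫ s in t..T, Real.exp (∫ ρ in s..t, A₁ ρ) * f s)|
          + |Real.exp (-(∫ s in t..T, A₁ s)) * ∫ y : Fin n → ℝ, g y *
            ∏ j, (2 * Real.pi * (R j T - R j t)) ^ (-(1 : ℝ) / 2) *
              Real.exp (-(x j - (∫ s in t..T, r j s) - y j) ^ 2
                / (2 * (R j T - R j t)))| := abs_add_le _ _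
      _ ≤ Cf * (T - t₀) * K + K * (c' * (2 * Real.exp (4 * lam' * B ^ 2)) ^ n) * Ex := by
          rw [abs_neg, abs_mul, Real.abs_exp]
          exact add_le_add hT1 hbig2
      _ ≤ M * Ex := hfinal
end
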